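/- arXiv:1706.09066 — 4 statements merged into one kernel-verified Lean document; each statement's English description precedes it below -/
import Mathlib

section
/- Let ℓ ≥ 3 be an integer and let G be a digraph. For all vertices u,u_1,u_2 ∈ V(G), all integers ℓ_1,ℓ_2 with min{ℓ_1,ℓ_2} ≥ 1 and ℓ_1+ℓ_2 = ℓ, and every integer q with 0 ≤ q ≤ ℓ−1, let R(u,u_1,u_2,ℓ_1,ℓ_2,q) ⊆ 𝒮(u,u_1,u_2,ℓ_1,ℓ_2) be a subfamily that q-represents 𝒮(u,u_1,u_2,ℓ_1,ℓ_2). If G contains a good spindle, then there exist vertices u,u_1,u_2,v of G, integers ℓ_1,ℓ_2 with min{ℓ_1,ℓ_2} ≥ 1 and ℓ_1+ℓ_2 = ℓ, an integer q with 0 ≤ q ≤ ℓ−1, a set S ∈ R(u,u_1,u_2,ℓ_1,ℓ_2,q), a (u_1,v)-path P_1^v, and a (u_2,v)-path P_2^v such that V(P_1^v) ∩ V(P_2^v) = {v} and S ∩ (V(P_1^v) ∪ V(P_2^v)) = {u_1,u_2}. -/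
/-- `p` is a directed path: a nonempty list of pairwise distinct vertices in which
consecutive vertices are joined by arcs of the digraph with arc relation `A`. -/
def IsPath {V : Type*} (A : V → V → Prop) (p : List V) : Prop :=
  p ≠ [] ∧ p.Nodup ∧ p.Chain' A

/-- `p` is a directed `(u,v)`-path. -/
def IsPathFT {V : Type*} (A : V → V → Prop) (u v : V) (p : List V) : Prop :=
  IsPath A p ∧ p.head? = some u ∧ p.getLast? = some v

/-- The vertex set of a path, as a set. -/
def vset {V : Type*} (p : List V) : Set V := {x | x ∈ p}

/-- The digraph with arc relation `A` contains a subdivision of an `(l1,l2)`-spindle: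
two internally vertex-disjoint `(u,v)`-paths of lengths (numbers of arcs) at least
`l1` and at least `l2`, respectively. -/
def ContainsSpindle2 {V : Type*} (A : V → V → Prop) (l1 l2 : ℕ) : Prop :=
  ∃ u v p1 p2, IsPathFT A u v p1 ∧ IsPathFT A u v p2 ∧
    l1 + 1 ≤ p1.length ∧ l2 + 1 ≤ p2.length ∧ p1 ≠ p2 ∧
    ∀ x, x ∈ p1 → x ∈ p2 → x = u ∨ x = v

/-- `F'` `q`-represents `F` (with respect to the uniform matroid of rank `p + q`):
`F'` is a subfamily of `F` and for every `q`-element set `B` which is disjoint from some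
member of `F`, `B` is also disjoint from some member of `F'`. -/
def Represents {V : Type*} [DecidableEq V] (q : ℕ) (F' F : Set (Finset V)) : Prop :=
  F' ⊆ F ∧ ∀ B : Finset V, B.card = q →
    (∃ S ∈ F, S ∩ B = ∅) → ∃ S ∈ F', S ∩ B = ∅

/-- The family `𝒮(u,u1,u2,l1,l2)`: all vertex sets `X` of cardinality `l1 + l2 - 1`
such that the subdigraph induced by `X` contains a `(u,u1)`-path on `l1` vertices and
a `(u,u2)`-path on `l2` vertices meeting only at `u`. -/
def SpindleFam {V : Type*} (A : V → V → Prop) (u u1 u2 : V) (l1 l2 : ℕ) :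
    Set (Finset V) :=
  {X | X.card = l1 + l2 - 1 ∧ ∃ p1 p2,
    IsPathFT A u u1 p1 ∧ p1.length = l1 ∧ (∀ x ∈ p1, x ∈ X) ∧
    IsPathFT A u u2 p2 ∧ p2.length = l2 ∧ (∀ x ∈ p2, x ∈ X) ∧
    ∀ x, x ∈ p1 → x ∈ p2 → x = u}

section Helpers

variable {V : Type*}

lemma path_split (A : V → V → Prop) {a b y : V} {xs ys : List V}
    (h : IsPathFT A a b (xs ++ y :: ys)) :
    IsPathFT A a y (xs ++ [y]) ∧ IsPathFT A y b (y :: ys) := by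
  obtain ⟨⟨hne, hnd, hch⟩, hhd, hlast⟩ := h
  have hch2 := (List.isChain_split (c := y)).1 hch
  have hnd1 : (xs ++ [y]).Nodup := by
    refine List.Nodup.sublist ?_ hnd
    exact List.Sublist.append_left (by simp) xs
  have hnd2 : (y :: ys).Nodup := by
    refine List.Nodup.sublist ?_ hnd
    exact List.sublist_append_right xs _
  constructor
  · refine ⟨⟨by simp, hnd1, hch2.1⟩, ?_, by simp⟩
    rw [← hhd]
    cases xs <;> simp
  · refine ⟨⟨by simp, hnd2, hch2.2⟩, by simp, ?_⟩
    rw [← hlast]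
    exact (List.getLast?_append_of_ne_nil xs (by simp)).symm

lemma path_glue (A : V → V → Prop) {a b c : V} {p q : List V}
    (hp : IsPathFT A a b p) (hq : IsPathFT A b c (b :: q))
    (hd : ∀ x ∈ p, x ∉ q) :
    IsPathFT A a c (p ++ q) := by
  obtain ⟨⟨hne, hnd, hch⟩, hhd, hlast⟩ := hp
  obtain ⟨⟨_, hnd2, hch2⟩, _, hlast2⟩ := hq
  have hbq : ∀ y ∈ q.head?, A b y := (List.isChain_cons.1 hch2).1
  have hlastb : p.getLast? = some b := hlast
  refine ⟨⟨by simp [hne], ?_, ?_⟩, ?_, ?_⟩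
  · rw [List.nodup_append]
    exact ⟨hnd, hnd2.of_cons, fun x hx y hy hxy => hd x hx (hxy ▸ hy)⟩
  · refine List.isChain_append.2 ?_
    refine ⟨hch, hch2.tail, ?_⟩
    intro x hx y hy
    rw [hlastb] at hx
    simp at hx
    subst hx
    exact hbq y hy
  · rw [List.head?_append_of_ne_nil _ hne]
    exact hhd
  · cases q with
    | nil =>
      simp only [List.append_nil]
      rw [hlastb]
      simpa using hlast2
    | cons z zs =>
      rw [List.getLast?_append_of_ne_nil p (by simp)]
      rw [← hlast2]
      simp

lemma exists_last_split {P : V → Prop} [DecidablePred P] {L : List V}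
    (h : ∃ x ∈ L, P x) :
    ∃ xs x ys, L = xs ++ x :: ys ∧ P x ∧ ∀ y ∈ ys, ¬ P y := by
  induction L using List.reverseRecOn with
  | nil => simp at h
  | append_singleton as a ih =>
    by_cases ha : P a
    · exact ⟨as, a, [], by simp, ha, by simp⟩
    · obtain ⟨x, hx, hPx⟩ := h
      rw [List.mem_append] at hx
      have hx' : x ∈ as := by
        rcases hx with hx | hx
        · exact hx
        · simp at hx; subst hx; exact absurd hPx ha
      obtain ⟨xs, x', ys, heq, hPx', hys⟩ := ih ⟨x, hx', hPx⟩
      refine ⟨xs, x', ys ++ [a], by simp [heq], hPx', ?_⟩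
      intro y hy
      rcases List.mem_append.1 hy with hy | hy
      · exact hys y hy
      · simp at hy; subst hy; exact ha

lemma exists_min_subset [DecidableEq V] (B : Finset V) (key : V → ℕ) (n : ℕ)
    (hn : n ≤ B.card) :
    ∃ C : Finset V, C ⊆ B ∧ C.card = n ∧
      ∀ x ∈ C, ∀ y ∈ B, y ∉ C → key x ≤ key y := by
  induction n with
  | zero => exact ⟨∅, by simp, by simp, by simp⟩
  | succ m ih =>
    obtain ⟨C, hCB, hCcard, hCmin⟩ := ih (le_trans (Nat.le_succ m) hn)
    have hne : (B \ C).Nonempty := by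
      rw [← Finset.card_pos, Finset.card_sdiff_of_subset hCB, hCcard]
      omega
    obtain ⟨m0, hm0, hm0min⟩ := Finset.exists_min_image (B \ C) key hne
    rw [Finset.mem_sdiff] at hm0
    refine ⟨insert m0 C, ?_, ?_, ?_⟩
    · exact Finset.insert_subset hm0.1 hCB
    · rw [Finset.card_insert_of_notMem hm0.2, hCcard]
    · intro x hx y hy hyC
      have hyC' : y ∉ C := fun hy' => hyC (Finset.mem_insert_of_mem hy')
      rcases Finset.mem_insert.1 hx with hx | hx
      · subst hx
        exact hm0min y (Finset.mem_sdiff.2 ⟨hy, hyC'⟩)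
      · exact hCmin x hx y hy hyC'

lemma dropWhile_ne_append [DecidableEq V] {c d : List V} {x : V} (hc : x ∉ c) :
    (c ++ x :: d).dropWhile (fun z => z ≠ x) = x :: d := by
  induction c with
  | nil => simp [List.dropWhile]
  | cons a c ih =>
    have hax : a ≠ x := fun h => hc (h ▸ List.mem_cons_self)
    have hc' : x ∉ c := fun h => hc (List.mem_cons_of_mem a h)
    have h2 := ih hc'
    rw [List.cons_append, List.dropWhile_cons_of_pos (by simpa using hax)]
    exact h2

end Helpers
section Exchange

variable {V : Type*}

lemma cross_lemma (A : V → V → Prop) (l l1 l2 : ℕ) (hll : l1 + l2 = l)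
    (u v h1 h2 : V) {w1 w2 z1 z2 : V}
    (q1a q1b q2a q2b t1a t1b t2a t2b : List V) (S : Finset V)
    (huv : u ≠ v)
    (hq1 : IsPathFT A u w1 (q1a ++ h1 :: q1b)) (hq2 : IsPathFT A u w2 (q2a ++ h2 :: q2b))
    (ht1 : IsPathFT A z1 v (t1a ++ h1 :: t1b)) (ht2 : IsPathFT A z2 v (t2a ++ h2 :: t2b))
    (hlen1 : (q1a ++ h1 :: q1b).length = l1) (hlen2 : (q2a ++ h2 :: q2b).length = l2)
    (hS1 : ∀ x ∈ q1a ++ h1 :: q1b, x ∈ S) (hS2 : ∀ x ∈ q2a ++ h2 :: q2b, x ∈ S)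
    (ht1S : ∀ y ∈ t1b, y ∉ S) (ht2S : ∀ y ∈ t2b, y ∉ S)
    (hq12 : ∀ x ∈ q1a ++ h1 :: q1b, x ∈ q2a ++ h2 :: q2b → x = u)
    (ht12 : ∀ x ∈ t1a ++ h1 :: t1b, x ∈ t2a ++ h2 :: t2b → x = v)
    (hcount : l - 1 ≤ t1b.length + t2b.length)
    (hweave : t1a ≠ [] ∨ t2a ≠ []) :
    ∃ u' P1 P2, IsPathFT A u' v P1 ∧ IsPathFT A u' v P2 ∧ u' ≠ v ∧
      (∀ x ∈ P1, x ∈ P2 → x = u' ∨ x = v) ∧ l + 2 ≤ P1.length + P2.length ∧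
      P1.length + P2.length + 2 <
        l + (t1a ++ h1 :: t1b).length + (t2a ++ h2 :: t2b).length := by
  have hp1a : IsPathFT A u h1 (q1a ++ [h1]) := (path_split A hq1).1
  have hp1b : IsPathFT A h1 v (h1 :: t1b) := (path_split A ht1).2
  have hp2a : IsPathFT A u h2 (q2a ++ [h2]) := (path_split A hq2).1
  have hp2b : IsPathFT A h2 v (h2 :: t2b) := (path_split A ht2).2
  have hsub1 : ∀ x ∈ q1a ++ [h1], x ∈ S := by
    intro x hx
    apply hS1
    rcases List.mem_append.1 hx with hx | hx
    · exact List.mem_append.2 (Or.inl hx)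
    · simp at hx; subst hx; exact List.mem_append.2 (Or.inr (List.mem_cons_self))
  have hsub2 : ∀ x ∈ q2a ++ [h2], x ∈ S := by
    intro x hx
    apply hS2
    rcases List.mem_append.1 hx with hx | hx
    · exact List.mem_append.2 (Or.inl hx)
    · simp at hx; subst hx; exact List.mem_append.2 (Or.inr (List.mem_cons_self))
  have hP1 : IsPathFT A u v ((q1a ++ [h1]) ++ t1b) :=
    path_glue A hp1a hp1b (fun x hx hx' => ht1S x hx' (hsub1 x hx))
  have hP2 : IsPathFT A u v ((q2a ++ [h2]) ++ t2b) :=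
    path_glue A hp2a hp2b (fun x hx hx' => ht2S x hx' (hsub2 x hx))
  -- at least one of q1a, q2a is nonempty
  have hqa : 1 ≤ q1a.length + q2a.length := by
    by_contra hcon
    push_neg at hcon
    have h1a : q1a = [] := by
      cases q1a with
      | nil => rfl
      | cons _ _ => simp at hcon
    have h2a : q2a = [] := by
      cases q2a with
      | nil => rfl
      | cons _ _ => simp [h1a] at hcon
    have e1 : h1 = u := by
      have := hq1.2.1
      rw [h1a] at this
      simpa using this
    have e2 : h2 = u := by
      have := hq2.2.1
      rw [h2a] at this
      simpa using this
    have : u = v := by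
      apply ht12 u
      · rw [← e1]; exact List.mem_append.2 (Or.inr (List.mem_cons_self))
      · rw [← e2]; exact List.mem_append.2 (Or.inr (List.mem_cons_self))
    exact huv this
  -- disjointness
  have hdisj : ∀ x ∈ (q1a ++ [h1]) ++ t1b, x ∈ (q2a ++ [h2]) ++ t2b → x = u ∨ x = v := by
    intro x hx hx'
    rcases List.mem_append.1 hx with hx1 | hx1
    · -- x ∈ q1a ++ [h1] ⊆ S
      rcases List.mem_append.1 hx' with hx2 | hx2
      · left
        apply hq12 x
        · rcases List.mem_append.1 hx1 with h | h
          · exact List.mem_append.2 (Or.inl h)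
          · simp at h; subst h; exact List.mem_append.2 (Or.inr (List.mem_cons_self))
        · rcases List.mem_append.1 hx2 with h | h
          · exact List.mem_append.2 (Or.inl h)
          · simp at h; subst h; exact List.mem_append.2 (Or.inr (List.mem_cons_self))
      · exact absurd (hsub1 x hx1) (ht2S x hx2)
    · -- x ∈ t1b, not in S
      rcases List.mem_append.1 hx' with hx2 | hx2
      · exact absurd (hsub2 x hx2) (ht1S x hx1)
      · right
        apply ht12 x
        · exact List.mem_append.2 (Or.inr (List.mem_cons_of_mem _ hx1))
        · exact List.mem_append.2 (Or.inr (List.mem_cons_of_mem _ hx2))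
  refine ⟨u, (q1a ++ [h1]) ++ t1b, (q2a ++ [h2]) ++ t2b, hP1, hP2, huv, hdisj, ?_, ?_⟩
  · simp only [List.length_append, List.length_cons, List.length_singleton, List.length_nil]
    simp only [List.length_append, List.length_cons] at hlen1 hlen2
    omega
  · simp only [List.length_append, List.length_cons, List.length_singleton, List.length_nil]
    simp only [List.length_append, List.length_cons] at hlen1 hlen2
    have hta : 1 ≤ t1a.length + t2a.length := by
      rcases hweave with h | h
      · cases t1a with
        | nil => exact absurd rfl h
        | cons _ _ => simp; omega
      · cases t2a with
        | nil => exact absurd rfl h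
        | cons _ _ => simp; omega
    omega

lemma nest_lemma (A : V → V → Prop) (l lq : ℕ)
    (u v hX hY : V) {w zX zY : V}
    (qa qc qd xa xb ya yb : List V) (S : Finset V)
    (hq : IsPathFT A u w (qa ++ hX :: (qc ++ hY :: qd)))
    (htX : IsPathFT A zX v (xa ++ hX :: xb)) (htY : IsPathFT A zY v (ya ++ hY :: yb))
    (hlenq : (qa ++ hX :: (qc ++ hY :: qd)).length = lq) (hlq : lq + 1 ≤ l)
    (hS : ∀ x ∈ qa ++ hX :: (qc ++ hY :: qd), x ∈ S)
    (hxbS : ∀ y ∈ xb, y ∉ S) (hybS : ∀ y ∈ yb, y ∉ S)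
    (htXY : ∀ x ∈ xa ++ hX :: xb, x ∈ ya ++ hY :: yb → x = v)
    (hcount : l - 1 ≤ xb.length + yb.length)
    (hqa : qa ≠ [])
    (hXv : hX ≠ v) :
    ∃ u' P1 P2, IsPathFT A u' v P1 ∧ IsPathFT A u' v P2 ∧ u' ≠ v ∧
      (∀ x ∈ P1, x ∈ P2 → x = u' ∨ x = v) ∧ l + 2 ≤ P1.length + P2.length ∧
      P1.length + P2.length + 2 <
        l + (xa ++ hX :: xb).length + (ya ++ hY :: yb).length := by
  have hseg0 : IsPathFT A hX w (hX :: (qc ++ hY :: qd)) := (path_split A hq).2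
  have hseg0' : IsPathFT A hX w ((hX :: qc) ++ hY :: qd) := by
    simpa using hseg0
  have hseg : IsPathFT A hX hY ((hX :: qc) ++ [hY]) := (path_split A hseg0').1
  have hpYb : IsPathFT A hY v (hY :: yb) := (path_split A htY).2
  have hpXb : IsPathFT A hX v (hX :: xb) := (path_split A htX).2
  have hsubseg : ∀ x ∈ (hX :: qc) ++ [hY], x ∈ S := by
    intro x hx
    apply hS
    rcases List.mem_append.1 hx with hx | hx
    · rcases List.mem_cons.1 hx with hx | hx
      · subst hx; exact List.mem_append.2 (Or.inr (List.mem_cons_self))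
      · exact List.mem_append.2 (Or.inr (List.mem_cons_of_mem _
          (List.mem_append.2 (Or.inl hx))))
    · simp at hx; subst hx
      exact List.mem_append.2 (Or.inr (List.mem_cons_of_mem _
        (List.mem_append.2 (Or.inr (List.mem_cons_self)))))
  have hP1 : IsPathFT A hX v (((hX :: qc) ++ [hY]) ++ yb) :=
    path_glue A hseg hpYb (fun x hx hx' => hybS x hx' (hsubseg x hx))
  have hdisj : ∀ x ∈ ((hX :: qc) ++ [hY]) ++ yb, x ∈ hX :: xb → x = hX ∨ x = v := by
    intro x hx hx'
    rcases List.mem_cons.1 hx' with hx2 | hx2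
    · exact Or.inl hx2
    · -- x ∈ xb : x ∉ S
      rcases List.mem_append.1 hx with hx1 | hx1
      · exact absurd (hsubseg x hx1) (hxbS x hx2)
      · right
        apply htXY x
        · exact List.mem_append.2 (Or.inr (List.mem_cons_of_mem _ hx2))
        · exact List.mem_append.2 (Or.inr (List.mem_cons_of_mem _ hx1))
  refine ⟨hX, ((hX :: qc) ++ [hY]) ++ yb, hX :: xb, hP1, hpXb, hXv, hdisj, ?_, ?_⟩
  · simp only [List.length_append, List.length_cons, List.length_singleton, List.length_nil]
    omega
  · simp only [List.length_append, List.length_cons, List.length_singleton, List.length_nil]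
    simp only [List.length_append, List.length_cons] at hlenq
    have : 1 ≤ qa.length := by
      cases qa with
      | nil => exact absurd rfl hqa
      | cons _ _ => simp
    omega

end Exchange
section Utils

variable {V : Type*}

lemma mem_of_head?_eq {L : List V} {a : V} (h : L.head? = some a) : a ∈ L := by
  cases L with
  | nil => simp at h
  | cons x xs => simp at h; subst h; exact List.mem_cons_self

lemma mem_of_getLast?_eq {L : List V} {a : V} (h : L.getLast? = some a) : a ∈ L := by
  obtain ⟨hne, he⟩ := List.mem_getLast?_eq_getLast (show a ∈ L.getLast? from h)
  subst he
  exact List.getLast_mem hne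

lemma path_ne_of_two_le {A : V → V → Prop} {u v : V} {p : List V}
    (h : IsPathFT A u v p) (hlen : 2 ≤ p.length) : u ≠ v := by
  obtain ⟨⟨hne, hnd, _⟩, hhd, hlast⟩ := h
  cases p with
  | nil => simp at hlen
  | cons a rest =>
    cases rest with
    | nil => simp at hlen
    | cons b rest' =>
      have hu : u = a := by simpa using hhd.symm
      have hv : v ∈ b :: rest' := by
        apply mem_of_getLast?_eq
        rw [← hlast]
        exact (List.getLast?_append_of_ne_nil [a] (l₂ := b :: rest') (by simp)).symm
      have : a ∉ b :: rest' := by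
        simp only [List.nodup_cons] at hnd
        exact hnd.1
      intro he
      rw [hu] at he
      exact this (he ▸ hv)

lemma two_le_length_of_path_ne {A : V → V → Prop} {u v : V} {p : List V}
    (h : IsPathFT A u v p) (huv : u ≠ v) : 2 ≤ p.length := by
  obtain ⟨⟨hne, _, _⟩, hhd, hlast⟩ := h
  cases p with
  | nil => simp at hhd
  | cons a rest =>
    cases rest with
    | nil =>
      simp at hhd hlast
      exact absurd (hhd.symm.trans hlast) huv
    | cons b rest' => simp

lemma nodup_mem_split [DecidableEq V] {L : List V} {x : V} (hx : x ∈ L) (hnd : L.Nodup) :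
    ∃ c d, L = c ++ x :: d ∧ x ∉ c ∧ x ∉ d := by
  obtain ⟨c, d, rfl⟩ := List.append_of_mem hx
  rw [List.nodup_append] at hnd
  refine ⟨c, d, rfl, fun hc => hnd.2.2 x hc x List.mem_cons_self rfl, ?_⟩
  have := hnd.2.1
  simp only [List.nodup_cons] at this
  exact this.1

lemma getLast?_split {L c d : List V} {x : V} (h : L = c ++ x :: d) :
    L.getLast? = (x :: d).getLast? := by
  subst h
  exact List.getLast?_append_of_ne_nil c (by simp)

end Utils
section Wrap

variable {V : Type*}

lemma nest_wrap (A : V → V → Prop) (l lq : ℕ)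
    (u v h1 h2 : V) {w z1 z2 : V}
    (qp t1a t1b t2a t2b : List V) (S : Finset V)
    (hq : IsPathFT A u w qp) (hlenq : qp.length = lq) (hlq : lq + 1 ≤ l)
    (hqS : ∀ x ∈ qp, x ∈ S)
    (ht1 : IsPathFT A z1 v (t1a ++ h1 :: t1b)) (ht2 : IsPathFT A z2 v (t2a ++ h2 :: t2b))
    (ht1S : ∀ y ∈ t1b, y ∉ S) (ht2S : ∀ y ∈ t2b, y ∉ S)
    (ht12 : ∀ x ∈ t1a ++ h1 :: t1b, x ∈ t2a ++ h2 :: t2b → x = v)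
    (hcount : l - 1 ≤ t1b.length + t2b.length)
    (h1q : h1 ∈ qp) (h2q : h2 ∈ qp) (h1u : h1 ≠ u) (h2u : h2 ≠ u)
    (h1v : h1 ≠ v) (h2v : h2 ≠ v) (hne12 : h1 ≠ h2) :
    ∃ u' P1 P2, IsPathFT A u' v P1 ∧ IsPathFT A u' v P2 ∧ u' ≠ v ∧
      (∀ x ∈ P1, x ∈ P2 → x = u' ∨ x = v) ∧ l + 2 ≤ P1.length + P2.length ∧
      P1.length + P2.length + 2 <
        l + (t1a ++ h1 :: t1b).length + (t2a ++ h2 :: t2b).length := by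
  obtain ⟨c, d, rfl⟩ := List.append_of_mem h2q
  have h1cd : h1 ∈ c ∨ h1 ∈ d := by
    rcases List.mem_append.1 h1q with h | h
    · exact Or.inl h
    · rcases List.mem_cons.1 h with h | h
      · exact absurd h hne12
      · exact Or.inr h
  rcases h1cd with hc | hd
  · -- h1 before h2 : hX := h1 with tail t1, hY := h2 with tail t2
    obtain ⟨c1, c2, rfl⟩ := List.append_of_mem hc
    have hre : (c1 ++ h1 :: c2) ++ h2 :: d = c1 ++ h1 :: (c2 ++ h2 :: d) := by
      simp
    rw [hre] at hq hlenq hqS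
    have hc1 : c1 ≠ [] := by
      intro he
      subst he
      have := hq.2.1
      simp at this
      exact h1u this
    obtain ⟨u', P1, P2, hp1, hp2, hun, hdj, htt, hlt⟩ :=
      nest_lemma A l lq u v h1 h2 c1 c2 d t1a t1b t2a t2b S hq ht1 ht2 hlenq hlq hqS
        ht1S ht2S ht12 hcount hc1 h1v
    exact ⟨u', P1, P2, hp1, hp2, hun, hdj, htt, by omega⟩
  · -- h2 before h1 : hX := h2 with tail t2, hY := h1 with tail t1
    obtain ⟨d1, d2, rfl⟩ := List.append_of_mem hd
    have hcne : c ≠ [] := by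
      intro he
      subst he
      have := hq.2.1
      simp at this
      exact h2u this
    have ht21 : ∀ x ∈ t2a ++ h2 :: t2b, x ∈ t1a ++ h1 :: t1b → x = v :=
      fun x hx hx' => ht12 x hx' hx
    obtain ⟨u', P1, P2, hp1, hp2, hun, hdj, htt, hlt⟩ :=
      nest_lemma A l lq u v h2 h1 c d1 d2 t2a t2b t1a t1b S hq ht2 ht1 hlenq hlq hqS
        ht2S ht1S ht21 (by omega) hcne h2v
    exact ⟨u', P1, P2, hp1, hp2, hun, hdj, htt, by omega⟩

end Wrap
theorem stmt1 {V : Type*} [DecidableEq V] (A : V → V → Prop)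
    (harc : ∀ a b, A a b → a ≠ b) (l : ℕ) (hl : 3 ≤ l)
    (R : V → V → V → ℕ → ℕ → ℕ → Set (Finset V))
    (hR : ∀ u u1 u2 l1 l2 q, 1 ≤ l1 → 1 ≤ l2 → l1 + l2 = l → q ≤ l - 1 →
      Represents q (R u u1 u2 l1 l2 q) (SpindleFam A u u1 u2 l1 l2))
    (hG : ∃ l1 l2, 1 ≤ l1 ∧ 1 ≤ l2 ∧ l1 + l2 = l ∧ ContainsSpindle2 A l1 l2) :
    ∃ (u u1 u2 v : V) (l1 l2 q : ℕ), 1 ≤ l1 ∧ 1 ≤ l2 ∧ l1 + l2 = l ∧ q ≤ l - 1 ∧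
      ∃ S ∈ R u u1 u2 l1 l2 q, ∃ p1v p2v,
        IsPathFT A u1 v p1v ∧ IsPathFT A u2 v p2v ∧
        vset p1v ∩ vset p2v = {v} ∧
        (↑S : Set V) ∩ (vset p1v ∪ vset p2v) = {u1, u2} := by
  classical
  -- a "good pair" of minimal total size
  have hex : ∃ n : ℕ, ∃ u v : V, ∃ Q1 Q2 : List V,
      (IsPathFT A u v Q1 ∧ IsPathFT A u v Q2 ∧ u ≠ v ∧
        (∀ x ∈ Q1, x ∈ Q2 → x = u ∨ x = v) ∧ l + 2 ≤ Q1.length + Q2.length) ∧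
      Q1.length + Q2.length = n := by
    obtain ⟨l1, l2, hl1, hl2, hll, u, v, p1, p2, hp1, hp2, hlen1, hlen2, hne, hdis⟩ := hG
    have huv : u ≠ v := path_ne_of_two_le hp1 (by omega)
    exact ⟨_, u, v, p1, p2, ⟨hp1, hp2, huv, fun x hx hx' => hdis x hx hx', by omega⟩, rfl⟩
  obtain ⟨u, v, Q1, Q2, ⟨hQ1, hQ2, huv, hdisj, htot⟩, hsum⟩ := Nat.find_spec hex
  have hmin : ∀ m, (∃ u v : V, ∃ P1 P2 : List V,
      (IsPathFT A u v P1 ∧ IsPathFT A u v P2 ∧ u ≠ v ∧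
        (∀ x ∈ P1, x ∈ P2 → x = u ∨ x = v) ∧ l + 2 ≤ P1.length + P2.length) ∧
      P1.length + P2.length = m) → Nat.find hex ≤ m :=
    fun m hm => Nat.find_min' hex hm
  have hQ1len : 2 ≤ Q1.length := two_le_length_of_path_ne hQ1 huv
  have hQ2len : 2 ≤ Q2.length := two_le_length_of_path_ne hQ2 huv
  -- the split lengths
  set l1 := min (Q1.length - 1) (l - 1) with hl1def
  set l2 := l - l1 with hl2def
  have hl1a : 1 ≤ l1 := by omega
  have hl1b : l1 ≤ l - 1 := by omega
  have hl1c : l1 ≤ Q1.length - 1 := by omega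
  have hl2a : 1 ≤ l2 := by omega
  have hll : l1 + l2 = l := by omega
  have hl2c : l2 ≤ Q2.length - 1 := by omega
  -- split Q1
  have hd1 : (Q1.drop (l1 - 1)).length = Q1.length - (l1 - 1) := List.length_drop
  obtain ⟨u1, ys1, hdrop1⟩ : ∃ a r, Q1.drop (l1 - 1) = a :: r := by
    cases hd : Q1.drop (l1 - 1) with
    | nil => rw [hd] at hd1; simp at hd1; omega
    | cons a r => exact ⟨a, r, rfl⟩
  have hsplit1 : Q1 = Q1.take (l1 - 1) ++ u1 :: ys1 := by
    rw [← hdrop1, List.take_append_drop]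
  set xs1 := Q1.take (l1 - 1) with hxs1def
  have hxs1len : xs1.length = l1 - 1 := by
    simp [hxs1def, List.length_take]; omega
  have hys1len : ys1.length = Q1.length - l1 := by
    have := congrArg List.length hsplit1
    simp at this
    omega
  have hys1ne : ys1 ≠ [] := by
    intro he; rw [he] at hys1len; simp at hys1len; omega
  -- split Q2
  have hd2 : (Q2.drop (l2 - 1)).length = Q2.length - (l2 - 1) := List.length_drop
  obtain ⟨u2, ys2, hdrop2⟩ : ∃ a r, Q2.drop (l2 - 1) = a :: r := by
    cases hd : Q2.drop (l2 - 1) with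
    | nil => rw [hd] at hd2; simp at hd2; omega
    | cons a r => exact ⟨a, r, rfl⟩
  have hsplit2 : Q2 = Q2.take (l2 - 1) ++ u2 :: ys2 := by
    rw [← hdrop2, List.take_append_drop]
  set xs2 := Q2.take (l2 - 1) with hxs2def
  have hxs2len : xs2.length = l2 - 1 := by
    simp [hxs2def, List.length_take]; omega
  have hys2len : ys2.length = Q2.length - l2 := by
    have := congrArg List.length hsplit2
    simp at this
    omega
  have hys2ne : ys2 ≠ [] := by
    intro he; rw [he] at hys2len; simp at hys2len; omega
  -- path pieces
  have hQ1' : IsPathFT A u v (xs1 ++ u1 :: ys1) := by rw [← hsplit1]; exact hQ1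
  have hQ2' : IsPathFT A u v (xs2 ++ u2 :: ys2) := by rw [← hsplit2]; exact hQ2
  have hpfx1 : IsPathFT A u u1 (xs1 ++ [u1]) := (path_split A hQ1').1
  have hT1 : IsPathFT A u1 v (u1 :: ys1) := (path_split A hQ1').2
  have hpfx2 : IsPathFT A u u2 (xs2 ++ [u2]) := (path_split A hQ2').1
  have hT2 : IsPathFT A u2 v (u2 :: ys2) := (path_split A hQ2').2
  have hnd1 : (xs1 ++ u1 :: ys1).Nodup := hQ1'.1.2.1
  have hnd2 : (xs2 ++ u2 :: ys2).Nodup := hQ2'.1.2.1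
  have hdisj1 : ∀ x ∈ xs1, x ∉ u1 :: ys1 := fun x hx h => (List.nodup_append.1 hnd1).2.2 x hx x h rfl
  have hdisj2 : ∀ x ∈ xs2, x ∉ u2 :: ys2 := fun x hx h => (List.nodup_append.1 hnd2).2.2 x hx x h rfl
  have ht1nd : (u1 :: ys1).Nodup := hT1.1.2.1
  have ht2nd : (u2 :: ys2).Nodup := hT2.1.2.1
  -- v is in the tails, not in the prefixes
  have hvys1 : v ∈ ys1 := by
    have hg := hT1.2.2
    rw [show (u1 :: ys1) = [u1] ++ ys1 by simp,
      List.getLast?_append_of_ne_nil [u1] hys1ne] at hg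
    exact mem_of_getLast?_eq hg
  have hvys2 : v ∈ ys2 := by
    have hg := hT2.2.2
    rw [show (u2 :: ys2) = [u2] ++ ys2 by simp,
      List.getLast?_append_of_ne_nil [u2] hys2ne] at hg
    exact mem_of_getLast?_eq hg
  have hvu1 : v ≠ u1 := by
    intro he
    have : u1 ∉ ys1 := (List.nodup_cons.1 ht1nd).1
    exact this (he ▸ hvys1)
  have hvu2 : v ≠ u2 := by
    intro he
    have : u2 ∉ ys2 := (List.nodup_cons.1 ht2nd).1
    exact this (he ▸ hvys2)
  have hvnp1 : v ∉ xs1 ++ [u1] := by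
    intro h
    rcases List.mem_append.1 h with h | h
    · exact hdisj1 v h (List.mem_cons_of_mem _ hvys1)
    · simp at h; exact hvu1 h
  have hvnp2 : v ∉ xs2 ++ [u2] := by
    intro h
    rcases List.mem_append.1 h with h | h
    · exact hdisj2 v h (List.mem_cons_of_mem _ hvys2)
    · simp at h; exact hvu2 h
  have humem1 : u ∈ xs1 ++ [u1] := mem_of_head?_eq hpfx1.2.1
  have humem2 : u ∈ xs2 ++ [u2] := mem_of_head?_eq hpfx2.2.1
  -- if u is in a tail then that side is degenerate
  have hut1 : u ∈ u1 :: ys1 → l1 = 1 ∧ u1 = u := by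
    intro hu
    have hxs1nil : xs1 = [] := by
      by_contra hne
      have hh := hQ1'.2.1
      rw [List.head?_append_of_ne_nil _ hne] at hh
      exact hdisj1 u (mem_of_head?_eq hh) hu
    have h1 : l1 = 1 := by rw [hxs1nil] at hxs1len; simp at hxs1len; omega
    have hh := hQ1'.2.1
    rw [hxs1nil] at hh
    simp at hh
    exact ⟨h1, hh⟩
  have hut2 : u ∈ u2 :: ys2 → l2 = 1 ∧ u2 = u := by
    intro hu
    have hxs2nil : xs2 = [] := by
      by_contra hne
      have hh := hQ2'.2.1
      rw [List.head?_append_of_ne_nil _ hne] at hh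
      exact hdisj2 u (mem_of_head?_eq hh) hu
    have h1 : l2 = 1 := by rw [hxs2nil] at hxs2len; simp at hxs2len; omega
    have hh := hQ2'.2.1
    rw [hxs2nil] at hh
    simp at hh
    exact ⟨h1, hh⟩
  -- the tails meet only in v
  have ht12 : ∀ x ∈ u1 :: ys1, x ∈ u2 :: ys2 → x = v := by
    intro x hx hx'
    have hxQ1 : x ∈ Q1 := by rw [hsplit1]; exact List.mem_append.2 (Or.inr hx)
    have hxQ2 : x ∈ Q2 := by rw [hsplit2]; exact List.mem_append.2 (Or.inr hx')
    rcases hdisj x hxQ1 hxQ2 with he | he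
    · exfalso
      have h1 := (hut1 (he ▸ hx)).1
      have h2 := (hut2 (he ▸ hx')).1
      omega
    · exact he
  -- prefixes meet only in u
  have hmeetp : ∀ x ∈ xs1 ++ [u1], x ∈ xs2 ++ [u2] → x = u := by
    intro x hx hx'
    have hxQ1 : x ∈ Q1 := by
      rw [hsplit1]
      rcases List.mem_append.1 hx with h | h
      · exact List.mem_append.2 (Or.inl h)
      · simp at h; subst h; exact List.mem_append.2 (Or.inr (List.mem_cons_self))
    have hxQ2 : x ∈ Q2 := by
      rw [hsplit2]
      rcases List.mem_append.1 hx' with h | h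
      · exact List.mem_append.2 (Or.inl h)
      · simp at h; subst h; exact List.mem_append.2 (Or.inr (List.mem_cons_self))
    rcases hdisj x hxQ1 hxQ2 with he | he
    · exact he
    · exact absurd (he ▸ hx) hvnp1
  -- the spindle family member from the prefixes
  set X : Finset V := (xs1 ++ [u1]).toFinset ∪ (xs2 ++ [u2]).toFinset with hXdef
  have hpfx1len : (xs1 ++ [u1]).length = l1 := by simp [hxs1len]; omega
  have hpfx2len : (xs2 ++ [u2]).length = l2 := by simp [hxs2len]; omega
  have hXcard : X.card = l1 + l2 - 1 := by
    have h1 : (xs1 ++ [u1]).toFinset.card = l1 := by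
      rw [List.toFinset_card_of_nodup hpfx1.1.2.1, hpfx1len]
    have h2 : (xs2 ++ [u2]).toFinset.card = l2 := by
      rw [List.toFinset_card_of_nodup hpfx2.1.2.1, hpfx2len]
    have hint : (xs1 ++ [u1]).toFinset ∩ (xs2 ++ [u2]).toFinset = {u} := by
      ext x
      simp only [Finset.mem_inter, List.mem_toFinset, Finset.mem_singleton]
      constructor
      · rintro ⟨hx, hx'⟩; exact hmeetp x hx hx'
      · rintro rfl; exact ⟨humem1, humem2⟩
    have hcui := Finset.card_union_add_card_inter (xs1 ++ [u1]).toFinset (xs2 ++ [u2]).toFinset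
    rw [hint, h1, h2, Finset.card_singleton] at hcui
    rw [hXdef]
    omega
  have hXF : X ∈ SpindleFam A u u1 u2 l1 l2 := by
    refine ⟨hXcard, xs1 ++ [u1], xs2 ++ [u2], hpfx1, hpfx1len, ?_, hpfx2, hpfx2len, ?_, ?_⟩
    · intro x hx
      rw [hXdef]
      exact Finset.mem_union.2 (Or.inl (List.mem_toFinset.2 hx))
    · intro x hx
      rw [hXdef]
      exact Finset.mem_union.2 (Or.inr (List.mem_toFinset.2 hx))
    · exact hmeetp
  -- the set B0 of internal tail vertices
  set B0 : Finset V := ((u1 :: ys1).toFinset ∪ (u2 :: ys2).toFinset) \ {u1, u2} with hB0def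
  have hB0mem : ∀ x, x ∈ B0 ↔ ((x ∈ u1 :: ys1 ∨ x ∈ u2 :: ys2) ∧ x ≠ u1 ∧ x ≠ u2) := by
    intro x
    simp only [hB0def, Finset.mem_sdiff, Finset.mem_union, List.mem_toFinset,
      Finset.mem_insert, Finset.mem_singleton, not_or]
  have hXB0 : ∀ x ∈ X, x ∉ B0 := by
    intro x hx hB
    rw [hB0mem] at hB
    obtain ⟨ht, hne1, hne2⟩ := hB
    rw [hXdef] at hx
    rcases Finset.mem_union.1 hx with hx | hx <;> rw [List.mem_toFinset] at hx
    · rcases ht with h | h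
      · rcases List.mem_append.1 hx with h' | h'
        · exact hdisj1 x h' h
        · simp at h'; exact hne1 h'
      · have hxQ1 : x ∈ Q1 := by
          rw [hsplit1]
          rcases List.mem_append.1 hx with h' | h'
          · exact List.mem_append.2 (Or.inl h')
          · simp at h'; subst h'; exact List.mem_append.2 (Or.inr (List.mem_cons_self))
        have hxQ2 : x ∈ Q2 := by rw [hsplit2]; exact List.mem_append.2 (Or.inr h)
        rcases hdisj x hxQ1 hxQ2 with he | he
        · exact hne2 (he.trans (hut2 (he ▸ h)).2.symm)
        · exact absurd (he ▸ hx) hvnp1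
    · rcases ht with h | h
      · have hxQ2 : x ∈ Q2 := by
          rw [hsplit2]
          rcases List.mem_append.1 hx with h' | h'
          · exact List.mem_append.2 (Or.inl h')
          · simp at h'; subst h'; exact List.mem_append.2 (Or.inr (List.mem_cons_self))
        have hxQ1 : x ∈ Q1 := by rw [hsplit1]; exact List.mem_append.2 (Or.inr h)
        rcases hdisj x hxQ1 hxQ2 with he | he
        · exact hne1 (he.trans (hut1 (he ▸ h)).2.symm)
        · exact absurd (he ▸ hx) hvnp2
      · rcases List.mem_append.1 hx with h' | h'
        · exact hdisj2 x h' h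
        · simp at h'; exact hne2 h'
  -- final goal assembly from a compliant representative
  have final : ∀ q' : ℕ, q' ≤ l - 1 → ∀ S : Finset V, S ∈ R u u1 u2 l1 l2 q' →
      (∀ x ∈ S, x ∉ B0) →
      ∃ (u' u1' u2' v' : V) (l1' l2' q'' : ℕ), 1 ≤ l1' ∧ 1 ≤ l2' ∧ l1' + l2' = l ∧
        q'' ≤ l - 1 ∧ ∃ S' ∈ R u' u1' u2' l1' l2' q'', ∃ p1v p2v,
        IsPathFT A u1' v' p1v ∧ IsPathFT A u2' v' p2v ∧
        vset p1v ∩ vset p2v = {v'} ∧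
        (↑S' : Set V) ∩ (vset p1v ∪ vset p2v) = {u1', u2'} := by
    intro q' hq' S hSR hSB0
    have hSF : S ∈ SpindleFam A u u1 u2 l1 l2 :=
      (hR u u1 u2 l1 l2 q' hl1a hl2a hll hq').1 hSR
    obtain ⟨hScard, p1', p2', hp1', hp1len, hp1mem, hp2', hp2len, hp2mem, hmeet'⟩ := hSF
    have hu1S : u1 ∈ S := hp1mem u1 (mem_of_getLast?_eq hp1'.2.2)
    have hu2S : u2 ∈ S := hp2mem u2 (mem_of_getLast?_eq hp2'.2.2)
    refine ⟨u, u1, u2, v, l1, l2, q', hl1a, hl2a, hll, hq', S, hSR,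
      u1 :: ys1, u2 :: ys2, hT1, hT2, ?_, ?_⟩
    · ext x
      simp only [Set.mem_inter_iff, Set.mem_singleton_iff, vset, Set.mem_setOf_eq]
      constructor
      · rintro ⟨h, h'⟩; exact ht12 x h h'
      · rintro rfl
        exact ⟨List.mem_cons_of_mem _ hvys1, List.mem_cons_of_mem _ hvys2⟩
    · ext x
      simp only [Set.mem_inter_iff, Set.mem_union, Set.mem_insert_iff,
        Set.mem_singleton_iff, vset, Set.mem_setOf_eq, Finset.coe_sort_coe,
        Finset.mem_coe]
      constructor
      · rintro ⟨hxS, hx12⟩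
        have hxB := hSB0 x hxS
        rw [hB0mem] at hxB
        by_contra hcon
        push_neg at hcon
        exact hxB ⟨hx12, hcon.1, hcon.2⟩
      · rintro (rfl | rfl)
        · exact ⟨hu1S, Or.inl (List.mem_cons_self)⟩
        · exact ⟨hu2S, Or.inr (List.mem_cons_self)⟩
  by_cases hcase : B0.card ≤ l - 1
  · -- small tails: apply representation directly
    obtain ⟨hsub, hrep⟩ := hR u u1 u2 l1 l2 B0.card hl1a hl2a hll hcase
    obtain ⟨S, hSR, hSB0⟩ := hrep B0 rfl ⟨X, hXF, by
      rw [Finset.eq_empty_iff_forall_notMem]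
      intro x hx
      rw [Finset.mem_inter] at hx
      exact hXB0 x hx.1 hx.2⟩
    refine final B0.card hcase S hSR ?_
    intro x hxS hxB
    rw [Finset.eq_empty_iff_forall_notMem] at hSB0
    exact hSB0 x (Finset.mem_inter.2 ⟨hxS, hxB⟩)
  · -- big tails
    push_neg at hcase
    set key : V → ℕ := fun x => if x ∈ u1 :: ys1
      then ((List.dropWhile (fun z => z ≠ x) (u1 :: ys1)).tail).length
      else ((List.dropWhile (fun z => z ≠ x) (u2 :: ys2)).tail).length with hkeydef
    have keyval1 : ∀ (c d : List V) (x : V), u1 :: ys1 = c ++ x :: d → x ∉ c →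
        key x = d.length := by
      intro c d x he hxc
      have hx1 : x ∈ u1 :: ys1 := by
        rw [he]; exact List.mem_append.2 (Or.inr (List.mem_cons_self))
      simp only [hkeydef, if_pos hx1]
      rw [he, dropWhile_ne_append hxc]
      simp
    have keyval2 : ∀ (c d : List V) (x : V), x ∉ u1 :: ys1 → u2 :: ys2 = c ++ x :: d →
        x ∉ c → key x = d.length := by
      intro c d x hx1 he hxc
      simp only [hkeydef, if_neg hx1]
      rw [he, dropWhile_ne_append hxc]
      simp
    obtain ⟨B1, hB1B0, hB1card, hB1min⟩ := exists_min_subset B0 key (l - 1) (le_of_lt hcase)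
    have hXB1 : X ∩ B1 = ∅ := by
      rw [Finset.eq_empty_iff_forall_notMem]
      intro x hx
      rw [Finset.mem_inter] at hx
      exact hXB0 x hx.1 (hB1B0 hx.2)
    obtain ⟨hsub, hrep⟩ := hR u u1 u2 l1 l2 (l - 1) hl1a hl2a hll le_rfl
    obtain ⟨S, hSR, hSB1⟩ := hrep B1 hB1card ⟨X, hXF, hXB1⟩
    have hSB1' : ∀ x ∈ S, x ∉ B1 := by
      intro x hxS hxB
      rw [Finset.eq_empty_iff_forall_notMem] at hSB1
      exact hSB1 x (Finset.mem_inter.2 ⟨hxS, hxB⟩)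
    by_cases hSB0 : ∀ x ∈ S, x ∉ B0
    · exact final (l - 1) le_rfl S hSR hSB0
    push_neg at hSB0
    obtain ⟨w, hwS, hwB0⟩ := hSB0
    exfalso
    -- unpack S : it is the union of its two witness paths
    have hSF : S ∈ SpindleFam A u u1 u2 l1 l2 := hsub hSR
    obtain ⟨hScard, q1', q2', hq1', hq1len, hq1mem, hq2', hq2len, hq2mem, hmeet'⟩ := hSF
    have hu1S : u1 ∈ S := hq1mem u1 (mem_of_getLast?_eq hq1'.2.2)
    have hu2S : u2 ∈ S := hq2mem u2 (mem_of_getLast?_eq hq2'.2.2)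
    have huq1 : u ∈ q1' := mem_of_head?_eq hq1'.2.1
    have huq2 : u ∈ q2' := mem_of_head?_eq hq2'.2.1
    have hSeq : ∀ x ∈ S, x ∈ q1' ∨ x ∈ q2' := by
      have hU : q1'.toFinset ∪ q2'.toFinset ⊆ S := by
        intro x hx
        rcases Finset.mem_union.1 hx with h | h
        · exact hq1mem x (List.mem_toFinset.1 h)
        · exact hq2mem x (List.mem_toFinset.1 h)
      have hint : q1'.toFinset ∩ q2'.toFinset = {u} := by
        ext x
        simp only [Finset.mem_inter, List.mem_toFinset, Finset.mem_singleton]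
        constructor
        · rintro ⟨h, h'⟩; exact hmeet' x h h'
        · rintro rfl; exact ⟨huq1, huq2⟩
      have hcui := Finset.card_union_add_card_inter q1'.toFinset q2'.toFinset
      rw [hint, Finset.card_singleton, List.toFinset_card_of_nodup hq1'.1.2.1,
        List.toFinset_card_of_nodup hq2'.1.2.1, hq1len, hq2len] at hcui
      have hle : S.card ≤ (q1'.toFinset ∪ q2'.toFinset).card := by
        rw [hScard]; omega
      have heq := Finset.eq_of_subset_of_card_le hU hle
      intro x hx
      rw [← heq] at hx
      rcases Finset.mem_union.1 hx with h | h
      · exact Or.inl (List.mem_toFinset.1 h)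
      · exact Or.inr (List.mem_toFinset.1 h)
    -- last S-vertices on both tails
    obtain ⟨t1a, h1, t1b, hts1, hh1S, ht1bS⟩ :=
      exists_last_split (P := fun x => x ∈ S) ⟨u1, List.mem_cons_self, hu1S⟩
    obtain ⟨t2a, h2, t2b, hts2, hh2S, ht2bS⟩ :=
      exists_last_split (P := fun x => x ∈ S) ⟨u2, List.mem_cons_self, hu2S⟩
    have hh1t1 : h1 ∈ u1 :: ys1 := by
      rw [hts1]; exact List.mem_append.2 (Or.inr (List.mem_cons_self))
    have hh2t2 : h2 ∈ u2 :: ys2 := by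
      rw [hts2]; exact List.mem_append.2 (Or.inr (List.mem_cons_self))
    have ht1nd' : (t1a ++ h1 :: t1b).Nodup := by rw [← hts1]; exact ht1nd
    have ht2nd' : (t2a ++ h2 :: t2b).Nodup := by rw [← hts2]; exact ht2nd
    have hh1nt1a : h1 ∉ t1a :=
      fun h => (List.nodup_append.1 ht1nd').2.2 h1 h h1 List.mem_cons_self rfl
    have hh2nt2a : h2 ∉ t2a :=
      fun h => (List.nodup_append.1 ht2nd').2.2 h2 h h2 List.mem_cons_self rfl
    have hvB0 : v ∈ B0 := by
      rw [hB0mem]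
      exact ⟨Or.inl (List.mem_cons_of_mem _ hvys1), hvu1, hvu2⟩
    -- v belongs to the protected set B1
    have hvB1 : v ∈ B1 := by
      by_contra hvB1
      have hB1ne : B1.Nonempty := by
        rw [← Finset.card_pos, hB1card]; omega
      obtain ⟨b, hb⟩ := hB1ne
      have hble := hB1min b hb v hvB0 hvB1
      obtain ⟨c, d, hcd, hvc, hvd⟩ :=
        nodup_mem_split (List.mem_cons_of_mem _ hvys1) ht1nd
      have hdnil : d = [] := by
        by_contra hdne
        have h1g := hT1.2.2
        rw [getLast?_split hcd] at h1g
        rw [show (v :: d) = [v] ++ d by simp,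
          List.getLast?_append_of_ne_nil [v] hdne] at h1g
        exact hvd (mem_of_getLast?_eq h1g)
      subst hdnil
      have hkv : key v = 0 := by
        have := keyval1 c [] v hcd hvc
        simpa using this
      have hkb : key b = 0 := by omega
      have hbB0 := hB1B0 hb
      rw [hB0mem] at hbB0
      obtain ⟨hbt, hbne1, hbne2⟩ := hbB0
      by_cases hbt1 : b ∈ u1 :: ys1
      · obtain ⟨c', d', hcd', hbc', hbd'⟩ := nodup_mem_split hbt1 ht1nd
        have hkb' := keyval1 c' d' b hcd' hbc'
        have hd'nil : d' = [] := by
          rw [hkb'] at hkb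
          exact List.length_eq_zero_iff.1 hkb
        subst hd'nil
        have h1g := hT1.2.2
        rw [getLast?_split hcd'] at h1g
        simp at h1g
        subst h1g
        exact hvB1 hb
      · have hbt2 : b ∈ u2 :: ys2 := by
          rcases hbt with h | h
          · exact absurd h hbt1
          · exact h
        obtain ⟨c', d', hcd', hbc', hbd'⟩ := nodup_mem_split hbt2 ht2nd
        have hkb' := keyval2 c' d' b hbt1 hcd' hbc'
        have hd'nil : d' = [] := by
          rw [hkb'] at hkb
          exact List.length_eq_zero_iff.1 hkb
        subst hd'nil
        have h2g := hT2.2.2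
        rw [getLast?_split hcd'] at h2g
        simp at h2g
        subst h2g
        exact hbt1 (List.mem_cons_of_mem _ hvys1)
    have hh1B1 : h1 ∉ B1 := hSB1' h1 hh1S
    have hh2B1 : h2 ∉ B1 := hSB1' h2 hh2S
    have hh1v : h1 ≠ v := fun he => hh1B1 (he ▸ hvB1)
    have hh2v : h2 ≠ v := fun he => hh2B1 (he ▸ hvB1)
    have hne12 : h1 ≠ h2 := by
      intro he
      have hh2t2' := hh2t2
      rw [← he] at hh2t2'
      exact hh1v (ht12 h1 hh1t1 hh2t2')
    have hh2nt1 : h2 ∉ u1 :: ys1 := fun h => hh2v (ht12 h2 h hh2t2)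
    have hh1nt2 : h1 ∉ u2 :: ys2 := fun h => hh1v (ht12 h1 hh1t1 h)
    have hkey1 : key h1 = t1b.length := keyval1 t1a t1b h1 hts1 hh1nt1a
    have hkey2 : key h2 = t2b.length := keyval2 t2a t2b h2 hh2nt1 hts2 hh2nt2a
    -- every protected vertex lies beyond the last S-vertex of its tail
    have hsubB1 : ∀ x ∈ B1, x ∈ t1b ∨ x ∈ t2b := by
      intro x hx
      have hxB0 := hB1B0 hx
      rw [hB0mem] at hxB0
      obtain ⟨hxt, hxu1, hxu2⟩ := hxB0
      have hxS : x ∉ S := fun h => hSB1' x h hx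
      by_cases hxt1 : x ∈ u1 :: ys1
      · have hxt1' := hxt1
        rw [hts1] at hxt1'
        rcases List.mem_append.1 hxt1' with hxa | hxc
        · exfalso
          have ht1and : t1a.Nodup := (List.nodup_append.1 ht1nd').1
          obtain ⟨e, f, hef, hxe, hxf⟩ := nodup_mem_split hxa ht1and
          have hsplitx : u1 :: ys1 = e ++ x :: (f ++ h1 :: t1b) := by
            rw [hts1, hef]; simp
          have hkx : key x = (f ++ h1 :: t1b).length := keyval1 e _ x hsplitx hxe
          have hh1u1 : h1 ≠ u1 := by
            intro he
            cases t1a with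
            | nil => simp at hxa
            | cons a as =>
              have ha : u1 = a := by
                have h' := hts1
                simp only [List.cons_append] at h'
                exact (List.cons.injEq _ _ _ _ ▸ h').1
              exact hh1nt1a (by rw [he, ha]; exact List.mem_cons_self)
          have hh1u2 : h1 ≠ u2 := by
            intro he
            exact hh1nt2 (by rw [he]; exact List.mem_cons_self)
          have hh1B0 : h1 ∈ B0 := by
            rw [hB0mem]
            exact ⟨Or.inl hh1t1, hh1u1, hh1u2⟩
          have hmle := hB1min x hx h1 hh1B0 hh1B1
          rw [hkx, hkey1] at hmle
          simp at hmle
          omega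
        · rcases List.mem_cons.1 hxc with he | hxb
          · exact absurd (he ▸ hh1S) hxS
          · exact Or.inl hxb
      · have hxt2 : x ∈ u2 :: ys2 := by
          rcases hxt with h | h
          · exact absurd h hxt1
          · exact h
        have hxt2' := hxt2
        rw [hts2] at hxt2'
        rcases List.mem_append.1 hxt2' with hxa | hxc
        · exfalso
          have ht2and : t2a.Nodup := (List.nodup_append.1 ht2nd').1
          obtain ⟨e, f, hef, hxe, hxf⟩ := nodup_mem_split hxa ht2and
          have hsplitx : u2 :: ys2 = e ++ x :: (f ++ h2 :: t2b) := by
            rw [hts2, hef]; simp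
          have hkx : key x = (f ++ h2 :: t2b).length := keyval2 e _ x hxt1 hsplitx hxe
          have hh2u2 : h2 ≠ u2 := by
            intro he
            cases t2a with
            | nil => simp at hxa
            | cons a as =>
              have ha : u2 = a := by
                have h' := hts2
                simp only [List.cons_append] at h'
                exact (List.cons.injEq _ _ _ _ ▸ h').1
              exact hh2nt2a (by rw [he, ha]; exact List.mem_cons_self)
          have hh2u1 : h2 ≠ u1 := by
            intro he
            exact hh2nt1 (by rw [he]; exact List.mem_cons_self)
          have hh2B0 : h2 ∈ B0 := by
            rw [hB0mem]
            exact ⟨Or.inr hh2t2, hh2u1, hh2u2⟩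
          have hmle := hB1min x hx h2 hh2B0 hh2B1
          rw [hkx, hkey2] at hmle
          simp at hmle
          omega
        · rcases List.mem_cons.1 hxc with he | hxb
          · exact absurd (he ▸ hh2S) hxS
          · exact Or.inr hxb
    have hcount : l - 1 ≤ t1b.length + t2b.length := by
      have hss : B1 ⊆ t1b.toFinset ∪ t2b.toFinset := by
        intro x hx
        rcases hsubB1 x hx with h | h
        · exact Finset.mem_union.2 (Or.inl (List.mem_toFinset.2 h))
        · exact Finset.mem_union.2 (Or.inr (List.mem_toFinset.2 h))
      calc l - 1 = B1.card := hB1card.symm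
        _ ≤ (t1b.toFinset ∪ t2b.toFinset).card := Finset.card_le_card hss
        _ ≤ t1b.toFinset.card + t2b.toFinset.card := Finset.card_union_le _ _
        _ ≤ t1b.length + t2b.length :=
            add_le_add (List.toFinset_card_le _) (List.toFinset_card_le _)
    have hweave : t1a ≠ [] ∨ t2a ≠ [] := by
      have hwB0' := hwB0
      rw [hB0mem] at hwB0'
      obtain ⟨hwt, hwu1, hwu2⟩ := hwB0'
      rcases hwt with h | h
      · left
        rw [hts1] at h
        rcases List.mem_append.1 h with h' | h'
        · exact List.ne_nil_of_mem h'
        · rcases List.mem_cons.1 h' with he | h''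
          · intro hnil
            rw [hnil] at hts1
            simp only [List.nil_append, List.cons.injEq] at hts1
            exact hwu1 (he.trans hts1.1.symm)
          · exact absurd hwS (ht1bS w h'')
      · right
        rw [hts2] at h
        rcases List.mem_append.1 h with h' | h'
        · exact List.ne_nil_of_mem h'
        · rcases List.mem_cons.1 h' with he | h''
          · intro hnil
            rw [hnil] at hts2
            simp only [List.nil_append, List.cons.injEq] at hts2
            exact hwu2 (he.trans hts2.1.symm)
          · exact absurd hwS (ht2bS w h'')
    have hT1' : IsPathFT A u1 v (t1a ++ h1 :: t1b) := by rw [← hts1]; exact hT1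
    have hT2' : IsPathFT A u2 v (t2a ++ h2 :: t2b) := by rw [← hts2]; exact hT2
    have ht12' : ∀ x ∈ t1a ++ h1 :: t1b, x ∈ t2a ++ h2 :: t2b → x = v := by
      rw [← hts1, ← hts2]; exact ht12
    have hsmaller : ∃ u' P1 P2, IsPathFT A u' v P1 ∧ IsPathFT A u' v P2 ∧ u' ≠ v ∧
        (∀ x ∈ P1, x ∈ P2 → x = u' ∨ x = v) ∧ l + 2 ≤ P1.length + P2.length ∧
        P1.length + P2.length + 2 <
          l + (t1a ++ h1 :: t1b).length + (t2a ++ h2 :: t2b).length := by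
      by_cases c12 : h1 ∈ q1' ∧ h2 ∈ q2'
      · obtain ⟨q1a, q1b, hsq1⟩ := List.append_of_mem c12.1
        obtain ⟨q2a, q2b, hsq2⟩ := List.append_of_mem c12.2
        rw [hsq1] at hq1' hq1len hq1mem
        rw [hsq2] at hq2' hq2len hq2mem
        have hmeet'' : ∀ x ∈ q1a ++ h1 :: q1b, x ∈ q2a ++ h2 :: q2b → x = u := by
          rw [← hsq1, ← hsq2]; exact hmeet'
        exact cross_lemma A l l1 l2 hll u v h1 h2 q1a q1b q2a q2b t1a t1b t2a t2b S huv
          hq1' hq2' hT1' hT2' hq1len hq2len hq1mem hq2mem ht1bS ht2bS hmeet'' ht12'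
          hcount hweave
      · by_cases c21 : h1 ∈ q2' ∧ h2 ∈ q1'
        · obtain ⟨q2a, q2b, hsq2⟩ := List.append_of_mem c21.1
          obtain ⟨q1a, q1b, hsq1⟩ := List.append_of_mem c21.2
          rw [hsq1] at hq1' hq1len hq1mem
          rw [hsq2] at hq2' hq2len hq2mem
          have hmeet'' : ∀ x ∈ q2a ++ h1 :: q2b, x ∈ q1a ++ h2 :: q1b → x = u := by
            rw [← hsq1, ← hsq2]
            exact fun x hx hx' => hmeet' x hx' hx
          exact cross_lemma A l l2 l1 (by omega) u v h1 h2 q2a q2b q1a q1b t1a t1b t2a t2b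
            S huv hq2' hq1' hT1' hT2' hq2len hq1len hq2mem hq1mem ht1bS ht2bS hmeet''
            ht12' hcount hweave
        · rcases hSeq h1 hh1S with h1q1 | h1q2
          · have h2q1 : h2 ∈ q1' := by
              rcases hSeq h2 hh2S with h | h
              · exact h
              · exact absurd ⟨h1q1, h⟩ c12
            have h1u : h1 ≠ u := by
              intro he
              exact c21 ⟨by rw [he]; exact huq2, h2q1⟩
            have h2u : h2 ≠ u := by
              intro he
              exact c12 ⟨h1q1, by rw [he]; exact huq2⟩
            exact nest_wrap A l l1 u v h1 h2 q1' t1a t1b t2a t2b S hq1' hq1len (by omega)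
              hq1mem hT1' hT2' ht1bS ht2bS ht12' hcount h1q1 h2q1 h1u h2u hh1v hh2v hne12
          · have h2q2 : h2 ∈ q2' := by
              rcases hSeq h2 hh2S with h | h
              · exact absurd ⟨h1q2, h⟩ c21
              · exact h
            have h1u : h1 ≠ u := by
              intro he
              exact c12 ⟨by rw [he]; exact huq1, h2q2⟩
            have h2u : h2 ≠ u := by
              intro he
              exact c21 ⟨h1q2, by rw [he]; exact huq1⟩
            exact nest_wrap A l l2 u v h1 h2 q2' t1a t1b t2a t2b S hq2' hq2len (by omega)
              hq2mem hT1' hT2' ht1bS ht2bS ht12' hcount h1q2 h2q2 h1u h2u hh1v hh2v hne12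
    obtain ⟨u', P1, P2, hp1', hp2', hune', hdisj'', htot'', hlt''⟩ := hsmaller
    have hmm := hmin (P1.length + P2.length)
      ⟨u', v, P1, P2, ⟨hp1', hp2', hune', hdisj'', htot''⟩, rfl⟩
    have e1 : Q1.length = (l1 - 1) + (t1a ++ h1 :: t1b).length := by
      rw [hsplit1, hts1]
      simp [hxs1len]
    have e2 : Q2.length = (l2 - 1) + (t2a ++ h2 :: t2b).length := by
      rw [hsplit2, hts2]
      simp [hxs2len]
    omega
end

section
/- Let ℓ_1, ℓ_2 be integers with ℓ_2 ≥ ℓ_1 ≥ 1 and ℓ_2 ≥ 2, and let G be a digraph. Call a subdivision of a (ℓ_1,ℓ_2)-spindle in G short if each of its two paths has at most 2ℓ_2 vertices, and long otherwise. Set q = ℓ_1+ℓ_2−1, and for all vertices u,u' ∈ V(G) let R(u,u') ⊆ 𝒫(u,u',ℓ_2) be a subfamily that q-represents 𝒫(u,u',ℓ_2). Suppose G contains no short subdivision of a (ℓ_1,ℓ_2)-spindle. If G contains a subdivision of a (ℓ_1,ℓ_2)-spindle, then there exist vertices u,u',v of G, a (u,v)-path P_1 of length at least ℓ_1, a (u,u')-path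 P_2^u on ℓ_2 vertices with V(P_2^u) ∈ R(u,u'), and a (u',v)-path P_2^v such that V(P_1) ∩ V(P_2^u) = {u}, V(P_1) ∩ V(P_2^v) = {v}, and V(P_2^u) ∩ V(P_2^v) = {u'}. -/
/-- A *short* subdivision of an `(l1,l2)`-spindle: one in which each of the two paths
has at most `2 * l2` vertices. -/
def ShortSpindle {V : Type*} (A : V → V → Prop) (l1 l2 : ℕ) : Prop :=
  ∃ u v p1 p2, IsPathFT A u v p1 ∧ IsPathFT A u v p2 ∧
    l1 + 1 ≤ p1.length ∧ l2 + 1 ≤ p2.length ∧ p1 ≠ p2 ∧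
    (∀ x, x ∈ p1 → x ∈ p2 → x = u ∨ x = v) ∧
    p1.length ≤ 2 * l2 ∧ p2.length ≤ 2 * l2

/-- The family `𝒫(u,u',m)`: all vertex sets `X` of cardinality `m` such that the
subdigraph induced by `X` contains a `(u,u')`-path on `m` vertices. -/
def PathFam {V : Type*} (A : V → V → Prop) (u u' : V) (m : ℕ) : Set (Finset V) :=
  {X | X.card = m ∧ ∃ p, IsPathFT A u u' p ∧ p.length = m ∧ ∀ x ∈ p, x ∈ X}

section SpindleAux
variable {α : Type*}

theorem getLast?_append_right' {l₁ l₂ : List α} (h : l₂ ≠ []) :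
    (l₁ ++ l₂).getLast? = l₂.getLast? := by
  rw [List.getLast?_append]
  cases h2 : l₂.getLast? with
  | none => exact absurd (List.getLast?_eq_none_iff.mp h2) h
  | some a => rfl

theorem head?_append_left' {l₁ l₂ : List α} (h : l₁ ≠ []) :
    (l₁ ++ l₂).head? = l₁.head? := by
  cases l₁ with
  | nil => exact absurd rfl h
  | cons a t => rfl

theorem exists_first_split (p : α → Prop) (l : List α) (h : ∃ x ∈ l, p x) :
    ∃ F x G, l = F ++ x :: G ∧ p x ∧ ∀ w ∈ F, ¬ p w := by
  classical
  induction l with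
  | nil => simp at h
  | cons a t ih =>
    by_cases ha : p a
    · exact ⟨[], a, t, rfl, ha, by simp⟩
    · obtain ⟨x, hx, hpx⟩ := h
      rcases List.mem_cons.mp hx with rfl | hxt
      · exact absurd hpx ha
      · obtain ⟨F, y, G, ht, hy1, hy2⟩ := ih ⟨x, hxt, hpx⟩
        refine ⟨a :: F, y, G, by rw [ht]; rfl, hy1, ?_⟩
        intro w hw
        rcases List.mem_cons.mp hw with rfl | hwF
        · exact ha
        · exact hy2 w hwF

theorem exists_last_split_s3 (p : α → Prop) (l : List α) (h : ∃ x ∈ l, p x) :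
    ∃ F x G, l = F ++ x :: G ∧ p x ∧ ∀ w ∈ G, ¬ p w := by
  classical
  induction l with
  | nil => simp at h
  | cons a t ih =>
    by_cases ht : ∃ x ∈ t, p x
    · obtain ⟨F, y, G, hteq, hy1, hy2⟩ := ih ht
      exact ⟨a :: F, y, G, by rw [hteq]; rfl, hy1, hy2⟩
    · obtain ⟨x, hx, hpx⟩ := h
      have hxa : x = a := by
        rcases List.mem_cons.mp hx with rfl | hxt
        · rfl
        · exact absurd ⟨x, hxt, hpx⟩ ht
      subst hxa
      exact ⟨[], x, t, rfl, hpx, fun w hw hpw => ht ⟨w, hw, hpw⟩⟩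

theorem nodup_split_unique {b : α} :
    ∀ {C : List α} {D C' D' : List α}, (C ++ b :: D).Nodup →
      C ++ b :: D = C' ++ b :: D' → C = C' ∧ D = D' := by
  intro C
  induction C with
  | nil =>
    intro D C' D' hnd h2
    cases C' with
    | nil => simpa using h2
    | cons c' T' =>
      exfalso
      simp only [List.nil_append, List.cons_append, List.cons.injEq] at h2
      obtain ⟨hbc, hD⟩ := h2
      have hb : b ∈ D := by rw [hD]; exact List.mem_append_right _ (List.mem_cons_self)
      simp only [List.nil_append, List.nodup_cons] at hnd
      exact hnd.1 hb
  | cons a T ih =>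
    intro D C' D' hnd h2
    cases C' with
    | nil =>
      exfalso
      simp only [List.cons_append, List.nil_append, List.cons.injEq] at h2
      obtain ⟨hab, hD'⟩ := h2
      simp only [List.cons_append, List.nodup_cons] at hnd
      exact hnd.1 (by rw [hab]; exact List.mem_append_right _ (List.mem_cons_self))
    | cons c' T' =>
      simp only [List.cons_append, List.cons.injEq] at h2
      obtain ⟨hac, h3⟩ := h2
      simp only [List.cons_append, List.nodup_cons] at hnd
      obtain ⟨hT, hD⟩ := ih hnd.2 h3
      exact ⟨by rw [hT, hac], hD⟩

theorem take_subset_take' {l : List α} {m k : ℕ} (h : m ≤ k) : l.take m ⊆ l.take k := by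
  intro x hx
  have h1 : (l.take k).take m = l.take m := by rw [List.take_take, Nat.min_eq_left h]
  rw [← h1] at hx
  exact List.take_subset m (l.take k) hx

end SpindleAux

def Spind {V : Type*} (A : V → V → Prop) (l1 l2 : ℕ) (x y : V) (p1 p2 : List V) : Prop :=
  IsPathFT A x y p1 ∧ IsPathFT A x y p2 ∧
    l1 + 1 ≤ p1.length ∧ l2 + 1 ≤ p2.length ∧ p1 ≠ p2 ∧
    ∀ z, z ∈ p1 → z ∈ p2 → z = x ∨ z = y

theorem spindle_core {V : Type*} [DecidableEq V] (A : V → V → Prop)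
    (l1 l2 : ℕ) (h1 : 1 ≤ l1) (h12 : l1 ≤ l2) (h2 : 2 ≤ l2)
    (R : V → V → Set (Finset V))
    (hR : ∀ u u', Represents (l1 + l2 - 1) (R u u') (PathFam A u u' l2))
    (n : ℕ)
    (hmin : ∀ x y p1 p2, Spind A l1 l2 x y p1 p2 → n ≤ p1.length + p2.length)
    (u v : V) (Q1 Q2 : List V) (hsp : Spind A l1 l2 u v Q1 Q2)
    (hn : Q1.length + Q2.length = n)
    (hlong : 2 * l2 + 1 ≤ Q2.length) :
    ∃ (u u' v : V) (p1 p2u p2v : List V),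
      IsPathFT A u v p1 ∧ l1 + 1 ≤ p1.length ∧
      IsPathFT A u u' p2u ∧ p2u.length = l2 ∧ p2u.toFinset ∈ R u u' ∧
      IsPathFT A u' v p2v ∧
      vset p1 ∩ vset p2u = {u} ∧
      vset p1 ∩ vset p2v = {v} ∧
      vset p2u ∩ vset p2v = {u'} := by
  classical
  obtain ⟨hQ1p, hQ2p, hlen1, hlen2, hQne, hdisj⟩ := hsp
  obtain ⟨⟨hQ1ne, hQ1nd, hQ1ch⟩, hQ1h, hQ1l⟩ := hQ1p
  obtain ⟨⟨hQ2ne, hQ2nd, hQ2ch⟩, hQ2h, hQ2l⟩ := hQ2p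
  have hn1 : l1 + 1 ≤ Q1.length := hlen1
  -- ### the split vertex u' and the suffix of Q2
  have hlt : l2 - 1 < Q2.length := by omega
  set u' : V := Q2[l2-1] with hu'def
  set sufT : List V := Q2.drop l2 with hsufTdef
  set pre1 : List V := Q2.take (l2-1) with hpre1def
  have hsufcons : Q2.drop (l2-1) = u' :: sufT := by
    rw [List.drop_eq_getElem_cons hlt]
    have hrw : l2 - 1 + 1 = l2 := by omega
    rw [hrw]
  have hQ2dec : Q2 = pre1 ++ u' :: sufT := by
    rw [← hsufcons, hpre1def]
    exact (List.take_append_drop _ _).symm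
  have hpre1len : pre1.length = l2 - 1 := by
    rw [hpre1def, List.length_take]; omega
  have htailSlen : sufT.length = Q2.length - l2 := by
    rw [hsufTdef, List.length_drop]
  have hpre1ne : pre1 ≠ [] := by
    intro h; rw [h] at hpre1len; simp at hpre1len; omega
  have htailSne : sufT ≠ [] := by
    intro h; rw [h] at htailSlen; simp at htailSlen; omega
  have hpreL : Q2.take l2 = pre1 ++ [u'] := by
    have h3 : Q2.take (l2-1+1) = Q2.take (l2-1) ++ (Q2[l2-1]?).toList := List.take_succ
    rw [List.getElem?_eq_getElem hlt] at h3
    have hrw : l2 - 1 + 1 = l2 := by omega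
    rw [hrw] at h3
    rw [h3, hpre1def, hu'def]
    rfl
  -- ### the tail zone Z of Q2 and the protected sets
  set Z : List V := Q2.drop (Q2.length - l2) with hZdef
  have hZdec : Q2 = Q2.take (Q2.length - l2) ++ Z := by
    rw [hZdef]; exact (List.take_append_drop _ _).symm
  have hZlen : Z.length = l2 := by rw [hZdef, List.length_drop]; omega
  have hZne : Z ≠ [] := by intro h; rw [h] at hZlen; simp at hZlen; omega
  have hZnd : Z.Nodup := hQ2nd.sublist (List.drop_sublist _ _)
  have hZlast : Z.getLast? = some v := by
    have h4 := hQ2l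
    rw [hZdec, getLast?_append_right' hZne] at h4
    exact h4
  set B2L : List V := Z.take (l2-1) with hB2Ldef
  have hB2len : B2L.length = l2 - 1 := by
    rw [hB2Ldef, List.length_take, hZlen]; omega
  have hZdrop1 : Z.drop (l2-1) = [v] := by
    have hlen1' : (Z.drop (l2-1)).length = 1 := by rw [List.length_drop, hZlen]; omega
    obtain ⟨w, hw⟩ := List.length_eq_one_iff.mp hlen1'
    have hZdec2 : Z = B2L ++ [w] := by
      rw [hB2Ldef, ← hw]; exact (List.take_append_drop _ _).symm
    have h5 : Z.getLast? = some w := by rw [hZdec2]; exact List.getLast?_concat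
    rw [hZlast] at h5
    rw [hw, Option.some.inj h5]
  have hZB2 : Z = B2L ++ [v] := by
    rw [hB2Ldef, ← hZdrop1]; exact (List.take_append_drop _ _).symm
  have hB2nd : B2L.Nodup := hZnd.sublist (List.take_sublist _ _)
  have hvZ : v ∈ Z := by rw [hZB2]; exact List.mem_append_right _ (List.mem_cons_self)
  have hvB2 : v ∉ B2L := by
    intro h
    have hdj := List.disjoint_take_drop hZnd (le_refl (l2-1))
    exact hdj (by rw [← hB2Ldef]; exact h) (by rw [hZdrop1]; exact List.mem_cons_self)
  have hZsubdrop : ∀ x ∈ Z, x ∈ sufT := by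
    intro x hx
    have h6 : Z = sufT.drop (Q2.length - l2 - l2) := by
      rw [hZdef, hsufTdef, List.drop_drop]
      congr 1
      omega
    rw [h6] at hx
    exact List.drop_subset _ _ hx
  have hvtailS : v ∈ sufT := hZsubdrop v hvZ
  -- ### B1 on Q1
  set B1L : List V := Q1.drop (Q1.length - l1) with hB1Ldef
  have hB1len : B1L.length = l1 := by rw [hB1Ldef, List.length_drop]; omega
  have hB1ne : B1L ≠ [] := by intro h; rw [h] at hB1len; simp at hB1len; omega
  have hB1nd : B1L.Nodup := hQ1nd.sublist (List.drop_sublist _ _)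
  have hQ1dec0 : Q1 = Q1.take (Q1.length - l1) ++ B1L := by
    rw [hB1Ldef]; exact (List.take_append_drop _ _).symm
  have htake1len : (Q1.take (Q1.length - l1)).length = Q1.length - l1 := by
    rw [List.length_take]; omega
  have htake1ne : Q1.take (Q1.length - l1) ≠ [] := by
    intro h; rw [h] at htake1len; simp at htake1len; omega
  have hvB1 : v ∈ B1L := by
    have h7 := hQ1l
    rw [hQ1dec0, getLast?_append_right' hB1ne] at h7
    exact List.mem_of_mem_getLast? h7
  have huT1 : u ∈ Q1.take (Q1.length - l1) := by
    have h8 := hQ1h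
    rw [hQ1dec0, head?_append_left' htake1ne] at h8
    exact List.mem_of_mem_head? h8
  have huB1 : u ∉ B1L := by
    intro h
    exact List.disjoint_take_drop hQ1nd (le_refl (Q1.length - l1)) huT1 (by rw [← hB1Ldef]; exact h)
  have huQ1 : u ∈ Q1 := List.take_subset _ _ huT1
  have hvQ1 : v ∈ Q1 := by rw [hB1Ldef] at hvB1; exact List.drop_subset _ _ hvB1
  have huQ2 : u ∈ Q2 := List.mem_of_mem_head? hQ2h
  have hu'Q2 : u' ∈ Q2 := by rw [hQ2dec]; exact List.mem_append_right _ (List.mem_cons_self)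
  have hupre1 : u ∈ pre1 := by
    have h9 := hQ2h
    rw [hQ2dec, head?_append_left' hpre1ne] at h9
    exact List.mem_of_mem_head? h9
  have huu' : u ≠ u' := by
    intro h
    have hdj := List.disjoint_take_drop hQ2nd (le_refl (l2-1))
    exact hdj (by rw [← hpre1def]; exact hupre1) (by rw [hsufcons, ← h]; exact List.mem_cons_self)
  have hsufnd : (u' :: sufT).Nodup := by
    rw [← hsufcons]; exact hQ2nd.sublist (List.drop_sublist _ _)
  have hu'tailS : u' ∉ sufT := (List.nodup_cons.mp hsufnd).1
  have hu'v : u' ≠ v := by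
    intro h
    exact hu'tailS (h ▸ hvtailS)
  have hu'Q1 : u' ∉ Q1 := by
    intro h
    rcases hdisj u' h hu'Q2 with h' | h'
    · exact huu' h'.symm
    · exact hu'v h'
  have hutailS : u ∉ sufT := by
    intro h
    have hupre : u ∈ Q2.take l2 := by
      rw [hpreL]; exact List.mem_append_left _ hupre1
    exact List.disjoint_take_drop hQ2nd (le_refl l2) hupre (by rw [← hsufTdef]; exact h)
  have huv : u ≠ v := by
    intro h
    exact huB1 (h ▸ hvB1)
  -- ### the Finset B and its cardinality
  have hdisjB : Disjoint B1L.toFinset B2L.toFinset := by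
    rw [Finset.disjoint_left]
    intro x hx1 hx2
    rw [List.mem_toFinset] at hx1 hx2
    have hxQ1 : x ∈ Q1 := by rw [hB1Ldef] at hx1; exact List.drop_subset _ _ hx1
    have hxQ2 : x ∈ Q2 := by
      rw [hB2Ldef] at hx2
      have := List.take_subset _ _ hx2
      rw [hZdef] at this
      exact List.drop_subset _ _ this
    rcases hdisj x hxQ1 hxQ2 with rfl | rfl
    · exact huB1 hx1
    · exact hvB2 hx2
  have hcard : (B1L.toFinset ∪ B2L.toFinset).card = l1 + l2 - 1 := by
    rw [Finset.card_union_of_disjoint hdisjB, List.toFinset_card_of_nodup hB1nd,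
      List.toFinset_card_of_nodup hB2nd, hB1len, hB2len]
    omega
  -- ### the witness: the prefix of Q2 on l2 vertices
  have hpreNd : (Q2.take l2).Nodup := hQ2nd.sublist (List.take_sublist _ _)
  have hpreCh : (Q2.take l2).Chain' A := by
    have hx := hQ2ch
    rw [← List.take_append_drop l2 Q2] at hx
    exact (List.isChain_append.mp hx).1
  have hpretne : Q2.take l2 ≠ [] := by
    intro h
    have h10 : (Q2.take l2).length = l2 := by rw [List.length_take]; omega
    rw [h] at h10; simp at h10; omega
  have hpreh : (Q2.take l2).head? = some u := by
    have h11 := hQ2h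
    conv at h11 => rw [← List.take_append_drop l2 Q2]
    rw [head?_append_left' hpretne] at h11
    exact h11
  have hprel : (Q2.take l2).getLast? = some u' := by
    rw [hpreL]; exact List.getLast?_concat
  have hpreFam : (Q2.take l2).toFinset ∈ PathFam A u u' l2 := by
    refine ⟨?_, Q2.take l2, ⟨⟨hpretne, hpreNd, hpreCh⟩, hpreh, hprel⟩, ?_, ?_⟩
    · rw [List.toFinset_card_of_nodup hpreNd, List.length_take]; omega
    · rw [List.length_take]; omega
    · intro x hx; rwa [List.mem_toFinset]
  have hpreB : (Q2.take l2).toFinset ∩ (B1L.toFinset ∪ B2L.toFinset) = ∅ := by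
    rw [Finset.eq_empty_iff_forall_notMem]
    intro x hx
    rw [Finset.mem_inter, List.mem_toFinset, Finset.mem_union, List.mem_toFinset,
      List.mem_toFinset] at hx
    obtain ⟨hxpre, hxB⟩ := hx
    rcases hxB with hxB1 | hxB2
    · have hxQ1 : x ∈ Q1 := by rw [hB1Ldef] at hxB1; exact List.drop_subset _ _ hxB1
      have hxQ2 : x ∈ Q2 := List.take_subset _ _ hxpre
      rcases hdisj x hxQ1 hxQ2 with rfl | rfl
      · exact huB1 hxB1
      · exact List.disjoint_take_drop hQ2nd (le_refl l2) hxpre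
          (by rw [← hsufTdef]; exact hvtailS)
    · have hxdrop : x ∈ sufT := hZsubdrop x (by rw [hB2Ldef] at hxB2; exact List.take_subset _ _ hxB2)
      exact List.disjoint_take_drop hQ2nd (le_refl l2) hxpre (by rw [← hsufTdef]; exact hxdrop)
  -- ### apply the representation
  obtain ⟨X, hXR, hXB⟩ := (hR u u').2 _ hcard ⟨(Q2.take l2).toFinset, hpreFam, hpreB⟩
  obtain ⟨hXcard, P, hPft, hPlen, hPsub⟩ := (hR u u').1 hXR
  obtain ⟨⟨hPne, hPnd, hPch⟩, hPh, hPl⟩ := hPft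
  have hPT : P.toFinset = X := by
    apply Finset.eq_of_subset_of_card_le
    · intro x hx; rw [List.mem_toFinset] at hx; exact hPsub x hx
    · rw [hXcard, List.toFinset_card_of_nodup hPnd, hPlen]
  have hPB : ∀ w ∈ P, w ∉ B1L.toFinset ∪ B2L.toFinset := by
    intro w hw hwB
    have hwX : w ∈ X := hPsub w hw
    have h12 : w ∈ X ∩ (B1L.toFinset ∪ B2L.toFinset) := Finset.mem_inter.mpr ⟨hwX, hwB⟩
    rw [hXB] at h12
    exact absurd h12 (Finset.notMem_empty w)
  have hPB1 : ∀ w ∈ P, w ∉ B1L := fun w hw hwB =>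
    hPB w hw (Finset.mem_union_left _ (List.mem_toFinset.mpr hwB))
  have hPB2 : ∀ w ∈ P, w ∉ B2L := fun w hw hwB =>
    hPB w hw (Finset.mem_union_right _ (List.mem_toFinset.mpr hwB))
  have hPv : v ∉ P := fun hv => hPB1 v hv hvB1
  have huP : u ∈ P := List.mem_of_mem_head? hPh
  have hu'P : u' ∈ P := List.mem_of_mem_getLast? hPl
  -- ### Claim A: P meets Q1 only in u
  have claimA : ∀ z ∈ P, z ∈ Q1 → z = u := by
    by_contra hA
    push_neg at hA
    obtain ⟨z, hzP, hzQ1, hzu⟩ := hA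
    obtain ⟨Ap, k, A', hPdec, hkprop, hA'⟩ :=
      exists_last_split_s3 (fun w => w ∈ Q1 ∧ w ≠ u) P ⟨z, hzP, ⟨hzQ1, hzu⟩⟩
    obtain ⟨hkQ1, hku⟩ := hkprop
    have hkP : k ∈ P := by rw [hPdec]; exact List.mem_append_right _ (List.mem_cons_self)
    have hkv : k ≠ v := fun h => hPv (h ▸ hkP)
    have hkQ2 : k ∉ Q2 := by
      intro h
      rcases hdisj k hkQ1 h with h' | h'
      · exact hku h'
      · exact hkv h'
    have hku' : k ≠ u' := fun h => hkQ2 (h ▸ hu'Q2)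
    have hPndA : (Ap ++ k :: A').Nodup := by rw [← hPdec]; exact hPnd
    have hkA'nd : (k :: A').Nodup := hPndA.sublist (List.sublist_append_right _ _)
    have hApne : Ap ≠ [] := by
      intro h
      rw [h, List.nil_append] at hPdec
      rw [hPdec] at hPh
      simp only [List.head?_cons, Option.some.injEq] at hPh
      exact hku hPh
    have hA'ne : A' ≠ [] := by
      intro h
      rw [h] at hPdec
      have h13 := hPl
      rw [hPdec, getLast?_append_right' (by simp : ([k] : List V) ≠ [])] at h13
      simp only [List.getLast?_singleton, Option.some.injEq] at h13
      exact hku' h13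
    have hkA'l : (k :: A').getLast? = some u' := by
      have h14 := hPl
      rw [hPdec, getLast?_append_right' (by simp : (k :: A') ≠ [])] at h14
      exact h14
    have hu'A' : u' ∈ A' := by
      have h15 : A'.getLast? = some u' := by
        have h16 : (k :: A') = [k] ++ A' := rfl
        rw [h16, getLast?_append_right' hA'ne] at hkA'l
        exact hkA'l
      exact List.mem_of_mem_getLast? h15
    have huAp : u ∈ Ap := by
      have h17 := hPh
      rw [hPdec, head?_append_left' hApne] at h17
      exact List.mem_of_mem_head? h17
    have hukA' : u ∉ k :: A' := fun h => (List.nodup_append'.mp hPndA).2.2 huAp h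
    have huA' : u ∉ A' := fun h => hukA' (List.mem_cons_of_mem _ h)
    have hA'Q1 : ∀ w ∈ A', w ∉ Q1 := by
      intro w hw hwQ1
      exact hA' w hw ⟨hwQ1, fun h => huA' (h ▸ hw)⟩
    have hA'P : ∀ w ∈ A', w ∈ P := by
      intro w hw; rw [hPdec]; exact List.mem_append_right _ (List.mem_cons_of_mem _ hw)
    -- split Q1 at k, with a long tail
    have hkB1 : k ∉ B1L := hPB1 k hkP
    have hkT1 : k ∈ Q1.take (Q1.length - l1) := by
      have h18 : k ∈ Q1.take (Q1.length - l1) ++ B1L := by rw [← hQ1dec0]; exact hkQ1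
      rcases List.mem_append.mp h18 with h | h
      · exact h
      · exact absurd h hkB1
    obtain ⟨T1, T2, hT⟩ := List.append_of_mem hkT1
    have hQ1dec : Q1 = T1 ++ k :: (T2 ++ B1L) := by
      conv_lhs => rw [hQ1dec0]
      rw [hT]
      simp
    have hElen : l1 ≤ (T2 ++ B1L).length := by
      rw [List.length_append, hB1len]; omega
    have hT1ne : T1 ≠ [] := by
      intro h
      rw [h, List.nil_append] at hQ1dec
      have h19 := hQ1h
      rw [hQ1dec] at h19
      simp only [List.head?_cons, Option.some.injEq] at h19
      exact hku h19
    have huT1' : u ∈ T1 := by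
      have h20 := hQ1h
      rw [hQ1dec, head?_append_left' hT1ne] at h20
      exact List.mem_of_mem_head? h20
    have hQ1nd' : (T1 ++ k :: (T2 ++ B1L)).Nodup := by rw [← hQ1dec]; exact hQ1nd
    have hukE : u ∉ k :: (T2 ++ B1L) := fun h => (List.nodup_append'.mp hQ1nd').2.2 huT1' h
    have hp1nd : (k :: (T2 ++ B1L)).Nodup := hQ1nd'.sublist (List.sublist_append_right _ _)
    have hp1ch : (k :: (T2 ++ B1L)).Chain' A := by
      have h21 := hQ1ch
      rw [hQ1dec] at h21
      exact (List.isChain_append.mp h21).2.1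
    have hp1l : (k :: (T2 ++ B1L)).getLast? = some v := by
      have h22 := hQ1l
      rw [hQ1dec, getLast?_append_right' (by simp : (k :: (T2 ++ B1L)) ≠ [])] at h22
      exact h22
    have hp1ft : IsPathFT A k v (k :: (T2 ++ B1L)) := ⟨⟨by simp, hp1nd, hp1ch⟩, rfl, hp1l⟩
    -- the last vertex of Q2 that lies on A'
    obtain ⟨C, b, D, hQ2split, hbA', hD⟩ :=
      exists_last_split_s3 (fun w => w ∈ A') Q2 ⟨u', hu'Q2, hu'A'⟩
    have hbP : b ∈ P := hA'P b hbA'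
    have hbB2 : b ∉ B2L := hPB2 b hbP
    have hbv : b ≠ v := fun h => hPv (h ▸ hbP)
    have hbu : b ≠ u := fun h => huA' (h ▸ hbA')
    have hbQ2 : b ∈ Q2 := by rw [hQ2split]; exact List.mem_append_right _ (List.mem_cons_self)
    have hCne : C ≠ [] := by
      intro h
      rw [h, List.nil_append] at hQ2split
      have h23 := hQ2h
      rw [hQ2split] at h23
      simp only [List.head?_cons, Option.some.injEq] at h23
      exact hbu h23
    have huC : u ∈ C := by
      have h24 := hQ2h
      rw [hQ2split, head?_append_left' hCne] at h24
      exact List.mem_of_mem_head? h24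
    have hQ2nd' : (C ++ b :: D).Nodup := by rw [← hQ2split]; exact hQ2nd
    -- the tail after b is long, via the protected zone Z
    have hbZ : b ∉ Z := by
      intro h
      rw [hZB2] at h
      rcases List.mem_append.mp h with h' | h'
      · exact hbB2 h'
      · simp at h'; exact hbv h'
    have hbTake : b ∈ Q2.take (Q2.length - l2) := by
      have h25 : b ∈ Q2.take (Q2.length - l2) ++ Z := by rw [← hZdec]; exact hbQ2
      rcases List.mem_append.mp h25 with h | h
      · exact h
      · exact absurd h hbZ
    obtain ⟨S1, S2, hS⟩ := List.append_of_mem hbTake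
    have hQ2split2 : Q2 = S1 ++ b :: (S2 ++ Z) := by
      conv_lhs => rw [hZdec]
      rw [hS]
      simp
    have heqCD : C ++ b :: D = S1 ++ b :: (S2 ++ Z) := by rw [← hQ2split]; exact hQ2split2
    obtain ⟨hCS, hDS⟩ := nodup_split_unique hQ2nd' heqCD
    have hDlen : l2 ≤ D.length := by rw [hDS, List.length_append, hZlen]; omega
    have hDne : D ≠ [] := by intro h; rw [h] at hDlen; simp at hDlen; omega
    have hbDlast : (b :: D).getLast? = some v := by
      have h26 := hQ2l
      rw [hQ2split, getLast?_append_right' (by simp : (b :: D) ≠ [])] at h26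
      exact h26
    have hDlast : D.getLast? = some v := by
      have h27 : (b :: D) = [b] ++ D := rfl
      rw [h27, getLast?_append_right' hDne] at hbDlast
      exact hbDlast
    have hbDch : (b :: D).Chain' A := by
      have h28 := hQ2ch
      rw [hQ2split] at h28
      exact (List.isChain_append.mp h28).2.1
    have hbDnd : (b :: D).Nodup := hQ2nd'.sublist (List.sublist_append_right _ _)
    have hbDQ2 : ∀ x ∈ b :: D, x ∈ Q2 := by
      intro x hx; rw [hQ2split]; exact List.mem_append_right _ hx
    have hPchA : (Ap ++ k :: A').Chain' A := by rw [← hPdec]; exact hPch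
    have hkA'ch : (k :: A').Chain' A := (List.isChain_append.mp hPchA).2.1
    -- length bookkeeping common to both cases
    have e1 : Q1.length = T1.length + 1 + (T2.length + B1L.length) := by
      rw [hQ1dec]; simp [List.length_append]; omega
    have e2 : Q2.length = C.length + 1 + D.length := by
      rw [hQ2split]; simp [List.length_append]; omega
    have e3 : P.length = Ap.length + 1 + A'.length := by
      rw [hPdec]; simp [List.length_append]; omega
    have e5 : 1 ≤ T1.length := List.length_pos_iff.mpr hT1ne
    have e6 : 1 ≤ Ap.length := List.length_pos_iff.mpr hApne
    by_cases hbu' : b = u'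
    · -- Case A1 : no vertex of P after k returns to the suffix after u'
      have heq2 : C ++ b :: D = pre1 ++ b :: sufT := by
        rw [← hQ2split, hbu']
        exact hQ2dec
      obtain ⟨hCpre, hDsufT⟩ := nodup_split_unique hQ2nd' heq2
      have hp2ch : ((k :: A') ++ D).Chain' A := by
        refine List.isChain_append.mpr ?_
        refine ⟨hkA'ch, (List.isChain_cons.mp hbDch).2, ?_⟩
        intro x hx y hy
        rw [hkA'l] at hx
        have hxu : u' = x := by simpa using hx
        have hby := (List.isChain_cons.mp hbDch).1 y hy
        rw [← hxu, ← hbu']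
        exact hby
      have hp2nd : ((k :: A') ++ D).Nodup := by
        rw [List.nodup_append']
        refine ⟨hkA'nd, hbDnd.of_cons, ?_⟩
        intro x hx1 hx2
        rcases List.mem_cons.mp hx1 with rfl | hx1'
        · exact hkQ2 (hbDQ2 x (List.mem_cons_of_mem _ hx2))
        · exact hD x hx2 hx1'
      have hp2l : ((k :: A') ++ D).getLast? = some v := by
        rw [getLast?_append_right' hDne]
        exact hDlast
      have hp2ft : IsPathFT A k v ((k :: A') ++ D) := ⟨⟨by simp, hp2nd, hp2ch⟩, rfl, hp2l⟩
      have hspin1 : Spind A l1 l2 k v (k :: (T2 ++ B1L)) ((k :: A') ++ D) := by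
        refine ⟨hp1ft, hp2ft, ?_, ?_, ?_, ?_⟩
        · simp only [List.length_cons]; omega
        · simp only [List.length_append, List.length_cons]; omega
        · intro h
          have h29 : u' ∈ (k :: A') ++ D := List.mem_append_left _ (List.mem_cons_of_mem _ hu'A')
          rw [← h] at h29
          have h30 : u' ∈ Q1 := by rw [hQ1dec]; exact List.mem_append_right _ h29
          exact hu'Q1 h30
        · intro w hw1 hw2
          rcases List.mem_cons.mp hw1 with rfl | hw1'
          · exact Or.inl rfl
          · have hwQ1 : w ∈ Q1 := by
              rw [hQ1dec]; exact List.mem_append_right _ (List.mem_cons_of_mem _ hw1')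
            rcases List.mem_append.mp hw2 with hw2' | hw2'
            · rcases List.mem_cons.mp hw2' with rfl | hw2''
              · exact Or.inl rfl
              · exact absurd hwQ1 (hA'Q1 w hw2'')
            · have hwQ2 : w ∈ Q2 := hbDQ2 w (List.mem_cons_of_mem _ hw2')
              rcases hdisj w hwQ1 hwQ2 with rfl | rfl
              · exact absurd hw1 hukE
              · exact Or.inr rfl
      have hge := hmin k v _ _ hspin1
      simp only [List.length_append, List.length_cons] at hge
      have e4 : C.length = l2 - 1 := by rw [hCpre]; exact hpre1len
      omega
    · -- Case A2 : some vertex of P after k returns to the suffix after u'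
      have hu'C : u' ∈ C := by
        have h31 : u' ∈ Q2 := hu'Q2
        rw [hQ2split] at h31
        rcases List.mem_append.mp h31 with h | h
        · exact h
        · rcases List.mem_cons.mp h with h' | h'
          · exact absurd h'.symm hbu'
          · exact absurd hu'A' (hD u' h')
      have hClen : l2 ≤ C.length := by
        by_contra hC
        push_neg at hC
        have hCtake : Q2.take C.length = C := by rw [hQ2split]; exact List.take_left
        have hu'take : u' ∈ Q2.take (l2-1) := by
          have h32 : u' ∈ Q2.take C.length := by rw [hCtake]; exact hu'C
          exact take_subset_take' (by omega) h32
        exact (List.disjoint_take_drop hQ2nd (le_refl (l2-1))) hu'take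
          (by rw [hsufcons]; exact List.mem_cons_self)
      obtain ⟨A1, A2', hA'dec⟩ := List.append_of_mem hbA'
      have hkA'eq : k :: A' = (k :: A1) ++ (b :: A2') := by rw [hA'dec]; rfl
      have hsplit3 := List.isChain_append.mp (hkA'eq ▸ hkA'ch)
      have hp2ch : ((k :: A1) ++ (b :: D)).Chain' A := by
        refine List.isChain_append.mpr ?_
        refine ⟨hsplit3.1, hbDch, ?_⟩
        intro x hx y hy
        have hyb : b = y := by simpa using hy
        rw [← hyb]
        exact hsplit3.2.2 x hx b rfl
      have hA'nd : A'.Nodup := hkA'nd.of_cons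
      have hbA1 : b ∉ A1 := by
        rw [hA'dec] at hA'nd
        exact fun h => (List.nodup_append'.mp hA'nd).2.2 h (List.mem_cons_self)
      have hkA1nd : (k :: A1).Nodup := by
        rw [hkA'eq] at hkA'nd
        exact (List.nodup_append'.mp hkA'nd).1
      have hp2nd : ((k :: A1) ++ (b :: D)).Nodup := by
        rw [List.nodup_append']
        refine ⟨hkA1nd, hbDnd, ?_⟩
        intro x hx1 hx2
        rcases List.mem_cons.mp hx1 with rfl | hx1'
        · exact hkQ2 (hbDQ2 x hx2)
        · rcases List.mem_cons.mp hx2 with rfl | hx2'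
          · exact hbA1 hx1'
          · exact hD x hx2' (by rw [hA'dec]; exact List.mem_append_left _ hx1')
      have hp2l : ((k :: A1) ++ (b :: D)).getLast? = some v := by
        rw [getLast?_append_right' (by simp : (b :: D) ≠ [])]
        exact hbDlast
      have hp2ft : IsPathFT A k v ((k :: A1) ++ (b :: D)) := ⟨⟨by simp, hp2nd, hp2ch⟩, rfl, hp2l⟩
      have hspin1 : Spind A l1 l2 k v (k :: (T2 ++ B1L)) ((k :: A1) ++ (b :: D)) := by
        refine ⟨hp1ft, hp2ft, ?_, ?_, ?_, ?_⟩
        · simp only [List.length_cons]; omega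
        · simp only [List.length_append, List.length_cons]; omega
        · intro h
          have h33 : b ∈ (k :: A1) ++ (b :: D) :=
            List.mem_append_right _ (List.mem_cons_self)
          rw [← h] at h33
          have h34 : b ∈ Q1 := by rw [hQ1dec]; exact List.mem_append_right _ h33
          exact (hA'Q1 b hbA') h34
        · intro w hw1 hw2
          rcases List.mem_cons.mp hw1 with rfl | hw1'
          · exact Or.inl rfl
          · have hwQ1 : w ∈ Q1 := by
              rw [hQ1dec]; exact List.mem_append_right _ (List.mem_cons_of_mem _ hw1')
            rcases List.mem_append.mp hw2 with hw2' | hw2'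
            · rcases List.mem_cons.mp hw2' with rfl | hw2''
              · exact Or.inl rfl
              · exact absurd hwQ1 (hA'Q1 w (by rw [hA'dec]; exact List.mem_append_left _ hw2''))
            · have hwQ2 : w ∈ Q2 := hbDQ2 w hw2'
              rcases hdisj w hwQ1 hwQ2 with rfl | rfl
              · exact absurd hw1 hukE
              · exact Or.inr rfl
      have hge := hmin k v _ _ hspin1
      simp only [List.length_append, List.length_cons] at hge
      have e7 : A'.length = A1.length + 1 + A2'.length := by
        rw [hA'dec]; simp [List.length_append]; omega
      omega
  -- ### Claim B : P avoids the suffix of Q2 strictly after u'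
  have claimB : ∀ z ∈ P, z ∉ sufT := by
    by_contra hB
    push_neg at hB
    obtain ⟨s, hsP, hsT⟩ := hB
    obtain ⟨F, s₀, G, hPdec, hs₀T, hF⟩ := exists_first_split (fun w => w ∈ sufT) P ⟨s, hsP, hsT⟩
    have hs₀P : s₀ ∈ P := by rw [hPdec]; exact List.mem_append_right _ (List.mem_cons_self)
    have hs₀v : s₀ ≠ v := fun h => hPv (h ▸ hs₀P)
    have hs₀B2 : s₀ ∉ B2L := hPB2 s₀ hs₀P
    have hs₀u : s₀ ≠ u := fun h => hutailS (h ▸ hs₀T)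
    have hs₀Q2 : s₀ ∈ Q2 := by
      have h40 : s₀ ∈ Q2.drop l2 := by rw [← hsufTdef]; exact hs₀T
      exact List.drop_subset _ _ h40
    have hFne : F ≠ [] := by
      intro h
      rw [h, List.nil_append] at hPdec
      rw [hPdec] at hPh
      simp only [List.head?_cons, Option.some.injEq] at hPh
      exact hs₀u hPh
    have hPndB : (F ++ s₀ :: G).Nodup := by rw [← hPdec]; exact hPnd
    have huF : u ∈ F := by
      have h41 := hPh
      rw [hPdec, head?_append_left' hFne] at h41
      exact List.mem_of_mem_head? h41
    -- split Q2 at s₀ inside the suffix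
    obtain ⟨t1, t2, htt⟩ := List.append_of_mem hs₀T
    have hQ2s : Q2 = (Q2.take l2 ++ t1) ++ s₀ :: t2 := by
      conv_lhs => rw [← List.take_append_drop l2 Q2]
      rw [← hsufTdef, htt]
      simp
    have hs₀Z : s₀ ∉ Z := by
      intro h
      rw [hZB2] at h
      rcases List.mem_append.mp h with h' | h'
      · exact hs₀B2 h'
      · simp at h'; exact hs₀v h'
    have hs₀Take : s₀ ∈ Q2.take (Q2.length - l2) := by
      have h42 : s₀ ∈ Q2.take (Q2.length - l2) ++ Z := by rw [← hZdec]; exact hs₀Q2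
      rcases List.mem_append.mp h42 with h | h
      · exact h
      · exact absurd h hs₀Z
    obtain ⟨S1, S2, hS⟩ := List.append_of_mem hs₀Take
    have hQ2s2 : Q2 = S1 ++ s₀ :: (S2 ++ Z) := by
      conv_lhs => rw [hZdec]
      rw [hS]
      simp
    have hQ2ndB : ((Q2.take l2 ++ t1) ++ s₀ :: t2).Nodup := by rw [← hQ2s]; exact hQ2nd
    have heqB : (Q2.take l2 ++ t1) ++ s₀ :: t2 = S1 ++ s₀ :: (S2 ++ Z) := by
      rw [← hQ2s]; exact hQ2s2
    obtain ⟨hCB, ht2⟩ := nodup_split_unique hQ2ndB heqB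
    have ht2len : l2 ≤ t2.length := by rw [ht2, List.length_append, hZlen]; omega
    have ht2ne : t2 ≠ [] := by intro h; rw [h] at ht2len; simp at ht2len; omega
    have hst2ch : (s₀ :: t2).Chain' A := by
      have h43 := hQ2ch
      rw [hQ2s] at h43
      exact (List.isChain_append.mp h43).2.1
    have hst2last : (s₀ :: t2).getLast? = some v := by
      have h44 := hQ2l
      rw [hQ2s, getLast?_append_right' (by simp : (s₀ :: t2) ≠ [])] at h44
      exact h44
    have hst2nd : (s₀ :: t2).Nodup := hQ2ndB.sublist (List.sublist_append_right _ _)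
    have hst2Q2 : ∀ x ∈ s₀ :: t2, x ∈ Q2 := by
      intro x hx; rw [hQ2s]; exact List.mem_append_right _ hx
    have hFch : F.Chain' A := by
      have h45 := hPch
      rw [hPdec] at h45
      exact (List.isChain_append.mp h45).1
    have hglue : ∀ x ∈ F.getLast?, ∀ y ∈ (s₀ :: G).head?, A x y := by
      have h46 := hPch
      rw [hPdec] at h46
      exact (List.isChain_append.mp h46).2.2
    have hWch : (F ++ s₀ :: t2).Chain' A := by
      refine List.isChain_append.mpr ?_
      refine ⟨hFch, hst2ch, ?_⟩
      intro x hx y hy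
      have hyb : s₀ = y := by simpa using hy
      rw [← hyb]
      exact hglue x hx s₀ rfl
    have hFnd : F.Nodup := (List.nodup_append'.mp hPndB).1
    have ht2sufT : ∀ x ∈ t2, x ∈ sufT := by
      intro x hx; rw [htt]; exact List.mem_append_right _ (List.mem_cons_of_mem _ hx)
    have hWnd : (F ++ s₀ :: t2).Nodup := by
      rw [List.nodup_append']
      refine ⟨hFnd, hst2nd, ?_⟩
      intro x hx1 hx2
      rcases List.mem_cons.mp hx2 with rfl | hx2'
      · exact (List.nodup_append'.mp hPndB).2.2 hx1 (List.mem_cons_self)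
      · exact hF x hx1 (ht2sufT x hx2')
    have hWh : (F ++ s₀ :: t2).head? = some u := by
      rw [head?_append_left' hFne]
      have h47 := hPh
      rw [hPdec, head?_append_left' hFne] at h47
      exact h47
    have hWl : (F ++ s₀ :: t2).getLast? = some v := by
      rw [getLast?_append_right' (by simp : (s₀ :: t2) ≠ [])]
      exact hst2last
    have hWne : (F ++ s₀ :: t2) ≠ [] := by simp
    have hWft : IsPathFT A u v (F ++ s₀ :: t2) := ⟨⟨hWne, hWnd, hWch⟩, hWh, hWl⟩
    have hs₀Q1 : s₀ ∉ Q1 := by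
      intro h
      exact hs₀u (claimA s₀ hs₀P h)
    have hspin1 : Spind A l1 l2 u v Q1 (F ++ s₀ :: t2) := by
      refine ⟨⟨⟨hQ1ne, hQ1nd, hQ1ch⟩, hQ1h, hQ1l⟩, hWft, hlen1, ?_, ?_, ?_⟩
      · simp only [List.length_append, List.length_cons]; omega
      · intro h
        have h48 : s₀ ∈ Q1 := by rw [h]; exact List.mem_append_right _ (List.mem_cons_self)
        exact hs₀Q1 h48
      · intro w hw1 hw2
        rcases List.mem_append.mp hw2 with hw2' | hw2'
        · exact Or.inl (claimA w (by rw [hPdec]; exact List.mem_append_left _ hw2') hw1)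
        · rcases List.mem_cons.mp hw2' with rfl | hw2''
          · exact absurd hw1 hs₀Q1
          · have hwQ2 : w ∈ Q2 := hst2Q2 w (List.mem_cons_of_mem _ hw2'')
            rcases hdisj w hw1 hwQ2 with rfl | rfl
            · exact Or.inl rfl
            · exact Or.inr rfl
    have hge := hmin u v _ _ hspin1
    simp only [List.length_append, List.length_cons] at hge
    have e2 : Q2.length = (Q2.take l2).length + t1.length + 1 + t2.length := by
      rw [hQ2s]; simp [List.length_append]; omega
    have e3 : P.length = F.length + 1 + G.length := by
      rw [hPdec]; simp [List.length_append]; omega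
    have etake : (Q2.take l2).length = l2 := by rw [List.length_take]; omega
    omega
  -- ### assemble the final configuration
  refine ⟨u, u', v, Q1, P, u' :: sufT,
    ⟨⟨hQ1ne, hQ1nd, hQ1ch⟩, hQ1h, hQ1l⟩, hlen1,
    ⟨⟨hPne, hPnd, hPch⟩, hPh, hPl⟩, hPlen, ?_, ?_, ?_, ?_, ?_⟩
  · rw [hPT]; exact hXR
  · refine ⟨⟨by simp, hsufnd, ?_⟩, rfl, ?_⟩
    · have h50 := hQ2ch
      rw [hQ2dec] at h50
      exact (List.isChain_append.mp h50).2.1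
    · have h51 := hQ2l
      rw [hQ2dec, getLast?_append_right' (by simp : (u' :: sufT) ≠ [])] at h51
      exact h51
  · ext x
    simp only [vset, Set.mem_inter_iff, Set.mem_setOf_eq, Set.mem_singleton_iff]
    constructor
    · rintro ⟨hx1, hx2⟩
      exact claimA x hx2 hx1
    · rintro rfl
      exact ⟨huQ1, huP⟩
  · ext x
    simp only [vset, Set.mem_inter_iff, Set.mem_setOf_eq, Set.mem_singleton_iff]
    constructor
    · rintro ⟨hx1, hx2⟩
      rcases List.mem_cons.mp hx2 with rfl | hx2'
      · exact absurd hx1 hu'Q1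
      · have hxQ2 : x ∈ Q2 := by
          rw [hQ2dec]; exact List.mem_append_right _ (List.mem_cons_of_mem _ hx2')
        rcases hdisj x hx1 hxQ2 with rfl | rfl
        · exact absurd hx2' hutailS
        · rfl
    · rintro rfl
      exact ⟨hvQ1, List.mem_cons_of_mem _ hvtailS⟩
  · ext x
    simp only [vset, Set.mem_inter_iff, Set.mem_setOf_eq, Set.mem_singleton_iff]
    constructor
    · rintro ⟨hx1, hx2⟩
      rcases List.mem_cons.mp hx2 with rfl | hx2'
      · rfl
      · exact absurd hx2' (claimB x hx1)
    · rintro rfl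
      exact ⟨hu'P, List.mem_cons_self⟩

theorem stmt3 {V : Type*} [DecidableEq V] (A : V → V → Prop)
    (harc : ∀ a b, A a b → a ≠ b)
    (l1 l2 : ℕ) (h1 : 1 ≤ l1) (h12 : l1 ≤ l2) (h2 : 2 ≤ l2)
    (R : V → V → Set (Finset V))
    (hR : ∀ u u', Represents (l1 + l2 - 1) (R u u') (PathFam A u u' l2))
    (hshort : ¬ ShortSpindle A l1 l2)
    (hspin : ContainsSpindle2 A l1 l2) :
    ∃ (u u' v : V) (p1 p2u p2v : List V),
      IsPathFT A u v p1 ∧ l1 + 1 ≤ p1.length ∧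
      IsPathFT A u u' p2u ∧ p2u.length = l2 ∧ p2u.toFinset ∈ R u u' ∧
      IsPathFT A u' v p2v ∧
      vset p1 ∩ vset p2u = {u} ∧
      vset p1 ∩ vset p2v = {v} ∧
      vset p2u ∩ vset p2v = {u'} := by
  classical
  have hex : ∃ m : ℕ, ∃ x y p1 p2, Spind A l1 l2 x y p1 p2 ∧ p1.length + p2.length = m := by
    obtain ⟨x, y, p1, p2, a1, a2, a3, a4, a5, a6⟩ := hspin
    exact ⟨p1.length + p2.length, x, y, p1, p2, ⟨a1, a2, a3, a4, a5, a6⟩, rfl⟩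
  obtain ⟨x, y, p1, p2, hsp, hsum⟩ := Nat.find_spec hex
  have hmin : ∀ x' y' q1 q2, Spind A l1 l2 x' y' q1 q2 →
      Nat.find hex ≤ q1.length + q2.length :=
    fun x' y' q1 q2 hs => Nat.find_min' hex ⟨x', y', q1, q2, hs, rfl⟩
  by_cases hb : 2 * l2 + 1 ≤ p2.length
  · exact spindle_core A l1 l2 h1 h12 h2 R hR (Nat.find hex) hmin x y p1 p2 hsp hsum hb
  · by_cases ha : 2 * l2 + 1 ≤ p1.length
    · have hsp' : Spind A l1 l2 x y p2 p1 := by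
        obtain ⟨a1, a2, a3, a4, a5, a6⟩ := hsp
        exact ⟨a2, a1, by omega, by omega, fun h => a5 h.symm, fun z hz2 hz1 => a6 z hz1 hz2⟩
      exact spindle_core A l1 l2 h1 h12 h2 R hR (Nat.find hex) hmin x y p2 p1 hsp' (by omega) ha
    · exact absurd ⟨x, y, p1, p2, hsp.1, hsp.2.1, hsp.2.2.1, hsp.2.2.2.1, hsp.2.2.2.2.1,
        hsp.2.2.2.2.2, by omega, by omega⟩ hshort
end

section
/- Let G be a digraph and let X,Y ⊆ V(G) be such that no arc of G has its head in X∖Y and no arc of G has its tail in Y∖X, and let G' be the associated auxiliary undirected graph. Then, for every nonnegative integer k, the digraph G contains k pairwise vertex-disjoint nontrivial directed paths from X to Y if and only if G' has a matching of size k + |V(G)∖(X∪Y)|. -/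
/-- Base (oriented) relation of the auxiliary undirected graph `G'` associated with the
digraph `A` and the sets `X, Y`.  Vertices: `Sum.inl v` is the original vertex `v`, and
`Sum.inr v` is the copy `v'` of `v` (used only for `v ∉ X ∪ Y`).
Edges: `{v, v'}` for every `v ∉ X ∪ Y`; for every arc `(u,v)`, the edge `{u, v}` if
`v ∈ X ∪ Y` and the edge `{u, v'}` otherwise. -/
def auxRel {V : Type*} [DecidableEq V] (A : V → V → Prop) (X Y : Finset V) :
    V ⊕ V → V ⊕ V → Prop
  | .inl u, .inl w => A u w ∧ w ∈ X ∪ Y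
  | .inl u, .inr w => (A u w ∧ w ∉ X ∪ Y) ∨ (u = w ∧ u ∉ X ∪ Y)
  | .inr _, _ => False

/-- Adjacency (symmetrized) in the auxiliary undirected graph `G'`. -/
def auxAdj {V : Type*} [DecidableEq V] (A : V → V → Prop) (X Y : Finset V)
    (a b : V ⊕ V) : Prop :=
  auxRel A X Y a b ∨ auxRel A X Y b a

/-- `M` is a matching of the undirected graph with adjacency `Adj`: a set of edges
(each recorded once, as an ordered pair of distinct adjacent vertices) that are
pairwise disjoint. -/
def IsMatching {W : Type*} (Adj : W → W → Prop) (M : Finset (W × W)) : Prop :=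
  (∀ e ∈ M, Adj e.1 e.2 ∧ e.1 ≠ e.2) ∧
  ∀ e ∈ M, ∀ f ∈ M, e ≠ f →
    e.1 ≠ f.1 ∧ e.1 ≠ f.2 ∧ e.2 ≠ f.1 ∧ e.2 ≠ f.2

set_option linter.unusedSectionVars false
set_option linter.unnecessarySimpa false

namespace Aux

/-! ### general matching lemmas -/

variable {W : Type*} [DecidableEq W] {Adj : W → W → Prop} {M : Finset (W × W)}

def satSet (M : Finset (W × W)) : Finset W := M.biUnion (fun e => {e.1, e.2})

lemma mem_satSet {w : W} : w ∈ satSet M ↔ ∃ e ∈ M, e.1 = w ∨ e.2 = w := by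
  simp [satSet, eq_comm]

lemma card_satSet (hM : IsMatching Adj M) : (satSet M).card = 2 * M.card := by
  rw [satSet, Finset.card_biUnion]
  · rw [Finset.sum_congr rfl (g := fun _ => 2), Finset.sum_const, smul_eq_mul, mul_comm]
    intro e he
    rw [Finset.card_insert_of_notMem (by simp [(hM.1 e he).2]), Finset.card_singleton]
  · intro e he f hf hef
    obtain ⟨h1, h2, h3, h4⟩ := hM.2 e he f hf hef
    simp only [Finset.disjoint_left, Finset.mem_insert, Finset.mem_singleton]
    rintro a (rfl | rfl) (h | h) <;> simp_all

lemma eq_of_fst (hM : IsMatching Adj M) {e f : W × W} (he : e ∈ M) (hf : f ∈ M)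
    (h : e.1 = f.1) : e = f := by
  by_contra hne; exact (hM.2 e he f hf hne).1 h

lemma eq_of_snd (hM : IsMatching Adj M) {e f : W × W} (he : e ∈ M) (hf : f ∈ M)
    (h : e.2 = f.2) : e = f := by
  by_contra hne; exact (hM.2 e he f hf hne).2.2.2 h

lemma fst_ne_snd (hM : IsMatching Adj M) {e f : W × W} (he : e ∈ M) (hf : f ∈ M)
    (h : e.1 = f.2) : False := by
  by_cases hef : e = f
  · exact (hM.1 e he).2 (hef ▸ h)
  · exact (hM.2 e he f hf hef).2.1 h

end Aux

namespace Aux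

section Digraph

variable {V : Type*} [Fintype V] [DecidableEq V]
variable (A : V → V → Prop) (X Y : Finset V) (M : Finset ((V ⊕ V) × (V ⊕ V)))

def contR (u w : V) : Prop :=
  ∃ e ∈ M, e.1 = Sum.inl u ∧ e.2 = Sum.inr w ∧ A u w

def finR (u w : V) : Prop :=
  ∃ e ∈ M, e.1 = Sum.inl u ∧ e.2 = Sum.inl w ∧ A u w

def selfER (u : V) : Prop := ((Sum.inl u, Sum.inr u) : (V ⊕ V) × (V ⊕ V)) ∈ M

noncomputable def stepF (u : V) : Option (V × Bool) :=
  if h : ∃ e, e ∈ M ∧ e.1 = Sum.inl u then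
    match h.choose.2 with
    | Sum.inl w => some (w, true)
    | Sum.inr w => some (w, false)
  else none

noncomputable def chain : ℕ → V → List V
  | 0, _u => [_u]
  | (fuel+1), u =>
    match stepF M u with
    | none => [u]
    | some (w, true) => [u, w]
    | some (w, false) => u :: chain fuel w

variable {A X Y M}

lemma classify (hor : ∀ e ∈ M, auxRel A X Y e.1 e.2) {e : (V ⊕ V) × (V ⊕ V)}
    (he : e ∈ M) : ∃ u, e.1 = Sum.inl u ∧
      ((∃ w, e.2 = Sum.inl w ∧ A u w ∧ w ∈ X ∪ Y) ∨
       (∃ w, e.2 = Sum.inr w ∧ A u w ∧ w ∉ X ∪ Y) ∨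
       (e.2 = Sum.inr u ∧ u ∉ X ∪ Y)) := by
  have h := hor e he
  obtain ⟨a, b⟩ := e
  cases a with
  | inr a => exact absurd h (by simp [auxRel])
  | inl a =>
    cases b with
    | inl b => exact ⟨a, rfl, Or.inl ⟨b, rfl, h⟩⟩
    | inr b =>
      refine ⟨a, rfl, ?_⟩
      rcases h with h | ⟨rfl, h⟩
      · exact Or.inr (Or.inl ⟨b, rfl, h⟩)
      · exact Or.inr (Or.inr ⟨rfl, h⟩)

section Specs

variable (hM : IsMatching (auxAdj A X Y) M) (hor : ∀ e ∈ M, auxRel A X Y e.1 e.2)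
    (harc : ∀ a b, A a b → a ≠ b)

include hor harc in
lemma contR_not_mem {u w : V} (h : contR A M u w) : w ∉ X ∪ Y := by
  obtain ⟨e, he, h1, h2, h3⟩ := h
  obtain ⟨u', hu', hcls⟩ := classify hor he
  rcases hcls with ⟨w', hw', _, _⟩ | ⟨w', hw', _, hw2⟩ | ⟨hw', hne⟩
  · rw [h2] at hw'; cases hw'
  · rw [h2] at hw'; injection hw' with hww; subst hww; exact hw2
  · rw [h2] at hw'; injection hw' with hww
    rw [h1] at hu'; injection hu' with huu
    subst hww; subst huu
    exact absurd rfl (harc _ _ h3)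

include harc in
lemma contR_ne {u w : V} (h : contR A M u w) : u ≠ w := by
  obtain ⟨e, _, _, _, h3⟩ := h; exact harc _ _ h3

include harc in
lemma finR_ne {u w : V} (h : finR A M u w) : u ≠ w := by
  obtain ⟨e, _, _, _, h3⟩ := h; exact harc _ _ h3

include hor in
lemma finR_mem {u w : V} (h : finR A M u w) : w ∈ X ∪ Y := by
  obtain ⟨e, he, h1, h2, _⟩ := h
  obtain ⟨u', hu', hcls⟩ := classify hor he
  rcases hcls with ⟨w', hw', _, hw2⟩ | ⟨w', hw', _, _⟩ | ⟨hw', _⟩ <;> rw [h2] at hw'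
  · injection hw' with hww; subst hww; exact hw2
  · cases hw'
  · cases hw'

include hM in
lemma contR_unique_left {p q u : V} (h1 : contR A M p u) (h2 : contR A M q u) : p = q := by
  obtain ⟨e, he, he1, he2, _⟩ := h1
  obtain ⟨f, hf, hf1, hf2, _⟩ := h2
  have := eq_of_snd hM he hf (he2.trans hf2.symm)
  rw [this] at he1; rw [hf1] at he1; injection he1 with h; exact h.symm

include hM in
lemma contR_unique_right {u p q : V} (h1 : contR A M u p) (h2 : contR A M u q) : p = q := by
  obtain ⟨e, he, he1, he2, _⟩ := h1
  obtain ⟨f, hf, hf1, hf2, _⟩ := h2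
  have := eq_of_fst hM he hf (he1.trans hf1.symm)
  rw [this] at he2; rw [hf2] at he2; injection he2 with h; exact h.symm

include hM in
lemma finR_unique_left {p q u : V} (h1 : finR A M p u) (h2 : finR A M q u) : p = q := by
  obtain ⟨e, he, he1, he2, _⟩ := h1
  obtain ⟨f, hf, hf1, hf2, _⟩ := h2
  have := eq_of_snd hM he hf (he2.trans hf2.symm)
  rw [this] at he1; rw [hf1] at he1; injection he1 with h; exact h.symm

include hM in
lemma out_in_conflict {u : V} (h1 : ∃ e ∈ M, e.1 = Sum.inl u)
    (h2 : ∃ e ∈ M, e.2 = Sum.inl u) : False := by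
  obtain ⟨e, he, he1⟩ := h1
  obtain ⟨f, hf, hf2⟩ := h2
  exact fst_ne_snd hM he hf (he1.trans hf2.symm)

lemma stepF_none {u : V} (h : stepF M u = none) : ∀ e ∈ M, e.1 ≠ Sum.inl u := by
  intro e he heq
  unfold stepF at h
  rw [dif_pos ⟨e, he, heq⟩] at h
  rcases hc : (Exists.choose (⟨e, he, heq⟩ : ∃ e, e ∈ M ∧ e.1 = Sum.inl u)).2 with w | w <;>
    rw [hc] at h <;> simp at h

include hM in
lemma stepF_eq {e : (V ⊕ V) × (V ⊕ V)} {u : V} (he : e ∈ M) (h1 : e.1 = Sum.inl u) :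
    stepF M u = (match e.2 with
      | Sum.inl w => some (w, true)
      | Sum.inr w => some (w, false)) := by
  have hex : ∃ e, e ∈ M ∧ e.1 = Sum.inl u := ⟨e, he, h1⟩
  have hch : hex.choose = e :=
    eq_of_fst hM hex.choose_spec.1 he (hex.choose_spec.2.trans h1.symm)
  unfold stepF
  rw [dif_pos hex, hch]

include hM in
lemma finR_stepF {u w : V} (h : finR A M u w) : stepF M u = some (w, true) := by
  obtain ⟨e, he, h1, h2, _⟩ := h
  rw [stepF_eq hM he h1, h2]

include hM in
lemma contR_stepF {u w : V} (h : contR A M u w) : stepF M u = some (w, false) := by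
  obtain ⟨e, he, h1, h2, _⟩ := h
  rw [stepF_eq hM he h1, h2]

include hor in
lemma stepF_true {u w : V} (h : stepF M u = some (w, true)) : finR A M u w := by
  unfold stepF at h
  by_cases hex : ∃ e, e ∈ M ∧ e.1 = Sum.inl u
  · rw [dif_pos hex] at h
    obtain ⟨hmem, h1⟩ := hex.choose_spec
    obtain ⟨u', hu', hcls⟩ := classify hor hmem
    obtain rfl : u' = u := by rw [h1] at hu'; injection hu' with hq; exact hq.symm
    rcases hcls with ⟨w', hw', hA, _⟩ | ⟨w', hw', _, _⟩ | ⟨hw', _⟩ <;> rw [hw'] at h <;>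
        simp at h
    obtain ⟨rfl, -⟩ := h
    exact ⟨hex.choose, hmem, h1, hw', hA⟩
  · rw [dif_neg hex] at h; cases h

include hor in
lemma stepF_false {u w : V} (h : stepF M u = some (w, false)) :
    contR A M u w ∨ (w = u ∧ selfER M u) := by
  unfold stepF at h
  by_cases hex : ∃ e, e ∈ M ∧ e.1 = Sum.inl u
  · rw [dif_pos hex] at h
    obtain ⟨hmem, h1⟩ := hex.choose_spec
    obtain ⟨u', hu', hcls⟩ := classify hor hmem
    obtain rfl : u' = u := by rw [h1] at hu'; injection hu' with hq; exact hq.symm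
    rcases hcls with ⟨w', hw', hA, _⟩ | ⟨w', hw', hA, _⟩ | ⟨hw', _⟩ <;> rw [hw'] at h <;>
        simp at h
    · obtain ⟨rfl, -⟩ := h
      exact Or.inl ⟨hex.choose, hmem, h1, hw', hA⟩
    · subst h
      refine Or.inr ⟨rfl, ?_⟩
      have hc : hex.choose = (Sum.inl u', Sum.inr u') := Prod.ext h1 hw'
      unfold selfER
      rwa [hc] at hmem
  · rw [dif_neg hex] at h; cases h

end Specs

end Digraph

end Aux

namespace Aux

section Chains

variable {V : Type*} [Fintype V] [DecidableEq V]
variable {A : V → V → Prop} {X Y : Finset V} {M : Finset ((V ⊕ V) × (V ⊕ V))}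

local notation "R" => Relation.ReflTransGen (contR A M)

lemma chain_zero (u : V) : chain M 0 u = [u] := rfl

lemma chain_succ_none {u : V} (fuel : ℕ) (h : stepF M u = none) :
    chain M (fuel+1) u = [u] := by simp [chain, h]

lemma chain_succ_true {u w : V} (fuel : ℕ) (h : stepF M u = some (w, true)) :
    chain M (fuel+1) u = [u, w] := by simp [chain, h]

lemma chain_succ_false {u w : V} (fuel : ℕ) (h : stepF M u = some (w, false)) :
    chain M (fuel+1) u = u :: chain M fuel w := by simp [chain, h]

lemma chain_ne_nil (fuel : ℕ) (u : V) : chain M fuel u ≠ [] := by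
  cases fuel with
  | zero => simp [chain_zero]
  | succ fuel =>
    rcases h : stepF M u with _ | ⟨w, _ | _⟩
    · simp [chain_succ_none fuel h]
    · simp [chain_succ_false fuel h]
    · simp [chain_succ_true fuel h]

lemma chain_head (fuel : ℕ) (u : V) : (chain M fuel u).head? = some u := by
  cases fuel with
  | zero => simp [chain_zero]
  | succ fuel =>
    rcases h : stepF M u with _ | ⟨w, _ | _⟩
    · simp [chain_succ_none fuel h]
    · simp [chain_succ_false fuel h]
    · simp [chain_succ_true fuel h]

lemma chain_mem_self (fuel : ℕ) (u : V) : u ∈ chain M fuel u := by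
  have h := chain_head (M := M) fuel u
  rcases hc : chain M fuel u with _ | ⟨a, l⟩
  · exact absurd hc (chain_ne_nil fuel u)
  · rw [hc] at h; simp at h; simp [h]

variable (hM : IsMatching (auxAdj A X Y) M) (hor : ∀ e ∈ M, auxRel A X Y e.1 e.2)
    (harc : ∀ a b, A a b → a ≠ b)

include hM hor harc in
lemma chain_nodup_avoid : ∀ (fuel : ℕ) (u : V) (forb : Finset V),
    (∀ x ∈ forb, ¬ Relation.ReflTransGen (contR A M) u x) →
    (∀ x ∈ forb, ∀ w, Relation.ReflTransGen (contR A M) u w → ¬ finR A M w x) →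
    (∀ v, Relation.ReflTransGen (contR A M) u v → ¬ selfER M v) →
    (∀ p, contR A M p u → p ∈ forb) →
    (chain M fuel u).Nodup ∧ ∀ x ∈ forb, x ∉ chain M fuel u := by
  intro fuel
  induction fuel with
  | zero =>
    intro u forb Ha _ _ _
    refine ⟨by simp [chain_zero], fun x hx => ?_⟩
    simp only [chain_zero, List.mem_singleton]
    intro hxe; exact Ha x hx (hxe ▸ Relation.ReflTransGen.refl)
  | succ fuel IH =>
    intro u forb Ha Hb Hc Hd
    rcases h : stepF M u with _ | ⟨w, b⟩
    · rw [chain_succ_none fuel h]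
      refine ⟨by simp, fun x hx => ?_⟩
      simp only [List.mem_singleton]
      intro hxe; exact Ha x hx (hxe ▸ Relation.ReflTransGen.refl)
    · cases b with
      | true =>
        have hfin := stepF_true hor h
        rw [chain_succ_true fuel h]
        refine ⟨by simp [finR_ne harc hfin], fun x hx => ?_⟩
        simp only [List.mem_cons, List.mem_singleton, List.not_mem_nil, or_false]
        rintro (rfl | rfl)
        · exact Ha x hx Relation.ReflTransGen.refl
        · exact Hb x hx u Relation.ReflTransGen.refl hfin
      | false =>
        rcases stepF_false hor h with hcont | ⟨rfl, hself⟩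
        · rw [chain_succ_false fuel h]
          have h' := IH w (insert u forb) ?_ ?_ ?_ ?_
          · obtain ⟨hnd, havoid⟩ := h'
            constructor
            · exact List.nodup_cons.2 ⟨havoid u (Finset.mem_insert_self u forb), hnd⟩
            · intro x hx
              simp only [List.mem_cons]
              rintro (rfl | hmem)
              · exact Ha x hx Relation.ReflTransGen.refl
              · exact havoid x (Finset.mem_insert_of_mem hx) hmem
          · intro x hx hRwx
            rcases Finset.mem_insert.1 hx with rfl | hx'
            · rcases hRwx.cases_tail with heq | ⟨c, hRwc, hcu⟩
              · exact contR_ne harc hcont (heq ▸ rfl)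
              · exact Ha c (Hd c hcu) (Relation.ReflTransGen.head hcont hRwc)
            · exact Ha x hx' (Relation.ReflTransGen.head hcont hRwx)
          · intro x hx w' hRww' hfin
            rcases Finset.mem_insert.1 hx with rfl | hx'
            · obtain ⟨e, he, he1, -, -⟩ := hcont
              obtain ⟨f, hf, -, hf2, -⟩ := hfin
              exact out_in_conflict hM ⟨e, he, he1⟩ ⟨f, hf, hf2⟩
            · exact Hb x hx' w' (Relation.ReflTransGen.head hcont hRww') hfin
          · intro v hRwv
            exact Hc v (Relation.ReflTransGen.head hcont hRwv)
          · intro p hp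
            have : p = u := contR_unique_left hM hp hcont
            exact this ▸ Finset.mem_insert_self u forb
        · exact absurd hself (Hc _ Relation.ReflTransGen.refl)

include hM hor harc in
lemma chain_chain' : ∀ (fuel : ℕ) (u : V),
    (∀ v, Relation.ReflTransGen (contR A M) u v → ¬ selfER M v) →
    (chain M fuel u).Chain' A := by
  intro fuel
  induction fuel with
  | zero => intro u _; simp [chain_zero, List.Chain', List.isChain_singleton]
  | succ fuel IH =>
    intro u Hc
    rcases h : stepF M u with _ | ⟨w, b⟩
    · simp [chain_succ_none fuel h, List.Chain', List.isChain_singleton]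
    · cases b with
      | true =>
        have hfin := stepF_true hor h
        obtain ⟨e, _, _, _, hA⟩ := hfin
        simp [chain_succ_true fuel h, hA, List.Chain', List.isChain_pair]
      | false =>
        rcases stepF_false hor h with hcont | ⟨rfl, hself⟩
        · rw [chain_succ_false fuel h]
          refine List.isChain_cons.2 ⟨?_, IH w ?_⟩
          · intro y hy
            rw [chain_head fuel w] at hy
            obtain ⟨e, _, _, _, hA⟩ := hcont
            simp at hy; rwa [← hy]
          · intro v hRwv
            exact Hc v (Relation.ReflTransGen.head hcont hRwv)
        · exact absurd hself (Hc _ Relation.ReflTransGen.refl)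

include hM hor harc in
lemma chain_mem_cases : ∀ (fuel : ℕ) (u : V),
    (∀ v, Relation.ReflTransGen (contR A M) u v → ¬ selfER M v) →
    ∀ v ∈ chain M fuel u,
      Relation.ReflTransGen (contR A M) u v ∨
      ∃ w', Relation.ReflTransGen (contR A M) u w' ∧ finR A M w' v := by
  intro fuel
  induction fuel with
  | zero =>
    intro u _ v hv
    simp only [chain_zero, List.mem_singleton] at hv
    exact Or.inl (hv ▸ Relation.ReflTransGen.refl)
  | succ fuel IH =>
    intro u Hc v hv
    rcases h : stepF M u with _ | ⟨w, b⟩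
    · rw [chain_succ_none fuel h] at hv
      simp only [List.mem_singleton] at hv
      exact Or.inl (hv ▸ Relation.ReflTransGen.refl)
    · cases b with
      | true =>
        have hfin := stepF_true hor h
        rw [chain_succ_true fuel h] at hv
        simp only [List.mem_cons, List.mem_singleton, List.not_mem_nil, or_false] at hv
        rcases hv with rfl | rfl
        · exact Or.inl Relation.ReflTransGen.refl
        · exact Or.inr ⟨u, Relation.ReflTransGen.refl, hfin⟩
      | false =>
        rcases stepF_false hor h with hcont | ⟨rfl, hself⟩
        · rw [chain_succ_false fuel h] at hv
          simp only [List.mem_cons] at hv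
          rcases hv with rfl | hv
          · exact Or.inl Relation.ReflTransGen.refl
          · rcases IH w (fun v hRwv => Hc v (Relation.ReflTransGen.head hcont hRwv)) v hv with
              hR | ⟨w', hR, hfin⟩
            · exact Or.inl (Relation.ReflTransGen.head hcont hR)
            · exact Or.inr ⟨w', Relation.ReflTransGen.head hcont hR, hfin⟩
        · exact absurd hself (Hc _ Relation.ReflTransGen.refl)

include hor in
lemma chain_outcome : ∀ (fuel : ℕ) (u : V), (chain M fuel u).length ≤ fuel →
    ∃ z, (chain M fuel u).getLast? = some z ∧
      ((∃ w', finR A M w' z) ∨ (∀ e ∈ M, e.1 ≠ Sum.inl z)) := by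
  intro fuel
  induction fuel with
  | zero => intro u hlen; simp [chain_zero] at hlen
  | succ fuel IH =>
    intro u hlen
    rcases h : stepF M u with _ | ⟨w, b⟩
    · rw [chain_succ_none fuel h]
      exact ⟨u, rfl, Or.inr (stepF_none h)⟩
    · cases b with
      | true =>
        rw [chain_succ_true fuel h]
        exact ⟨w, rfl, Or.inl ⟨u, stepF_true hor h⟩⟩
      | false =>
        rw [chain_succ_false fuel h] at hlen ⊢
        have hlen' : (chain M fuel w).length ≤ fuel := by
          simp only [List.length_cons] at hlen; omega
        obtain ⟨z, hz, hcase⟩ := IH w hlen'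
        refine ⟨z, ?_, hcase⟩
        rcases hc : chain M fuel w with _ | ⟨a, l⟩
        · exact absurd hc (chain_ne_nil fuel w)
        · rw [hc] at hz; rw [List.getLast?_cons_cons]; exact hz

include hM in
lemma uniq_start {s s' v : V} (hs : ∀ p, ¬ contR A M p s) (hs' : ∀ p, ¬ contR A M p s')
    (h1 : Relation.ReflTransGen (contR A M) s v)
    (h2 : Relation.ReflTransGen (contR A M) s' v) : s = s' := by
  induction h1 with
  | refl =>
    rcases h2.cases_tail with heq | ⟨c, _, hc⟩
    · exact heq
    · exact absurd hc (hs c)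
  | tail _hab hbc ih =>
    rcases h2.cases_tail with heq | ⟨c, hRc, hc⟩
    · exact absurd (heq ▸ hbc) (hs' _)
    · have : c = _ := contR_unique_left hM hc hbc
      exact ih (this ▸ hRc)

end Chains

end Aux

namespace Aux

lemma mem_of_getLast?_eq {α : Type*} {l : List α} {z : α} (h : l.getLast? = some z) :
    z ∈ l := by
  have hne : l ≠ [] := by rintro rfl; simp at h
  rw [List.getLast?_eq_getLast_of_ne_nil hne] at h
  injection h with h
  exact h ▸ List.getLast_mem hne

lemma getLast?_cons_ne {α : Type*} {l : List α} (u : α) (h : l ≠ []) :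
    (u :: l).getLast? = l.getLast? := by
  rcases l with _ | ⟨a, l⟩
  · exact absurd rfl h
  · rw [List.getLast?_cons_cons]

section Main

variable {V : Type*} [Fintype V] [DecidableEq V]
variable {A : V → V → Prop} {X Y : Finset V} {M : Finset ((V ⊕ V) × (V ⊕ V))}

lemma cont_fin_conflict (hM : IsMatching (auxAdj A X Y) M) {u w w' : V}
    (h1 : contR A M u w) (h2 : finR A M u w') : False := by
  obtain ⟨e, he, he1, he2, _⟩ := h1
  obtain ⟨f, hf, hf1, hf2, _⟩ := h2
  have heq := eq_of_fst hM he hf (he1.trans hf1.symm)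
  rw [heq, hf2] at he2
  cases he2

theorem matching_to_paths
    (harc : ∀ a b, A a b → a ≠ b)
    (hX : ∀ a b, A a b → b ∈ X → b ∈ Y) (hY : ∀ a b, A a b → a ∈ Y → a ∈ X)
    (hM : IsMatching (auxAdj A X Y) M) (hor : ∀ e ∈ M, auxRel A X Y e.1 e.2)
    (k : ℕ) (hcard : M.card = k + (Finset.univ \ (X ∪ Y)).card) :
    ∃ P : Fin k → List V,
      (∀ i, ∃ x y, x ∈ X ∧ y ∈ Y ∧ x ≠ y ∧ IsPathFT A x y (P i)) ∧
      (∀ i j, i ≠ j → ∀ v, v ∈ P i → v ∉ P j) := by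
  classical
  set N := Fintype.card V with hN
  -- basic facts
  have hnostart : ∀ s ∈ X ∪ Y, ∀ p, ¬ contR A M p s :=
    fun s hs p hc => contR_not_mem hor harc hc hs
  have hnoself : ∀ s ∈ X ∪ Y, ∀ v, Relation.ReflTransGen (contR A M) s v →
      ¬ selfER M v := by
    intro s hs v hR hself
    rcases hR.cases_tail with heq | ⟨c, _, hc⟩
    · subst heq
      have h := hor _ hself
      rcases h with ⟨hA, _⟩ | ⟨_, hnot⟩
      · exact harc _ _ hA rfl
      · exact hnot hs
    · obtain ⟨e, he, he1, he2, hA⟩ := hc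
      have heq2 := eq_of_snd hM he hself (by rw [he2])
      rw [heq2] at he1
      injection he1 with he1
      rw [he1] at hA
      exact harc _ _ hA rfl
  have hchain_cons : ∀ s : V, (∃ e ∈ M, e.1 = Sum.inl s) →
      ∃ l, l ≠ [] ∧ chain M N s = s :: l := by
    intro s hse
    have hNpos : 0 < N := Fintype.card_pos_iff.2 ⟨s⟩
    obtain ⟨fuel, hfuel⟩ : ∃ f, N = f + 1 := ⟨N - 1, by omega⟩
    rcases hstep : stepF M s with _ | ⟨w, b⟩
    · obtain ⟨e, he, h1⟩ := hse
      exact absurd h1 (stepF_none hstep e he)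
    · cases b with
      | false =>
        rw [hfuel, chain_succ_false fuel hstep]
        exact ⟨_, chain_ne_nil fuel w, rfl⟩
      | true =>
        rw [hfuel, chain_succ_true fuel hstep]
        exact ⟨[w], by simp, rfl⟩
  have hnodup : ∀ s ∈ X ∪ Y, (chain M N s).Nodup := by
    intro s hs
    exact (chain_nodup_avoid hM hor harc N s ∅ (by simp) (by simp) (hnoself s hs)
      (fun p hp => absurd hs (contR_not_mem hor harc hp))).1
  have hdisj : ∀ s ∈ X ∪ Y, ∀ s' ∈ X ∪ Y, (∃ e ∈ M, e.1 = Sum.inl s) →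
      (∃ e ∈ M, e.1 = Sum.inl s') → s ≠ s' →
      ∀ v, v ∈ chain M N s → v ∈ chain M N s' → False := by
    intro s hs s' hs' hse hse' hne v hv hv'
    rcases chain_mem_cases hM hor harc N s (hnoself s hs) v hv with h1 | ⟨w1, hR1, hf1⟩ <;>
      rcases chain_mem_cases hM hor harc N s' (hnoself s' hs') v hv' with h2 | ⟨w2, hR2, hf2⟩
    · exact hne (uniq_start hM (hnostart s hs) (hnostart s' hs') h1 h2)
    · rcases h1.cases_tail with heq | ⟨c, _, hc⟩
      · subst heq
        obtain ⟨f, hf, _, hf2, _⟩ := hf2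
        exact out_in_conflict hM hse ⟨f, hf, hf2⟩
      · exact (contR_not_mem hor harc hc) (finR_mem hor hf2)
    · rcases h2.cases_tail with heq | ⟨c, _, hc⟩
      · subst heq
        obtain ⟨f, hf, _, hf1', _⟩ := hf1
        exact out_in_conflict hM hse' ⟨f, hf, hf1'⟩
      · exact (contR_not_mem hor harc hc) (finR_mem hor hf1)
    · obtain rfl : w1 = w2 := finR_unique_left hM hf1 hf2
      exact hne (uniq_start hM (hnostart s hs) (hnostart s' hs') hR1 hR2)

  -- the sets
  set S : Finset V :=
    Finset.univ.filter (fun s => s ∈ X ∪ Y ∧ ∃ e ∈ M, e.1 = Sum.inl s) with hS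
  set T : Finset V :=
    Finset.univ.filter (fun t => t ∈ X ∪ Y ∧ ∃ e ∈ M, e.2 = Sum.inl t) with hT
  set Scomp : Finset V :=
    S.filter (fun s => ∃ z ∈ X ∪ Y, (chain M N s).getLast? = some z) with hScomp
  set Sdie : Finset V := S \ Scomp with hSdie
  set lastv : V → V := fun s => (chain M N s).getLast (chain_ne_nil N s) with hlastv
  have hlastv_eq : ∀ s z, (chain M N s).getLast? = some z → lastv s = z := by
    intro s z h
    rw [List.getLast?_eq_getLast_of_ne_nil (chain_ne_nil N s)] at h
    injection h
  have hSmem : ∀ s ∈ S, s ∈ X ∪ Y ∧ ∃ e ∈ M, e.1 = Sum.inl s := by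
    intro s hs; simpa [hS] using hs
  have hTmem : ∀ t ∈ T, t ∈ X ∪ Y ∧ ∃ e ∈ M, e.2 = Sum.inl t := by
    intro t ht; simpa [hT] using ht
  have scomp_spec : ∀ s ∈ Scomp, ∃ z, (chain M N s).getLast? = some z ∧ z ∈ X ∪ Y ∧
      z ≠ s ∧ ∃ w', finR A M w' z := by
    intro s hsc
    have hsS : s ∈ S := Finset.mem_of_mem_filter s hsc
    obtain ⟨hsXY, hse⟩ := hSmem s hsS
    obtain ⟨z, hzXY, hzlast⟩ := by
      have := (Finset.mem_filter.1 hsc).2; exact this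
    refine ⟨z, hzlast, hzXY, ?_, ?_⟩
    · obtain ⟨l, hlne, hcons⟩ := hchain_cons s hse
      have hz_mem_l : z ∈ l := by
        have := hzlast
        rw [hcons, getLast?_cons_ne s hlne] at this
        exact mem_of_getLast?_eq this
      have hnd := hnodup s hsXY
      rw [hcons, List.nodup_cons] at hnd
      intro hzs; rw [hzs] at hz_mem_l; exact hnd.1 hz_mem_l
    · have hzchain : z ∈ chain M N s := mem_of_getLast?_eq hzlast
      rcases chain_mem_cases hM hor harc N s (hnoself s hsXY) z hzchain with
        h1 | ⟨w', _, hf⟩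
      · rcases h1.cases_tail with heq | ⟨c, _, hc⟩
        · -- z = s, contradiction with z ≠ s ... need the previous bullet; redo
          exfalso
          obtain ⟨l, hlne, hcons⟩ := hchain_cons s hse
          have hz_mem_l : z ∈ l := by
            have := hzlast
            rw [hcons, getLast?_cons_ne s hlne] at this
            exact mem_of_getLast?_eq this
          have hnd := hnodup s hsXY
          rw [hcons, List.nodup_cons] at hnd
          rw [heq] at hz_mem_l; exact hnd.1 hz_mem_l
        · exact absurd hzXY (contR_not_mem hor harc hc)
      · exact ⟨w', hf⟩
  have sdie_spec : ∀ s ∈ Sdie, ∃ z, (chain M N s).getLast? = some z ∧ z ∉ X ∪ Y ∧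
      Sum.inl z ∉ satSet M := by
    intro s hsd
    obtain ⟨hsS, hsnc⟩ := Finset.mem_sdiff.1 hsd
    obtain ⟨hsXY, hse⟩ := hSmem s hsS
    have hlen : (chain M N s).length ≤ N := (hnodup s hsXY).length_le_card
    obtain ⟨z, hzlast, hcases⟩ := chain_outcome hor N s hlen
    have hznXY : z ∉ X ∪ Y := by
      intro hzXY
      exact hsnc (Finset.mem_filter.2 ⟨hsS, z, hzXY, hzlast⟩)
    rcases hcases with ⟨w', hf⟩ | hnoout
    · exact absurd (finR_mem hor hf) hznXY
    · refine ⟨z, hzlast, hznXY, ?_⟩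
      intro hsat
      rw [mem_satSet] at hsat
      obtain ⟨e, he, h1 | h2⟩ := hsat
      · exact hnoout e he h1
      · obtain ⟨u, _, hcls⟩ := classify hor he
        rcases hcls with ⟨w', hw', _, hw2⟩ | ⟨w', hw', _, _⟩ | ⟨hw', _⟩ <;> rw [h2] at hw'
        · injection hw' with hww; rw [← hww] at hw2; exact hznXY hw2
        · cases hw'
        · cases hw'

  -- backward-trace certificate for unmatched T vertices
  have d2cert : ∀ t ∈ T \ (Scomp.image lastv), ∃ w, w ∉ X ∪ Y ∧
      Sum.inr w ∉ satSet M ∧ (chain M N w).getLast? = some t := by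
    intro t htd
    obtain ⟨htT, htimg⟩ := Finset.mem_sdiff.1 htd
    obtain ⟨htXY, e, he, he2⟩ := hTmem t htT
    -- the edge into t is a fin edge
    obtain ⟨t1, he1, hcls⟩ := classify hor he
    have hfin : finR A M t1 t := by
      rcases hcls with ⟨w', hw', hA, _⟩ | ⟨w', hw', _, _⟩ | ⟨hw', _⟩ <;> rw [he2] at hw'
      · injection hw' with hww; subst hww; exact ⟨e, he, he1, he2, hA⟩
      · cases hw'
      · cases hw'
    -- the backward sequence
    set bstep : V → V := fun u => if h : ∃ p, contR A M p u then h.choose else u with hbstep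
    set b : ℕ → V := fun i => bstep^[i] t1 with hb
    have hb0 : b 0 = t1 := rfl
    have hbsucc : ∀ i, b (i + 1) = bstep (b i) := fun i =>
      Function.iterate_succ_apply' bstep i t1
    have hcont_of : ∀ i, (∃ p, contR A M p (b i)) → contR A M (b (i + 1)) (b i) := by
      intro i h
      rw [hbsucc i, hbstep]
      simp only [dif_pos h]
      exact h.choose_spec
    have hcollapse : ∀ j i, i < j → (∀ l, l < j → ∃ p, contR A M p (b l)) →
        b i = b j → False := by
      intro j
      induction j with
      | zero => omega
      | succ j IHj =>
        intro i hij hall heq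
        rcases Nat.eq_zero_or_pos i with rfl | hipos
        · -- b 0 = t1 = b (j+1), and contR (b (j+1)) (b j)
          have hc : contR A M (b (j + 1)) (b j) := hcont_of j (hall j (by omega))
          rw [← heq, hb0] at hc
          exact cont_fin_conflict hM hc hfin
        · obtain ⟨i', rfl⟩ : ∃ i', i = i' + 1 := ⟨i - 1, by omega⟩
          have hc1 : contR A M (b (i' + 1)) (b i') := hcont_of i' (hall i' (by omega))
          have hc2 : contR A M (b (j + 1)) (b j) := hcont_of j (hall j (by omega))
          rw [heq] at hc1
          have : b i' = b j := contR_unique_right hM hc1 hc2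
          exact IHj i' (by omega) (fun l hl => hall l (by omega)) this
    have hexm : ∃ m, ¬ ∃ p, contR A M p (b m) := by
      by_contra hno
      push_neg at hno
      have hinj : Function.Injective b := by
        intro i j heq
        by_contra hne
        rcases Nat.lt_or_ge i j with h | h
        · exact hcollapse j i h (fun l _ => hno l) heq
        · have : j < i := by omega
          exact hcollapse i j this (fun l _ => hno l) heq.symm
      obtain ⟨i, j, hne, heq⟩ := Finite.exists_ne_map_eq_of_infinite b
      exact hne (hinj heq)
    set m := Nat.find hexm with hm
    have hmspec : ¬ ∃ p, contR A M p (b m) := Nat.find_spec hexm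
    have hmmin : ∀ i, i < m → ∃ p, contR A M p (b i) := fun i hi =>
      not_not.1 (Nat.find_min hexm hi)
    -- m + 1 ≤ N
    have hmN : m + 1 ≤ N := by
      have hinj : Function.Injective (fun i : Fin (m + 1) => b i.1) := by
        intro i j heq
        by_contra hne
        have hij : i.1 ≠ j.1 := fun h => hne (Fin.ext h)
        rcases Nat.lt_or_ge i.1 j.1 with h | h
        · exact hcollapse j.1 i.1 h (fun l hl => hmmin l (by omega)) heq
        · have : j.1 < i.1 := by omega
          exact hcollapse i.1 j.1 this (fun l hl => hmmin l (by omega)) heq.symm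
      have := Fintype.card_le_of_injective _ hinj
      simpa using this
    -- forward following: the chain from b i ends at t
    have hfollow : ∀ i, i ≤ m → ∀ fuel, i + 1 ≤ fuel →
        (chain M fuel (b i)).getLast? = some t := by
      intro i
      induction i with
      | zero =>
        intro _ fuel hfuel
        obtain ⟨f, rfl⟩ : ∃ f, fuel = f + 1 := ⟨fuel - 1, by omega⟩
        rw [hb0, chain_succ_true f (finR_stepF hM hfin)]
        rfl
      | succ i IHi =>
        intro him fuel hfuel
        obtain ⟨f, rfl⟩ : ∃ f, fuel = f + 1 := ⟨fuel - 1, by omega⟩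
        have hc : contR A M (b (i + 1)) (b i) := hcont_of i (hmmin i (by omega))
        rw [chain_succ_false f (contR_stepF hM hc)]
        rw [getLast?_cons_ne _ (chain_ne_nil f (b i))]
        exact IHi (by omega) f (by omega)
    have hlast : (chain M N (b m)).getLast? = some t := hfollow m le_rfl N hmN
    -- b m has an out-edge
    have hout : ∃ e ∈ M, e.1 = Sum.inl (b m) := by
      rcases Nat.eq_zero_or_pos m with hm0 | hmpos
      · obtain ⟨f, hf, hf1, _, _⟩ := hfin
        rw [hm0, hb0]
        exact ⟨f, hf, hf1⟩
      · obtain ⟨m', hm'⟩ : ∃ m', m = m' + 1 := ⟨m - 1, by omega⟩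
        obtain ⟨f, hf, hf1, _, _⟩ := hcont_of m' (hmmin m' (by omega))
        rw [hm']
        exact ⟨f, hf, hf1⟩
    -- b m is not in X ∪ Y
    have hbmXY : b m ∉ X ∪ Y := by
      intro hmem
      have hbmS : b m ∈ S := by
        rw [hS]; exact Finset.mem_filter.2 ⟨Finset.mem_univ _, hmem, hout⟩
      have hbmScomp : b m ∈ Scomp := by
        rw [hScomp]
        exact Finset.mem_filter.2 ⟨hbmS, t, htXY, hlast⟩
      exact htimg (Finset.mem_image.2 ⟨b m, hbmScomp, hlastv_eq _ _ hlast⟩)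
    refine ⟨b m, hbmXY, ?_, hlast⟩
    -- inr (b m) is unsaturated
    intro hsat
    rw [mem_satSet] at hsat
    obtain ⟨e', he', h1 | h2⟩ := hsat
    · obtain ⟨u, hu, _⟩ := classify hor he'
      rw [h1] at hu; cases hu
    · obtain ⟨u, hu1, hcls'⟩ := classify hor he'
      rcases hcls' with ⟨w', hw', _, _⟩ | ⟨w', hw', hA, _⟩ | ⟨hw', _⟩ <;> rw [h2] at hw'
      · cases hw'
      · injection hw' with hww; subst hww
        exact hmspec ⟨u, e', he', hu1, h2, hA⟩
      · injection hw' with hww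
        -- e' = (inl (b m), inr (b m)), conflicting with the out-edge of b m
        obtain ⟨f, hf, hf1⟩ := hout
        rw [← hww] at hu1
        have hef := eq_of_fst hM he' hf (hu1.trans hf1.symm)
        rcases Nat.eq_zero_or_pos m with hm0 | hmpos
        · obtain ⟨f', hf', hf1', hf2', _⟩ := hfin
          have hff : f = f' := eq_of_fst hM hf hf' (by rw [hf1, hm0, hb0, hf1'])
          rw [hef, hff, hf2'] at h2
          cases h2
        · obtain ⟨m', hm'⟩ : ∃ m', m = m' + 1 := ⟨m - 1, by omega⟩
          have hc := hcont_of m' (hmmin m' (by omega))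
          obtain ⟨f', hf', hf1', hf2', hA'⟩ := hc
          have hff : f = f' := eq_of_fst hM hf hf' (by rw [hf1, hm', hf1'])
          rw [hef, hff, hf2', hm'] at h2
          injection h2 with h2
          exact (harc _ _ hA') h2.symm

  -- counting
  have hsatcard : (satSet M).card = 2 * (k + (Finset.univ \ (X ∪ Y)).card) := by
    rw [card_satSet hM, hcard]
  set n := (Finset.univ \ (X ∪ Y)).card with hn
  set Tdie : Finset V := T \ Scomp.image lastv with hTdie
  set A1 : Finset (V ⊕ V) := (S ∪ T).image (Sum.inl : V → V ⊕ V) with hA1def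
  set imgL : Finset (V ⊕ V) := (Finset.univ \ (X ∪ Y)).image (Sum.inl : V → V ⊕ V)
    with himgL
  set imgR : Finset (V ⊕ V) := (Finset.univ \ (X ∪ Y)).image (Sum.inr : V → V ⊕ V)
    with himgR
  set A2 : Finset (V ⊕ V) := satSet M ∩ imgL with hA2def
  set A3 : Finset (V ⊕ V) := satSet M ∩ imgR with hA3def
  have himgLcard : imgL.card = n := by
    rw [himgL, Finset.card_image_of_injective _ Sum.inl_injective]
  have himgRcard : imgR.card = n := by
    rw [himgR, Finset.card_image_of_injective _ Sum.inr_injective]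
  have hsub : satSet M ⊆ A1 ∪ A2 ∪ A3 := by
    intro a ha
    obtain ⟨e, he, h1 | h2⟩ := mem_satSet.1 ha
    · obtain ⟨u, hu1, _⟩ := classify hor he
      have hau : a = Sum.inl u := h1 ▸ hu1
      by_cases huXY : u ∈ X ∪ Y
      · refine Finset.mem_union_left _ (Finset.mem_union_left _ ?_)
        rw [hA1def]
        refine Finset.mem_image.2 ⟨u, ?_, hau.symm⟩
        refine Finset.mem_union_left _ ?_
        rw [hS]
        exact Finset.mem_filter.2 ⟨Finset.mem_univ _, huXY, e, he, hu1⟩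
      · refine Finset.mem_union_left _ (Finset.mem_union_right _ ?_)
        rw [hA2def]
        refine Finset.mem_inter.2 ⟨ha, ?_⟩
        rw [himgL]
        exact Finset.mem_image.2 ⟨u, Finset.mem_sdiff.2 ⟨Finset.mem_univ _, huXY⟩, hau.symm⟩
    · obtain ⟨u, hu1, hcls⟩ := classify hor he
      rcases hcls with ⟨w, hw, _, hwXY⟩ | ⟨w, hw, _, hwXY⟩ | ⟨hw, hwXY⟩
      · refine Finset.mem_union_left _ (Finset.mem_union_left _ ?_)
        rw [hA1def]
        refine Finset.mem_image.2 ⟨w, ?_, (h2 ▸ hw).symm⟩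
        refine Finset.mem_union_right _ ?_
        rw [hT]
        exact Finset.mem_filter.2 ⟨Finset.mem_univ _, hwXY, e, he, hw⟩
      · refine Finset.mem_union_right _ ?_
        rw [hA3def]
        refine Finset.mem_inter.2 ⟨ha, ?_⟩
        rw [himgR]
        exact Finset.mem_image.2 ⟨w, Finset.mem_sdiff.2 ⟨Finset.mem_univ _, hwXY⟩,
          (h2 ▸ hw).symm⟩
      · refine Finset.mem_union_right _ ?_
        rw [hA3def]
        refine Finset.mem_inter.2 ⟨ha, ?_⟩
        rw [himgR]
        exact Finset.mem_image.2 ⟨u, Finset.mem_sdiff.2 ⟨Finset.mem_univ _, hwXY⟩,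
          (h2 ▸ hw).symm⟩
  have hA1card : A1.card ≤ S.card + T.card :=
    le_trans Finset.card_image_le (Finset.card_union_le _ _)
  have hA2card : A2.card + Sdie.card ≤ n := by
    have himg1 : ∀ s ∈ Sdie, (Sum.inl (lastv s) : V ⊕ V) ∈ imgL \ satSet M := by
      intro s hs
      obtain ⟨z, hzlast, hznXY, hznsat⟩ := sdie_spec s hs
      rw [hlastv_eq s z hzlast]
      refine Finset.mem_sdiff.2 ⟨?_, hznsat⟩
      rw [himgL]
      exact Finset.mem_image.2 ⟨z, Finset.mem_sdiff.2 ⟨Finset.mem_univ _, hznXY⟩, rfl⟩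
    have hinj1 : Set.InjOn (fun s => (Sum.inl (lastv s) : V ⊕ V)) Sdie := by
      intro s hs s' hs' heq
      simp only [Sum.inl.injEq] at heq
      by_contra hne
      have hsS : s ∈ S := (Finset.mem_sdiff.1 hs).1
      have hs'S : s' ∈ S := (Finset.mem_sdiff.1 hs').1
      obtain ⟨hsXY, hse⟩ := hSmem s hsS
      obtain ⟨hs'XY, hs'e⟩ := hSmem s' hs'S
      have h1 : lastv s ∈ chain M N s := List.getLast_mem (chain_ne_nil N s)
      have h2 : lastv s' ∈ chain M N s' := List.getLast_mem (chain_ne_nil N s')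
      rw [← heq] at h2
      exact hdisj s hsXY s' hs'XY hse hs'e hne (lastv s) h1 h2
    have hcard1 : Sdie.card ≤ (imgL \ satSet M).card :=
      Finset.card_le_card_of_injOn _ himg1 hinj1
    have hdisj2 : Disjoint A2 (imgL \ satSet M) := by
      rw [Finset.disjoint_left]
      intro a haA2 hasd
      exact (Finset.mem_sdiff.1 hasd).2 (Finset.mem_inter.1 haA2).1
    calc A2.card + Sdie.card ≤ A2.card + (imgL \ satSet M).card := by omega
      _ = (A2 ∪ (imgL \ satSet M)).card := (Finset.card_union_of_disjoint hdisj2).symm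
      _ ≤ imgL.card := Finset.card_le_card (Finset.union_subset
          (Finset.inter_subset_right) (Finset.sdiff_subset))
      _ = n := himgLcard
  have hA3card : A3.card + Tdie.card ≤ n := by
    choose! g hg using d2cert
    have himg2 : ∀ t ∈ Tdie, (Sum.inr (g t) : V ⊕ V) ∈ imgR \ satSet M := by
      intro t ht
      obtain ⟨hgnXY, hgnsat, _⟩ := hg t ht
      refine Finset.mem_sdiff.2 ⟨?_, hgnsat⟩
      rw [himgR]
      exact Finset.mem_image.2 ⟨g t, Finset.mem_sdiff.2 ⟨Finset.mem_univ _, hgnXY⟩, rfl⟩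
    have hinj2 : Set.InjOn (fun t => (Sum.inr (g t) : V ⊕ V)) Tdie := by
      intro t ht t' ht' heq
      simp only [Sum.inr.injEq] at heq
      obtain ⟨_, _, hgl⟩ := hg t ht
      obtain ⟨_, _, hgl'⟩ := hg t' ht'
      rw [heq] at hgl
      rw [hgl] at hgl'
      injection hgl'
    have hcard2 : Tdie.card ≤ (imgR \ satSet M).card :=
      Finset.card_le_card_of_injOn _ himg2 hinj2
    have hdisj3 : Disjoint A3 (imgR \ satSet M) := by
      rw [Finset.disjoint_left]
      intro a haA3 hasd
      exact (Finset.mem_sdiff.1 hasd).2 (Finset.mem_inter.1 haA3).1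
    calc A3.card + Tdie.card ≤ A3.card + (imgR \ satSet M).card := by omega
      _ = (A3 ∪ (imgR \ satSet M)).card := (Finset.card_union_of_disjoint hdisj3).symm
      _ ≤ imgR.card := Finset.card_le_card (Finset.union_subset
          (Finset.inter_subset_right) (Finset.sdiff_subset))
      _ = n := himgRcard
  have hScount : S.card = Scomp.card + Sdie.card := by
    have hsub' : Scomp ⊆ S := Finset.filter_subset _ _
    have := Finset.card_sdiff_of_subset hsub'
    have hle := Finset.card_le_card hsub'
    rw [hSdie]
    omega
  have hTcount : T.card ≤ Tdie.card + Scomp.card := by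
    have hTsub : T ⊆ Tdie ∪ Scomp.image lastv := by
      intro t ht
      by_cases h : t ∈ Scomp.image lastv
      · exact Finset.mem_union_right _ h
      · exact Finset.mem_union_left _ (Finset.mem_sdiff.2 ⟨ht, h⟩)
    calc T.card ≤ (Tdie ∪ Scomp.image lastv).card := Finset.card_le_card hTsub
      _ ≤ Tdie.card + (Scomp.image lastv).card := Finset.card_union_le _ _
      _ ≤ Tdie.card + Scomp.card := by
          have := Finset.card_image_le (s := Scomp) (f := lastv)
          omega
  have hsum : 2 * (k + n) ≤ A1.card + A2.card + A3.card := by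
    calc 2 * (k + n) = (satSet M).card := hsatcard.symm
      _ ≤ (A1 ∪ A2 ∪ A3).card := Finset.card_le_card hsub
      _ ≤ (A1 ∪ A2).card + A3.card := Finset.card_union_le _ _
      _ ≤ A1.card + A2.card + A3.card := by
          have := Finset.card_union_le A1 A2
          omega
  have hk : k ≤ Scomp.card := by omega
  -- construct the paths
  have hLlen : k ≤ Scomp.toList.length := by rw [Finset.length_toList]; exact hk
  refine ⟨fun i => chain M N (Scomp.toList.get ⟨i.1, lt_of_lt_of_le i.2 hLlen⟩), ?_, ?_⟩
  · intro i
    set s := Scomp.toList.get ⟨i.1, lt_of_lt_of_le i.2 hLlen⟩ with hsdef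
    have hsmem : s ∈ Scomp := Finset.mem_toList.1 (Scomp.toList.get_mem _)
    obtain ⟨z, hzlast, hzXY, hzs, w', hfinz⟩ := scomp_spec s hsmem
    have hsS : s ∈ S := Finset.mem_of_mem_filter s hsmem
    obtain ⟨hsXY, hse⟩ := hSmem s hsS
    have hsX : s ∈ X := by
      obtain ⟨e, he, he1⟩ := hse
      obtain ⟨u, hu1, hcls⟩ := classify hor he
      obtain rfl : u = s := Sum.inl.inj (hu1.symm.trans he1)
      rcases hcls with ⟨w, _, hA, _⟩ | ⟨w, _, hA, _⟩ | ⟨_, hnXY⟩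
      · rcases Finset.mem_union.1 hsXY with h | h
        · exact h
        · exact hY _ _ hA h
      · rcases Finset.mem_union.1 hsXY with h | h
        · exact h
        · exact hY _ _ hA h
      · exact absurd hsXY hnXY
    have hzY : z ∈ Y := by
      obtain ⟨f, _, _, _, hA⟩ := hfinz
      rcases Finset.mem_union.1 hzXY with h | h
      · exact hX _ _ hA h
      · exact h
    exact ⟨s, z, hsX, hzY, Ne.symm hzs,
      ⟨chain_ne_nil N s, hnodup s hsXY, chain_chain' hM hor harc N s (hnoself s hsXY)⟩,
      chain_head N s, hzlast⟩
  · intro i j hij v hvi hvj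
    have hne : Scomp.toList.get ⟨i.1, lt_of_lt_of_le i.2 hLlen⟩ ≠
        Scomp.toList.get ⟨j.1, lt_of_lt_of_le j.2 hLlen⟩ := by
      intro h
      apply hij
      have h2 := (List.Nodup.get_inj_iff Scomp.nodup_toList).1 h
      have h3 := congrArg Fin.val h2
      exact Fin.ext h3
    have hmi : Scomp.toList.get ⟨i.1, lt_of_lt_of_le i.2 hLlen⟩ ∈ Scomp :=
      Finset.mem_toList.1 (Scomp.toList.get_mem _)
    have hmj : Scomp.toList.get ⟨j.1, lt_of_lt_of_le j.2 hLlen⟩ ∈ Scomp :=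
      Finset.mem_toList.1 (Scomp.toList.get_mem _)
    obtain ⟨hXYi, hsei⟩ := hSmem _ (Finset.mem_of_mem_filter _ hmi)
    obtain ⟨hXYj, hsej⟩ := hSmem _ (Finset.mem_of_mem_filter _ hmj)
    exact hdisj _ hXYi _ hXYj hsei hsej hne v hvi hvj




end Main

end Aux

namespace Aux

section Forward

variable {V : Type*} [Fintype V] [DecidableEq V]
variable (A : V → V → Prop) (X Y : Finset V)

/-- target of an arc-head in the auxiliary graph -/
def tgt (b : V) : V ⊕ V := if b ∈ X ∪ Y then Sum.inl b else Sum.inr b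

def edgesOf : List V → List ((V ⊕ V) × (V ⊕ V))
  | [] => []
  | [_] => []
  | a :: b :: l => (Sum.inl a, tgt X Y b) :: edgesOf (b :: l)

variable {A X Y}

lemma tgt_inj {b b' : V} (h : tgt X Y b = tgt X Y b') : b = b' := by
  unfold tgt at h
  by_cases hb : b ∈ X ∪ Y <;> by_cases hb' : b' ∈ X ∪ Y <;>
    simp [hb, hb'] at h <;> tauto

lemma edgesOf_map_fst : ∀ q : List V,
    (edgesOf X Y q).map Prod.fst = q.dropLast.map Sum.inl
  | [] => rfl
  | [a] => rfl
  | a :: b :: l => by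
    simp only [edgesOf, List.map_cons, List.dropLast_cons₂]
    rw [edgesOf_map_fst (b :: l)]

lemma edgesOf_map_snd : ∀ q : List V,
    (edgesOf X Y q).map Prod.snd = q.tail.map (tgt X Y)
  | [] => rfl
  | [a] => rfl
  | a :: b :: l => by
    simp only [edgesOf, List.map_cons, List.tail_cons]
    rw [edgesOf_map_snd (b :: l)]
    simp [edgesOf_map_snd (b :: l)]

lemma edgesOf_spec : ∀ q : List V, q.Chain' A → ∀ e ∈ edgesOf X Y q,
    ∃ a b, e = (Sum.inl a, tgt X Y b) ∧ a ∈ q.dropLast ∧ b ∈ q.tail ∧ A a b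
  | [], _, e, he => by cases he
  | [a], _, e, he => by cases he
  | a :: b :: l, hch, e, he => by
    rcases List.mem_cons.1 he with rfl | he'
    · exact ⟨a, b, rfl, by simp [List.dropLast_cons₂], by simp, hch.rel_head⟩
    · obtain ⟨a', b', hab, ha', hb', hA⟩ := edgesOf_spec (b :: l) hch.tail e he'
      exact ⟨a', b', hab, by simp [List.dropLast_cons₂]; right; simpa using ha',
        List.mem_cons_of_mem _ hb', hA⟩

lemma edgesOf_exists_fst : ∀ q : List V, ∀ a ∈ q.dropLast,
    ∃ e ∈ edgesOf X Y q, e.1 = Sum.inl a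
  | [], a, ha => by cases ha
  | [x], a, ha => by cases ha
  | x :: b :: l, a, ha => by
    rw [List.dropLast_cons₂] at ha
    rcases List.mem_cons.1 ha with rfl | ha'
    · exact ⟨(Sum.inl a, tgt X Y b), List.mem_cons_self, rfl⟩
    · obtain ⟨e, he, h1⟩ := edgesOf_exists_fst (b :: l) a ha'
      exact ⟨e, List.mem_cons_of_mem _ he, h1⟩

lemma edgesOf_exists_snd : ∀ q : List V, ∀ b ∈ q.tail,
    ∃ e ∈ edgesOf X Y q, e.2 = tgt X Y b
  | [], b, hb => by cases hb
  | [x], b, hb => by cases hb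
  | x :: c :: l, b, hb => by
    rw [List.tail_cons] at hb
    rcases List.mem_cons.1 hb with rfl | hb'
    · exact ⟨(Sum.inl x, tgt X Y b), List.mem_cons_self, rfl⟩
    · obtain ⟨e, he, h2⟩ := edgesOf_exists_snd (c :: l) b hb'
      exact ⟨e, List.mem_cons_of_mem _ he, h2⟩

end Forward

end Aux

namespace Aux

lemma isMatching_subset {W : Type*} {Adj : W → W → Prop} {M M' : Finset (W × W)}
    (h : IsMatching Adj M) (hsub : M' ⊆ M) : IsMatching Adj M' :=
  ⟨fun e he => h.1 e (hsub he), fun e he f hf => h.2 e (hsub he) f (hsub hf)⟩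

section Forward2

variable {V : Type*} [Fintype V] [DecidableEq V]
variable {A : V → V → Prop} {X Y : Finset V}

lemma trim_aux (hX : ∀ a b, A a b → b ∈ X → b ∈ Y) :
    ∀ (rest : List V) (x : V), x ∉ rest → rest.Nodup → (x :: rest).Chain' A →
    (∃ v ∈ rest, v ∈ Y) →
    ∃ mid zz, zz ∈ Y ∧ (∀ v ∈ mid, v ∉ X ∪ Y) ∧
      (x :: mid ++ [zz]).Nodup ∧ (x :: mid ++ [zz]).Chain' A ∧
      (∀ v ∈ mid, v ∈ rest) ∧ zz ∈ rest
  | [], x, _, _, _, hex => by simp at hex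
  | b :: rest', x, hx, hnd, hch, hex => by
    by_cases hbY : b ∈ Y
    · have hxb : x ≠ b := fun hxe => hx (hxe ▸ List.mem_cons_self)
      exact ⟨[], b, hbY, by simp, by simp [hxb], by simp [hch.rel_head, List.Chain', List.isChain_pair], by simp,
        List.mem_cons_self⟩
    · have hA : A x b := hch.rel_head
      have hbXY : b ∉ X ∪ Y := by
        rw [Finset.mem_union]
        rintro (h | h)
        · exact hbY (hX x b hA h)
        · exact hbY h
      obtain ⟨v, hv, hvY⟩ := hex
      have hvrest' : v ∈ rest' := by
        rcases List.mem_cons.1 hv with rfl | h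
        · exact absurd hvY hbY
        · exact h
      have hnd' := List.nodup_cons.1 hnd
      obtain ⟨mid', zz, hzY, hmidXY, hqnd, hqch, hmidmem, hzmem⟩ :=
        trim_aux hX rest' b hnd'.1 hnd'.2 hch.tail ⟨v, hvrest', hvY⟩
      refine ⟨b :: mid', zz, hzY, ?_, ?_, ?_, ?_, List.mem_cons_of_mem _ hzmem⟩
      · intro w hw
        rcases List.mem_cons.1 hw with rfl | hw'
        · exact hbXY
        · exact hmidXY w hw'
      · rw [List.cons_append, List.nodup_cons]
        refine ⟨?_, hqnd⟩
        intro hxmem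
        rcases List.mem_append.1 hxmem with h | h
        · rcases List.mem_cons.1 h with rfl | h'
          · exact hx (List.mem_cons_self)
          · exact hx (List.mem_cons_of_mem _ (hmidmem _ h'))
        · rw [List.mem_singleton] at h
          exact hx (List.mem_cons_of_mem _ (h ▸ hzmem))
      · rw [List.cons_append]
        refine List.isChain_cons.2 ⟨?_, hqch⟩
        intro w hw
        simp only [List.cons_append, List.head?_cons, Option.mem_def,
          Option.some.injEq] at hw
        rwa [← hw]
      · intro w hw
        rcases List.mem_cons.1 hw with rfl | hw'
        · exact List.mem_cons_self
        · exact List.mem_cons_of_mem _ (hmidmem _ hw')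

end Forward2

end Aux

namespace Aux

section Forward3

variable {V : Type*} [Fintype V] [DecidableEq V]
variable {A : V → V → Prop} {X Y : Finset V}

theorem paths_to_matching
    (harc : ∀ a b, A a b → a ≠ b)
    (hX : ∀ a b, A a b → b ∈ X → b ∈ Y)
    (k : ℕ) (P : Fin k → List V)
    (hPex : ∀ i, ∃ x y, x ∈ X ∧ y ∈ Y ∧ x ≠ y ∧ IsPathFT A x y (P i))
    (hPdisj : ∀ i j, i ≠ j → ∀ v, v ∈ P i → v ∉ P j) :
    ∃ M : Finset ((V ⊕ V) × (V ⊕ V)), IsMatching (auxAdj A X Y) M ∧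
      M.card = k + (Finset.univ \ (X ∪ Y)).card := by
  classical
  choose x y hx hy hxy hpath using hPex
  have hdecomp : ∀ i, ∃ rest, P i = x i :: rest ∧ x i ∉ rest ∧ rest.Nodup ∧
      (x i :: rest).Chain' A ∧ y i ∈ rest := by
    intro i
    obtain ⟨⟨hne, hnd, hch⟩, hhead, hlast⟩ := hpath i
    rcases hp : P i with _ | ⟨a, rest⟩
    · exact absurd hp hne
    · rw [hp] at hhead hnd hch hlast
      simp only [List.head?_cons, Option.some.injEq] at hhead
      subst hhead
      have hyrest : y i ∈ rest := by
        rcases rest with _ | ⟨c, t⟩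
        · simp only [List.getLast?_singleton, Option.some.injEq] at hlast
          exact absurd hlast (hxy i)
        · rw [List.getLast?_cons_cons] at hlast
          exact mem_of_getLast?_eq hlast
      have hnd' := List.nodup_cons.1 hnd
      exact ⟨rest, rfl, hnd'.1, hnd'.2, hch, hyrest⟩
  choose rest hPeq hxrest hrestnd hchain hyrest using hdecomp
  have htrim : ∀ i, ∃ mid zz, zz ∈ Y ∧ (∀ v ∈ mid, v ∉ X ∪ Y) ∧
      (x i :: mid ++ [zz]).Nodup ∧ (x i :: mid ++ [zz]).Chain' A ∧
      (∀ v ∈ mid, v ∈ rest i) ∧ zz ∈ rest i :=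
    fun i => trim_aux hX (rest i) (x i) (hxrest i) (hrestnd i) (hchain i)
      ⟨y i, hyrest i, hy i⟩
  choose mid z hzY hmidXY hqnd hqch hmidrest hzrest using htrim
  set q : Fin k → List V := fun i => x i :: mid i ++ [z i] with hqdef
  have hxP : ∀ i, x i ∈ P i := fun i => (hPeq i) ▸ List.mem_cons_self
  have hmidP : ∀ i, ∀ v ∈ mid i, v ∈ P i := fun i v hv =>
    (hPeq i) ▸ List.mem_cons_of_mem _ (hmidrest i v hv)
  have hzP : ∀ i, z i ∈ P i := fun i => (hPeq i) ▸ List.mem_cons_of_mem _ (hzrest i)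
  have hznx : ∀ i, z i ∉ x i :: mid i := by
    intro i hmem
    have hnd := hqnd i
    rw [show x i :: mid i ++ [z i] = (x i :: mid i) ++ [z i] by simp] at hnd
    exact List.disjoint_of_nodup_append hnd hmem (List.mem_singleton_self _)
  have hdropLast : ∀ i, (q i).dropLast = x i :: mid i := by
    intro i
    show (x i :: mid i ++ [z i]).dropLast = x i :: mid i
    rw [show x i :: mid i ++ [z i] = (x i :: mid i) ++ [z i] from rfl,
      List.dropLast_concat]
  have htail : ∀ i, (q i).tail = mid i ++ [z i] := fun i => rfl
  have hqchain : ∀ i, (q i).Chain' A := fun i => hqch i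
  have hfst : ∀ i, ∀ e ∈ edgesOf X Y (q i), ∃ a, e.1 = Sum.inl a ∧ a ∈ x i :: mid i := by
    intro i e he
    obtain ⟨a, b, hab, ha, _, _⟩ := edgesOf_spec (q i) (hqchain i) e he
    rw [hdropLast i] at ha
    exact ⟨a, by rw [hab], ha⟩
  have hsnd : ∀ i, ∀ e ∈ edgesOf X Y (q i),
      e.2 = Sum.inl (z i) ∨ ∃ b ∈ mid i, e.2 = Sum.inr b := by
    intro i e he
    obtain ⟨a, b, hab, _, hb, _⟩ := edgesOf_spec (q i) (hqchain i) e he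
    rw [htail i] at hb
    rcases List.mem_append.1 hb with h | h
    · right; exact ⟨b, h, by rw [hab]; simp [tgt, hmidXY i b h]⟩
    · left
      rw [List.mem_singleton] at h; subst h
      rw [hab]; simp [tgt, Finset.mem_union.2 (Or.inr (hzY i))]
  have hxXY : ∀ i, x i ∈ X ∪ Y := fun i => Finset.mem_union.2 (Or.inl (hx i))
  have hzXY : ∀ i, z i ∈ X ∪ Y := fun i => Finset.mem_union.2 (Or.inr (hzY i))
  have hfst_nd : ∀ i, ((edgesOf X Y (q i)).map Prod.fst).Nodup := by
    intro i
    rw [edgesOf_map_fst, hdropLast i]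
    refine List.Nodup.map (fun a b => Sum.inl.inj) ?_
    have hnd := hqnd i
    rw [show x i :: mid i ++ [z i] = (x i :: mid i) ++ [z i] by simp] at hnd
    exact (List.nodup_append.1 hnd).1
  have hsnd_nd : ∀ i, ((edgesOf X Y (q i)).map Prod.snd).Nodup := by
    intro i
    rw [edgesOf_map_snd, htail i]
    refine List.Nodup.map (fun a b h => tgt_inj h) ?_
    exact (List.nodup_cons.1 (hqnd i)).2
  set U : Finset V := (Finset.univ \ (X ∪ Y)) \
      (Finset.univ.biUnion fun i => (mid i).toFinset) with hU
  set EM : Finset ((V ⊕ V) × (V ⊕ V)) :=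
      (Finset.univ.biUnion fun i => (edgesOf X Y (q i)).toFinset) ∪
      U.image (fun v => (Sum.inl v, Sum.inr v)) with hEM
  have hmemEM : ∀ e, e ∈ EM ↔ ((∃ i, e ∈ edgesOf X Y (q i)) ∨
      ∃ v, v ∈ U ∧ e = (Sum.inl v, Sum.inr v)) := by
    intro e
    rw [hEM]
    simp only [Finset.mem_union, Finset.mem_biUnion, Finset.mem_univ, true_and,
      List.mem_toFinset, Finset.mem_image]
    constructor
    · rintro (h | ⟨v, hv, rfl⟩)
      · exact Or.inl h
      · exact Or.inr ⟨v, hv, rfl⟩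
    · rintro (h | ⟨v, hv, rfl⟩)
      · exact Or.inl h
      · exact Or.inr ⟨v, hv, rfl⟩
  have hUspec : ∀ v ∈ U, v ∉ X ∪ Y ∧ ∀ i, v ∉ mid i := by
    intro v hv
    rw [hU] at hv
    obtain ⟨hv1, hv2⟩ := Finset.mem_sdiff.1 hv
    refine ⟨(Finset.mem_sdiff.1 hv1).2, fun i hvm => ?_⟩
    exact hv2 (Finset.mem_biUnion.2 ⟨i, Finset.mem_univ _, List.mem_toFinset.2 hvm⟩)
  have hcv1 : ∀ i, ∀ e ∈ edgesOf X Y (q i), ∃ a, a ∈ P i ∧ e.1 = Sum.inl a := by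
    intro i e he
    obtain ⟨a, h1, ha⟩ := hfst i e he
    rcases List.mem_cons.1 ha with heq | h
    · exact ⟨a, heq ▸ hxP i, h1⟩
    · exact ⟨a, hmidP i a h, h1⟩
  have hcv2 : ∀ i, ∀ e ∈ edgesOf X Y (q i), ∃ b, b ∈ P i ∧
      (e.2 = Sum.inl b ∨ e.2 = Sum.inr b) := by
    intro i e he
    rcases hsnd i e he with h | ⟨b, hb, h⟩
    · exact ⟨z i, hzP i, Or.inl h⟩
    · exact ⟨b, hmidP i b hb, Or.inr h⟩
  have hadj : ∀ e ∈ EM, auxAdj A X Y e.1 e.2 ∧ e.1 ≠ e.2 := by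
    intro e he
    rcases (hmemEM e).1 he with ⟨i, hei⟩ | ⟨v, hvU, rfl⟩
    · obtain ⟨a, b, hab, ha, hb, hA⟩ := edgesOf_spec (q i) (hqchain i) e hei
      subst hab
      by_cases hbXY : b ∈ X ∪ Y
      · simp only [tgt, if_pos hbXY]
        refine ⟨Or.inl ⟨hA, hbXY⟩, ?_⟩
        intro hcon
        exact harc a b hA (Sum.inl.inj hcon)
      · simp only [tgt, if_neg hbXY]
        exact ⟨Or.inl (Or.inl ⟨hA, hbXY⟩), by simp⟩
    · obtain ⟨hvXY, _⟩ := hUspec v hvU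
      exact ⟨Or.inl (Or.inr ⟨rfl, hvXY⟩), by simp⟩
  have hpath_unused : ∀ i, ∀ e ∈ edgesOf X Y (q i), ∀ v ∈ U,
      e.1 ≠ Sum.inl v ∧ e.1 ≠ Sum.inr v ∧ e.2 ≠ Sum.inl v ∧ e.2 ≠ Sum.inr v := by
    intro i e he v hvU
    obtain ⟨hvXY, hvmid⟩ := hUspec v hvU
    obtain ⟨a, h1, ha⟩ := hfst i e he
    have hsndc := hsnd i e he
    refine ⟨?_, ?_, ?_, ?_⟩
    · rw [h1]
      intro hcon
      obtain rfl : a = v := Sum.inl.inj hcon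
      rcases List.mem_cons.1 ha with heq | h
      · exact hvXY (heq ▸ hxXY i)
      · exact hvmid i h
    · rw [h1]; simp
    · rcases hsndc with h2 | ⟨b, hbmid, h2⟩ <;> rw [h2]
      · intro hcon
        obtain heq : z i = v := Sum.inl.inj hcon
        exact hvXY (heq ▸ hzXY i)
      · simp
    · rcases hsndc with h2 | ⟨b, hbmid, h2⟩ <;> rw [h2]
      · simp
      · intro hcon
        obtain rfl : b = v := Sum.inr.inj hcon
        exact hvmid i hbmid
  have hsame : ∀ i, ∀ e ∈ edgesOf X Y (q i), ∀ f ∈ edgesOf X Y (q i), e ≠ f →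
      e.1 ≠ f.1 ∧ e.1 ≠ f.2 ∧ e.2 ≠ f.1 ∧ e.2 ≠ f.2 := by
    intro i e he f hf hef
    refine ⟨?_, ?_, ?_, ?_⟩
    · intro h
      exact hef (List.inj_on_of_nodup_map (hfst_nd i) he hf h)
    · obtain ⟨a, h1, ha⟩ := hfst i e he
      rcases hsnd i f hf with h2 | ⟨b, hbmid, h2⟩ <;> rw [h1, h2]
      · intro hcon
        obtain rfl : a = z i := Sum.inl.inj hcon
        exact hznx i ha
      · simp
    · obtain ⟨a, h1, ha⟩ := hfst i f hf
      rcases hsnd i e he with h2 | ⟨b, hbmid, h2⟩ <;> rw [h1, h2]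
      · intro hcon
        obtain heq : z i = a := Sum.inl.inj hcon
        exact hznx i (heq ▸ ha)
      · simp
    · intro h
      exact hef (List.inj_on_of_nodup_map (hsnd_nd i) he hf h)
  have hcross : ∀ i j, i ≠ j → ∀ e ∈ edgesOf X Y (q i), ∀ f ∈ edgesOf X Y (q j),
      e.1 ≠ f.1 ∧ e.1 ≠ f.2 ∧ e.2 ≠ f.1 ∧ e.2 ≠ f.2 := by
    intro i j hij e he f hf
    obtain ⟨a, haP, h1⟩ := hcv1 i e he
    obtain ⟨a', ha'P, h1'⟩ := hcv1 j f hf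
    obtain ⟨b, hbP, h2⟩ := hcv2 i e he
    obtain ⟨b', hb'P, h2'⟩ := hcv2 j f hf
    have hnotmem : ∀ v, v ∈ P i → v ∈ P j → False := fun v hv hv' =>
      hPdisj i j hij v hv hv'
    refine ⟨?_, ?_, ?_, ?_⟩
    · rw [h1, h1']
      intro hcon
      obtain rfl : a = a' := Sum.inl.inj hcon
      exact hnotmem a haP ha'P
    · rw [h1]
      rcases h2' with h | h <;> rw [h]
      · intro hcon
        obtain rfl : a = b' := Sum.inl.inj hcon
        exact hnotmem a haP hb'P
      · simp
    · rw [h1']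
      rcases h2 with h | h <;> rw [h]
      · intro hcon
        obtain rfl : b = a' := Sum.inl.inj hcon
        exact hnotmem b hbP ha'P
      · simp
    · rcases h2 with h | h <;> rcases h2' with h' | h' <;> rw [h, h']
      · intro hcon
        obtain rfl : b = b' := Sum.inl.inj hcon
        exact hnotmem b hbP hb'P
      · simp
      · simp
      · intro hcon
        obtain rfl : b = b' := Sum.inr.inj hcon
        exact hnotmem b hbP hb'P
  have hmatch : IsMatching (auxAdj A X Y) EM := by
    refine ⟨hadj, ?_⟩
    intro e he f hf hef
    rcases (hmemEM e).1 he with ⟨i, hei⟩ | ⟨v, hvU, rfl⟩ <;>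
      rcases (hmemEM f).1 hf with ⟨j, hfj⟩ | ⟨w, hwU, rfl⟩
    · by_cases hij : i = j
      · subst hij
        exact hsame i e hei f hfj hef
      · exact hcross i j hij e hei f hfj
    · exact hpath_unused i e hei w hwU
    · obtain ⟨g1, g2, g3, g4⟩ := hpath_unused j f hfj v hvU
      exact ⟨fun h => g1 h.symm, fun h => g3 h.symm, fun h => g2 h.symm,
        fun h => g4 h.symm⟩
    · have hvw : v ≠ w := by
        intro h; subst h; exact hef rfl
      refine ⟨?_, by simp, by simp, ?_⟩
      · simp only [ne_eq, Sum.inl.injEq]; exact hvw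
      · simp only [ne_eq, Sum.inr.injEq]; exact hvw

  -- cardinality lower bound via saturated vertices
  set nn := (Finset.univ \ (X ∪ Y)).card with hnn
  set E1 : Finset (V ⊕ V) := (Finset.univ \ (X ∪ Y)).image Sum.inl with hE1
  set E2 : Finset (V ⊕ V) := (Finset.univ \ (X ∪ Y)).image Sum.inr with hE2
  set E3 : Finset (V ⊕ V) := Finset.univ.image (fun i => (Sum.inl (x i) : V ⊕ V)) with hE3
  set E4 : Finset (V ⊕ V) := Finset.univ.image (fun i => (Sum.inl (z i) : V ⊕ V)) with hE4
  have hUmem : ∀ v, v ∈ Finset.univ \ (X ∪ Y) → (¬ ∃ i, v ∈ mid i) → v ∈ U := by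
    intro v hv hvm
    rw [hU]
    refine Finset.mem_sdiff.2 ⟨hv, ?_⟩
    intro hcon
    obtain ⟨i, _, hmem⟩ := Finset.mem_biUnion.1 hcon
    exact hvm ⟨i, List.mem_toFinset.1 hmem⟩
  have hsat : E1 ∪ E2 ∪ E3 ∪ E4 ⊆ satSet EM := by
    intro a ha
    rw [mem_satSet]
    rcases Finset.mem_union.1 ha with ha' | ha4
    · rcases Finset.mem_union.1 ha' with ha'' | ha3
      · rcases Finset.mem_union.1 ha'' with h | h
        · obtain ⟨v, hv, rfl⟩ := Finset.mem_image.1 h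
          by_cases hvm : ∃ i, v ∈ mid i
          · obtain ⟨i, hvmid⟩ := hvm
            obtain ⟨e, he, h1⟩ := edgesOf_exists_fst (q i) v
              (by rw [hdropLast i]; exact List.mem_cons_of_mem _ hvmid)
            exact ⟨e, (hmemEM e).2 (Or.inl ⟨i, he⟩), Or.inl h1⟩
          · exact ⟨(Sum.inl v, Sum.inr v),
              (hmemEM _).2 (Or.inr ⟨v, hUmem v hv hvm, rfl⟩), Or.inl rfl⟩
        · obtain ⟨v, hv, rfl⟩ := Finset.mem_image.1 h
          have hvXY := (Finset.mem_sdiff.1 hv).2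
          by_cases hvm : ∃ i, v ∈ mid i
          · obtain ⟨i, hvmid⟩ := hvm
            obtain ⟨e, he, h2⟩ := edgesOf_exists_snd (q i) v
              (by rw [htail i]; exact List.mem_append_left _ hvmid)
            refine ⟨e, (hmemEM e).2 (Or.inl ⟨i, he⟩), Or.inr ?_⟩
            rw [h2]; simp [tgt, hvXY]
          · exact ⟨(Sum.inl v, Sum.inr v),
              (hmemEM _).2 (Or.inr ⟨v, hUmem v hv hvm, rfl⟩), Or.inr rfl⟩
      · obtain ⟨i, _, rfl⟩ := Finset.mem_image.1 ha3
        obtain ⟨e, he, h1⟩ := edgesOf_exists_fst (q i) (x i)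
          (by rw [hdropLast i]; exact List.mem_cons_self)
        exact ⟨e, (hmemEM e).2 (Or.inl ⟨i, he⟩), Or.inl h1⟩
    · obtain ⟨i, _, rfl⟩ := Finset.mem_image.1 ha4
      obtain ⟨e, he, h2⟩ := edgesOf_exists_snd (q i) (z i)
        (by rw [htail i]; exact List.mem_append_right _ (List.mem_singleton_self _))
      refine ⟨e, (hmemEM e).2 (Or.inl ⟨i, he⟩), Or.inr ?_⟩
      rw [h2]; simp [tgt, hzXY i]
  have hc1 : E1.card = nn := Finset.card_image_of_injective _ Sum.inl_injective
  have hc2 : E2.card = nn := Finset.card_image_of_injective _ Sum.inr_injective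
  have hc3 : E3.card = k := by
    rw [hE3, Finset.card_image_of_injOn, Finset.card_univ, Fintype.card_fin]
    intro i _ j _ heq
    simp only [Sum.inl.injEq] at heq
    by_contra hne
    exact hPdisj i j hne (x i) (hxP i) (by rw [heq]; exact hxP j)
  have hc4 : E4.card = k := by
    rw [hE4, Finset.card_image_of_injOn, Finset.card_univ, Fintype.card_fin]
    intro i _ j _ heq
    simp only [Sum.inl.injEq] at heq
    by_contra hne
    exact hPdisj i j hne (z i) (hzP i) (by rw [heq]; exact hzP j)
  have d12 : Disjoint E1 E2 := by
    rw [Finset.disjoint_left]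
    rintro a h1 h2
    obtain ⟨v, _, rfl⟩ := Finset.mem_image.1 h1
    obtain ⟨w, _, hw⟩ := Finset.mem_image.1 h2
    simp at hw
  have d12_3 : Disjoint (E1 ∪ E2) E3 := by
    rw [Finset.disjoint_left]
    rintro a h12 h3
    obtain ⟨i, _, rfl⟩ := Finset.mem_image.1 h3
    rcases Finset.mem_union.1 h12 with h | h
    · obtain ⟨v, hv, hveq⟩ := Finset.mem_image.1 h
      simp only [Sum.inl.injEq] at hveq
      exact (Finset.mem_sdiff.1 hv).2 (hveq ▸ hxXY i)
    · obtain ⟨v, _, hveq⟩ := Finset.mem_image.1 h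
      simp at hveq
  have d123_4 : Disjoint (E1 ∪ E2 ∪ E3) E4 := by
    rw [Finset.disjoint_left]
    rintro a h123 h4
    obtain ⟨i, _, rfl⟩ := Finset.mem_image.1 h4
    rcases Finset.mem_union.1 h123 with h12 | h3
    · rcases Finset.mem_union.1 h12 with h | h
      · obtain ⟨v, hv, hveq⟩ := Finset.mem_image.1 h
        simp only [Sum.inl.injEq] at hveq
        exact (Finset.mem_sdiff.1 hv).2 (hveq ▸ hzXY i)
      · obtain ⟨v, _, hveq⟩ := Finset.mem_image.1 h
        simp at hveq
    · obtain ⟨j, _, hveq⟩ := Finset.mem_image.1 h3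
      simp only [Sum.inl.injEq] at hveq
      by_cases hij : j = i
      · subst hij
        exact hznx j (hveq ▸ List.mem_cons_self)
      · exact hPdisj j i hij (x j) (hxP j) (by rw [hveq]; exact hzP i)
  have hcardE : (E1 ∪ E2 ∪ E3 ∪ E4).card = nn + nn + k + k := by
    rw [Finset.card_union_of_disjoint d123_4, Finset.card_union_of_disjoint d12_3,
      Finset.card_union_of_disjoint d12, hc1, hc2, hc3, hc4]
  have hle := Finset.card_le_card hsat
  rw [hcardE, card_satSet hmatch] at hle
  have hEMge : k + nn ≤ EM.card := by omega
  obtain ⟨M', hM'sub, hM'card⟩ := Finset.exists_subset_card_eq hEMge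
  exact ⟨M', isMatching_subset hmatch hM'sub, hM'card⟩


end Forward3

end Aux

namespace Aux

section Orient

variable {V : Type*} [Fintype V] [DecidableEq V]
variable {A : V → V → Prop} {X Y : Finset V} {M : Finset ((V ⊕ V) × (V ⊕ V))}

lemma orient (hM : IsMatching (auxAdj A X Y) M) :
    ∃ M' : Finset ((V ⊕ V) × (V ⊕ V)), IsMatching (auxAdj A X Y) M' ∧
      (∀ e ∈ M', auxRel A X Y e.1 e.2) ∧ M'.card = M.card := by
  classical
  set f : (V ⊕ V) × (V ⊕ V) → (V ⊕ V) × (V ⊕ V) :=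
    fun e => if auxRel A X Y e.1 e.2 then e else e.swap with hf
  have hco : ∀ e, ((f e).1 = e.1 ∧ (f e).2 = e.2) ∨ ((f e).1 = e.2 ∧ (f e).2 = e.1) := by
    intro e
    by_cases h : auxRel A X Y e.1 e.2 <;> simp [hf, h]
  have hrel : ∀ e ∈ M, auxRel A X Y (f e).1 (f e).2 := by
    intro e he
    by_cases h : auxRel A X Y e.1 e.2
    · simpa [hf, h] using h
    · rcases (hM.1 e he).1 with h' | h'
      · exact absurd h' h
      · simpa [hf, h] using h'
  have hdiff : ∀ e ∈ M, ∀ e' ∈ M, e ≠ e' →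
      (f e).1 ≠ (f e').1 ∧ (f e).1 ≠ (f e').2 ∧ (f e).2 ≠ (f e').1 ∧
        (f e).2 ≠ (f e').2 := by
    intro e he e' he' hee
    obtain ⟨k1, k2, k3, k4⟩ := hM.2 e he e' he' hee
    rcases hco e with ⟨h1, h2⟩ | ⟨h1, h2⟩ <;> rcases hco e' with ⟨g1, g2⟩ | ⟨g1, g2⟩ <;>
      rw [h1, h2, g1, g2] <;>
      exact ⟨by assumption, by assumption, by assumption, by assumption⟩
  have hinj : Set.InjOn f M := by
    intro e he e' he' heq
    by_contra hne
    exact (hdiff e he e' he' hne).1 (by rw [heq])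
  refine ⟨M.image f, ⟨?_, ?_⟩, ?_, Finset.card_image_of_injOn hinj⟩
  · rintro e'' he''
    obtain ⟨e, he, rfl⟩ := Finset.mem_image.1 he''
    refine ⟨Or.inl (hrel e he), ?_⟩
    rcases hco e with ⟨h1, h2⟩ | ⟨h1, h2⟩ <;> rw [h1, h2]
    · exact (hM.1 e he).2
    · exact fun h => (hM.1 e he).2 h.symm
  · rintro e'' he'' f'' hf'' hnef
    obtain ⟨e, he, rfl⟩ := Finset.mem_image.1 he''
    obtain ⟨e', he', rfl⟩ := Finset.mem_image.1 hf''
    have hne : e ≠ e' := fun h => hnef (by rw [h])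
    exact hdiff e he e' he' hne
  · rintro e'' he''
    obtain ⟨e, he, rfl⟩ := Finset.mem_image.1 he''
    exact hrel e he

end Orient

end Aux

theorem stmt4 {V : Type*} [Fintype V] [DecidableEq V]
    (A : V → V → Prop) (harc : ∀ a b, A a b → a ≠ b)
    (X Y : Finset V)
    (hX : ∀ a b, A a b → b ∈ X → b ∈ Y)
    (hY : ∀ a b, A a b → a ∈ Y → a ∈ X)
    (k : ℕ) :
    (∃ P : Fin k → List V,
      (∀ i, ∃ x y, x ∈ X ∧ y ∈ Y ∧ x ≠ y ∧ IsPathFT A x y (P i)) ∧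
      (∀ i j, i ≠ j → ∀ v, v ∈ P i → v ∉ P j)) ↔
    (∃ M : Finset ((V ⊕ V) × (V ⊕ V)), IsMatching (auxAdj A X Y) M ∧
      M.card = k + (Finset.univ \ (X ∪ Y)).card) := by
  constructor
  · rintro ⟨P, h1, h2⟩
    exact Aux.paths_to_matching harc hX k P h1 h2
  · rintro ⟨M, hM, hcard⟩
    obtain ⟨M', hM', hor, hcardeq⟩ := Aux.orient hM
    exact Aux.matching_to_paths harc hX hY hM' hor k (hcardeq.trans hcard)
end

section
/- Let G be a digraph in which parallel arcs are allowed, let s ≠ t be vertices of G, let p be the number of arcs from s to t, and let k_1,k_2,k_3 be nonnegative integers. Then G contains k_1+k_2+k_3 pairwise internally vertex-disjoint (s,t)-paths of which at least k_2+k_3 have length at least 2 and at least k_3 have length at least 3 (that is, a subdivision, with tail s and head t, of the spindle having k_1 paths of length 1, k_2 paths of length 2 and k_3 paths of length 3), if and only if G contains k'_2+k_3 pairwise internally vertex-disjoint (s,t)-paths, each of length at least 2, of which at least k_3 have length at least 3, where k'_2 = k_2 + k_1 − min{p,k_1}. (When parallel arcs are present, distinct paths of length 1 must use distinct arcs from s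 to t.) -/
/-- `p` is a directed path in the digraph (with parallel arcs allowed) whose arc
multiset is `A`: a nonempty list of pairwise distinct vertices in which each pair of
consecutive vertices is joined by an arc. -/
def MIsPath {V : Type*} [DecidableEq V] (A : Multiset (V × V)) (p : List V) : Prop :=
  p ≠ [] ∧ p.Nodup ∧ p.Chain' (fun a b => (a, b) ∈ A)

/-- `p` is a directed `(u,v)`-path. -/
def MIsPathFT {V : Type*} [DecidableEq V] (A : Multiset (V × V)) (u v : V)
    (p : List V) : Prop :=
  MIsPath A p ∧ p.head? = some u ∧ p.getLast? = some v

lemma path_len {V : Type*} [DecidableEq V] {A : Multiset (V × V)} {s t : V} (hst : s ≠ t)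
    {l : List V} (h : MIsPathFT A s t l) : l = [s, t] ∨ 3 ≤ l.length := by
  obtain ⟨⟨hne, hnd, hch⟩, hh, hl⟩ := h
  match l with
  | [] => simp at hh
  | [a] =>
    simp at hh hl
    exact absurd (hh.symm.trans hl) hst
  | [a, b] =>
    simp at hh hl
    left
    simp [hh, hl]
  | a :: b :: c :: rest => right; simp

theorem stmt7 {V : Type*} [DecidableEq V] (A : Multiset (V × V))
    (harc : ∀ e ∈ A, Prod.fst e ≠ Prod.snd e)
    (s t : V) (hst : s ≠ t) (p : ℕ) (hp : p = A.count (s, t))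
    (k1 k2 k3 : ℕ) :
    (∃ P : Fin (k1 + k2 + k3) → List V,
      (∀ i, MIsPathFT A s t (P i)) ∧
      (∀ i j, i ≠ j → ∀ x, x ∈ P i → x ∈ P j → x = s ∨ x = t) ∧
      (Finset.univ.filter fun i => P i = [s, t]).card ≤ p ∧
      k2 + k3 ≤ (Finset.univ.filter fun i => 3 ≤ (P i).length).card ∧
      k3 ≤ (Finset.univ.filter fun i => 4 ≤ (P i).length).card) ↔
    (∃ Q : Fin ((k2 + k1 - min p k1) + k3) → List V,
      (∀ i, MIsPathFT A s t (Q i) ∧ 3 ≤ (Q i).length) ∧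
      (∀ i j, i ≠ j → ∀ x, x ∈ Q i → x ∈ Q j → x = s ∨ x = t) ∧
      k3 ≤ (Finset.univ.filter fun i => 4 ≤ (Q i).length).card) := by
  classical
  set N := (k2 + k1 - min p k1) + k3 with hNdef
  constructor
  · rintro ⟨P, hP, hdisj, hpar, h3, h4⟩
    set S3 := Finset.univ.filter (fun i => 3 ≤ (P i).length) with hS3
    set S4 := Finset.univ.filter (fun i => 4 ≤ (P i).length) with hS4
    have hS43 : S4 ⊆ S3 := by
      intro i hi
      simp only [hS3, hS4, Finset.mem_filter, Finset.mem_univ, true_and] at hi ⊢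
      omega
    have hcompl : S3.card +
        (Finset.univ.filter (fun i => ¬ 3 ≤ (P i).length)).card = k1 + k2 + k3 := by
      rw [hS3, Finset.card_filter_add_card_filter_not]
      simp
    have hsub : (Finset.univ.filter (fun i => ¬ 3 ≤ (P i).length)) ⊆
        Finset.univ.filter (fun i => P i = [s, t]) := by
      intro i hi
      simp only [Finset.mem_filter, Finset.mem_univ, true_and] at hi ⊢
      rcases path_len hst (hP i) with h | h
      · exact h
      · omega
    have hneg : (Finset.univ.filter (fun i => ¬ 3 ≤ (P i).length)).card ≤ p :=
      le_trans (Finset.card_le_card hsub) hpar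
    have hN3 : N ≤ S3.card := by omega
    have hk3N : k3 ≤ N := by omega
    obtain ⟨T, hTS4, hTcard⟩ := Finset.exists_subset_card_eq h4
    obtain ⟨C, hTC, hCS3, hCcard⟩ :=
      Finset.exists_subsuperset_card_eq (n := N - k3 + T.card) (hTS4.trans hS43) (by omega) (by omega)
    have hc : C.card = N := by omega
    let e : Fin N ≃ {x // x ∈ C} := (finCongr hc).symm.trans C.equivFin.symm
    set Q : Fin N → List V := fun i => P (e i).val with hQdef
    refine ⟨Q, ?_, ?_, ?_⟩
    · intro i
      have hi : (e i).val ∈ C := (e i).2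
      have := hCS3 hi
      simp only [hS3, Finset.mem_filter, Finset.mem_univ, true_and] at this
      exact ⟨hP _, this⟩
    · intro i j hij x hxi hxj
      refine hdisj _ _ ?_ x hxi hxj
      intro hcon
      exact hij (e.injective (Subtype.val_injective hcon))
    · rcases Nat.eq_zero_or_pos N with hN0 | hNpos
      · omega
      have key : T.card ≤
          (Finset.univ.filter fun i => 4 ≤ (Q i).length).card := by
        refine Finset.card_le_card_of_injOn
          (fun x => if h : x ∈ C then e.symm ⟨x, h⟩ else ⟨0, hNpos⟩) ?_ ?_
        · intro x hx
          have hxC : x ∈ C := hTC hx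
          simp only [dif_pos hxC, Finset.mem_coe, Finset.mem_filter, Finset.mem_univ, true_and]
          have hval : (Q (e.symm ⟨x, hxC⟩)) = P x := by
            rw [hQdef]
            simp
          rw [hval]
          have := hTS4 hx
          simp only [hS4, Finset.mem_filter, Finset.mem_univ, true_and] at this
          exact this
        · intro x hx y hy hxy
          have hxC : x ∈ C := hTC hx
          have hyC : y ∈ C := hTC hy
          simp only [dif_pos hxC, dif_pos hyC] at hxy
          have := congrArg (fun z => ((e z : {x // x ∈ C}) : Fin (k1 + k2 + k3))) hxy
          simpa using this
      omega
  · rintro ⟨Q, hQ, hdisj, h4⟩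
    have hnm : k1 + k2 + k3 = N + min p k1 := by omega
    have hNn : N ≤ k1 + k2 + k3 := by omega
    set P : Fin (k1 + k2 + k3) → List V :=
      fun i => if h : (i : ℕ) < N then Q ⟨i, h⟩ else [s, t] with hPdef
    have hPlt : ∀ (i : Fin (k1 + k2 + k3)) (h : (i : ℕ) < N), P i = Q ⟨i, h⟩ := by
      intro i h
      rw [hPdef]
      simp [h]
    refine ⟨P, ?_, ?_, ?_, ?_, ?_⟩
    · intro i
      by_cases h : (i : ℕ) < N
      · rw [hPlt i h]
        exact (hQ _).1
      · have hm : 0 < min p k1 := by have := i.isLt; omega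
        have hA : (s, t) ∈ A := by
          rw [← Multiset.count_pos]
          omega
        have hPe : P i = [s, t] := by rw [hPdef]; simp [h]
        rw [hPe]
        exact ⟨⟨by simp, by simp [hst], by simp [List.Chain', hA]⟩, by simp, by simp⟩
    · intro i j hij x hxi hxj
      by_cases hi : (i : ℕ) < N
      · by_cases hj : (j : ℕ) < N
        · have hne : (⟨(i : ℕ), hi⟩ : Fin N) ≠ ⟨(j : ℕ), hj⟩ := by
            intro hcon
            exact hij (Fin.ext (by simpa using congrArg Fin.val hcon))
          refine hdisj _ _ hne x ?_ ?_
          · rwa [← hPlt i hi]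
          · rwa [← hPlt j hj]
        · have hPe : P j = [s, t] := by rw [hPdef]; simp [hj]
          rw [hPe] at hxj
          simpa using hxj
      · have hPe : P i = [s, t] := by rw [hPdef]; simp [hi]
        rw [hPe] at hxi
        simpa using hxi
    · have key : (Finset.univ.filter fun i => P i = [s, t]).card ≤
          (Finset.Ico N (k1 + k2 + k3)).card := by
        refine Finset.card_le_card_of_injOn Fin.val ?_ Fin.val_injective.injOn
        intro i hi
        simp only [Finset.mem_coe, Finset.mem_filter, Finset.mem_univ, true_and] at hi
        simp only [Finset.mem_coe, Finset.mem_Ico]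
        refine ⟨?_, i.isLt⟩
        by_contra hcon
        push_neg at hcon
        rw [hPlt i hcon] at hi
        have h2 := (hQ ⟨i, hcon⟩).2
        rw [hi] at h2
        simp at h2
      rw [Nat.card_Ico] at key
      refine le_trans key ?_
      omega
    · have key : (Finset.univ : Finset (Fin N)).card ≤
          (Finset.univ.filter fun i => 3 ≤ (P i).length).card := by
        refine Finset.card_le_card_of_injOn (Fin.castLE hNn) ?_
          (Fin.castLE_injective hNn).injOn
        intro a _
        simp only [Finset.mem_coe, Finset.mem_filter, Finset.mem_univ, true_and]
        have ha : ((Fin.castLE hNn a : Fin (k1 + k2 + k3)) : ℕ) < N := a.isLt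
        rw [hPlt _ ha]
        exact (hQ _).2
      simp only [Finset.card_univ, Fintype.card_fin] at key
      omega
    · have key : (Finset.univ.filter fun i => 4 ≤ (Q i).length).card ≤
          (Finset.univ.filter fun i => 4 ≤ (P i).length).card := by
        refine Finset.card_le_card_of_injOn (Fin.castLE hNn) ?_
          (Fin.castLE_injective hNn).injOn
        intro a ha
        simp only [Finset.mem_coe, Finset.mem_filter, Finset.mem_univ, true_and] at ha ⊢
        have ha' : ((Fin.castLE hNn a : Fin (k1 + k2 + k3)) : ℕ) < N := a.isLt
        rw [hPlt _ ha']
        exact ha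
      omega
end
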